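/- arXiv:2307.01897 — 8 statements merged into one kernel-verified Lean document; each statement's English description precedes it below -/
import Mathlib

section
/- Let v ≥ 0 be an integer. Then v = g(ρ) for some rotor configuration ρ of the path multigraph P^{x,y}_n if and only if m(v) = 0 and the tuple (digits(v), 0) of length n+2 belongs to L_d^n. -/
/-- `F = Σ_{k=0}^n x^(n−k)·y^k`. -/
def Fval (n x y : ℕ) : ℕ := ∑ k ∈ Finset.range (n + 1), x ^ (n - k) * y ^ k

/-- The stable decomposition `v = Σ_{k=0}^n c_k·x^(n−k)·y^k + m·y^(n+1)`
with digits `c_k ∈ {0,…,y−1}`. -/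
def IsStableDecomp (n x y : ℕ) (v : ℤ) (c : Fin (n + 1) → ℕ) (m : ℤ) : Prop :=
  (∀ k : Fin (n + 1), c k < y) ∧
    v = (∑ k : Fin (n + 1), (c k : ℤ) * (x : ℤ) ^ (n - (k : ℕ)) * (y : ℤ) ^ (k : ℕ))
          + m * (y : ℤ) ^ (n + 1)

/-- `L_d^n`: tuples `(c_0,…,c_{n+1})` with `c_{n+1} = 0` matched by
`[0,y−1]*·0·[1,x]*·0`. -/
def Ld (n x y : ℕ) : Set (Fin (n + 2) → ℕ) :=
  {c | c (Fin.last (n + 1)) = 0 ∧ ∃ k : Fin (n + 1),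
    (∀ i : Fin (n + 2), (i : ℕ) < (k : ℕ) → c i < y) ∧
    c k.castSucc = 0 ∧
    (∀ i : Fin (n + 2), (k : ℕ) < (i : ℕ) → (i : ℕ) ≤ n → 1 ≤ c i ∧ c i ≤ x)}

/-- `L_a^n`: tuples `(c_0,…,c_{n+1})` with `c_{n+1} = 0` matched by
`[1,y]*·0·[0,x−1]*·0`. -/
def La (n x y : ℕ) : Set (Fin (n + 2) → ℕ) :=
  {c | c (Fin.last (n + 1)) = 0 ∧ ∃ k : Fin (n + 1),
    (∀ i : Fin (n + 2), (i : ℕ) < (k : ℕ) → 1 ≤ c i ∧ c i ≤ y) ∧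
    c k.castSucc = 0 ∧
    (∀ i : Fin (n + 2), (k : ℕ) < (i : ℕ) → (i : ℕ) ≤ n → c i < x)}

/-- The value `val(c) = Σ_{k=0}^n c_k·x^(n−k)·y^k` of a tuple. -/
def tupleVal (n x y : ℕ) (c : Fin (n + 2) → ℕ) : ℕ :=
  ∑ k : Fin (n + 1), c k.castSucc * x ^ (n - (k : ℕ)) * y ^ (k : ℕ)

/-- `G = {val(c) : c ∈ L_d^n}` viewed as a set of integers. -/
def Gset (n x y : ℕ) : Set ℤ := {w | ∃ c ∈ Ld n x y, (tupleVal n x y c : ℤ) = w}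

/-- Arcmonic value `g_k(j)` of arc number `j` at vertex `u_k`. -/
def gk (n x y k j : ℕ) : ℕ :=
  if j ≤ x then j * x ^ (n - k) * y ^ k else (x + y - j) * x ^ (n - k + 1) * y ^ (k - 1)

/-- Arcmonic value of a rotor configuration `ρ : {1,…,n} → {0,…,x+y−1}`,
encoded with `ρ k` the arc chosen at vertex `u_{k+1}` for `k : Fin n`. -/
def gRotor (n x y : ℕ) (ρ : Fin n → ℕ) : ℕ := ∑ k : Fin n, gk n x y ((k : ℕ) + 1) (ρ k)

/-! ### Auxiliary machinery -/

/-- Uniqueness of stable decompositions. -/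
lemma stable_unique (n x y : ℕ) (hxy : x < y) (hcop : Nat.Coprime x y)
    (c c' : Fin (n + 1) → ℕ) (m m' : ℤ)
    (hc : ∀ k, c k < y) (hc' : ∀ k, c' k < y)
    (h : (∑ k : Fin (n + 1), (c k : ℤ) * (x : ℤ) ^ (n - (k : ℕ)) * (y : ℤ) ^ (k : ℕ)) + m * (y:ℤ) ^ (n + 1)
       = (∑ k : Fin (n + 1), (c' k : ℤ) * (x : ℤ) ^ (n - (k : ℕ)) * (y : ℤ) ^ (k : ℕ)) + m' * (y:ℤ) ^ (n + 1)) :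
    c = c' ∧ m = m' := by
  have hy : 0 < y := lt_of_le_of_lt (Nat.zero_le x) hxy
  set f : Fin (n + 1) → ℤ := fun k => ((c k : ℤ) - (c' k : ℤ)) * (x : ℤ) ^ (n - (k : ℕ)) * (y : ℤ) ^ (k : ℕ) with hf
  have hsum : ∑ k : Fin (n + 1), f k = (m' - m) * (y:ℤ) ^ (n + 1) := by
    have : ∑ k : Fin (n + 1), f k =
        (∑ k : Fin (n + 1), (c k : ℤ) * (x : ℤ) ^ (n - (k : ℕ)) * (y : ℤ) ^ (k : ℕ))
        - (∑ k : Fin (n + 1), (c' k : ℤ) * (x : ℤ) ^ (n - (k : ℕ)) * (y : ℤ) ^ (k : ℕ)) := by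
      rw [← Finset.sum_sub_distrib]
      refine Finset.sum_congr rfl fun k _ => by ring
    rw [this]; linarith [h]
  have hcc : ∀ K : ℕ, ∀ hK : K < n + 1, c ⟨K, hK⟩ = c' ⟨K, hK⟩ := by
    intro K
    induction K using Nat.strong_induction_on with
    | _ K ih =>
      intro hK
      have hdvd : ((y:ℤ) ^ (K + 1)) ∣ f ⟨K, hK⟩ := by
        have h1 : ((y:ℤ) ^ (K + 1)) ∣ ∑ k : Fin (n + 1), f k := by
          rw [hsum]
          exact Dvd.dvd.mul_left (pow_dvd_pow _ (by omega)) _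
        have h2 : ((y:ℤ) ^ (K + 1)) ∣ ∑ k ∈ Finset.univ.erase ⟨K, hK⟩, f k := by
          refine Finset.dvd_sum fun k hk => ?_
          rcases lt_trichotomy (k : ℕ) K with hlt | heq | hgt
          · have hck : c k = c' k := by simpa using ih _ hlt k.isLt
            have hz : f k = 0 := by simp [hf, hck]
            simp [hz]
          · exact absurd (Fin.ext heq : k = ⟨K, hK⟩) (Finset.ne_of_mem_erase hk)
          · have : ((y:ℤ) ^ (K + 1)) ∣ (y:ℤ) ^ (k : ℕ) := pow_dvd_pow _ (by omega)
            exact Dvd.dvd.mul_left this _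
        have := dvd_sub h1 h2
        have heq : ∑ k : Fin (n + 1), f k - ∑ k ∈ Finset.univ.erase ⟨K, hK⟩, f k = f ⟨K, hK⟩ := by
          rw [← Finset.sum_erase_add Finset.univ f (Finset.mem_univ ⟨K, hK⟩)]
          ring
        rwa [heq] at this
      have hyK : ((y:ℤ) ^ K) ≠ 0 := pow_ne_zero _ (by exact_mod_cast hy.ne')
      have hdvd2 : (y:ℤ) ∣ ((c ⟨K, hK⟩ : ℤ) - (c' ⟨K, hK⟩ : ℤ)) * (x : ℤ) ^ (n - K) := by
        have : (y:ℤ) ^ K * (y:ℤ) ∣ (y:ℤ) ^ K * (((c ⟨K, hK⟩ : ℤ) - (c' ⟨K, hK⟩ : ℤ)) * (x : ℤ) ^ (n - K)) := by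
          have e1 : (y:ℤ) ^ K * (y:ℤ) = (y:ℤ) ^ (K + 1) := (pow_succ _ _).symm
          have e2 : (y:ℤ) ^ K * (((c ⟨K, hK⟩ : ℤ) - (c' ⟨K, hK⟩ : ℤ)) * (x : ℤ) ^ (n - K)) = f ⟨K, hK⟩ := by
            simp only [hf]; ring
          rw [e1, e2]; exact hdvd
        exact (mul_dvd_mul_iff_left hyK).mp this
      have hcopyx : IsCoprime (y:ℤ) ((x:ℤ) ^ (n - K)) :=
        (Nat.isCoprime_iff_coprime.mpr hcop.symm).pow_right
      have hdvd3 : (y:ℤ) ∣ ((c ⟨K, hK⟩ : ℤ) - (c' ⟨K, hK⟩ : ℤ)) :=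
        hcopyx.dvd_of_dvd_mul_right hdvd2
      have h1 := hc ⟨K, hK⟩
      have h2 := hc' ⟨K, hK⟩
      have hz := Int.eq_zero_of_abs_lt_dvd hdvd3 (by
        rw [abs_lt]; omega)
      have := sub_eq_zero.mp hz
      exact_mod_cast this
  have hceq : c = c' := funext fun k => by
    have := hcc k k.isLt
    simpa using this
  refine ⟨hceq, ?_⟩
  subst hceq
  have : m * (y:ℤ) ^ (n + 1) = m' * (y:ℤ) ^ (n + 1) := by linarith [h]
  exact mul_right_cancel₀ (pow_ne_zero _ (by exact_mod_cast (lt_of_le_of_lt (Nat.zero_le x) hxy).ne')) this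

/-- Digit value of a list, head being the top digit `c_n`, scaled by `x` per level. -/
def dvalL (x y : ℕ) : List ℕ → ℕ
  | [] => 0
  | c :: t => c * y ^ t.length + x * dvalL x y t

/-- Arcmonic value of a list of arcs, head being the top vertex. -/
def gvalL (x y : ℕ) : List ℕ → ℕ
  | [] => 0
  | j :: t => (if j ≤ x then j * y ^ (t.length + 1) else (x + y - j) * x * y ^ t.length)
      + x * gvalL x y t

lemma key_fwd (x y : ℕ) (hx : 0 < x) (hxy : x < y) :
    ∀ L : List ℕ, (∀ j ∈ L, j < x + y) →
    ∃ A B : List ℕ, (∀ a ∈ A, 1 ≤ a ∧ a ≤ x) ∧ (∀ b ∈ B, b < y) ∧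
      A.length + B.length = L.length ∧
      dvalL x y (A ++ 0 :: B) = gvalL x y L := by
  intro L
  induction L with
  | nil => exact fun _ => ⟨[], [], by simp, by simp, by simp, by simp [dvalL, gvalL]⟩
  | cons j t ih =>
    intro hval
    obtain ⟨A, B, hA, hB, hlen, hv⟩ := ih (fun i hi => hval i (List.mem_cons_of_mem _ hi))
    have hj : j < x + y := hval j List.mem_cons_self
    have hL : (A ++ 0 :: B).length = t.length + 1 := by
      simp only [List.length_append, List.length_cons]; omega
    by_cases hjx : j ≤ x
    · rcases Nat.eq_zero_or_pos j with hj0 | hj1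
      · refine ⟨[], A ++ 0 :: B, by simp, ?_, by simpa using hL, ?_⟩
        · intro b hb
          simp only [List.mem_append, List.mem_cons] at hb
          rcases hb with h | h | h
          · exact lt_of_le_of_lt (hA b h).2 hxy
          · omega
          · exact hB b h
        · simp only [List.nil_append, dvalL, gvalL, hj0, hv]
          simp
      · refine ⟨j :: A, B, ?_, hB, by simp only [List.length_cons]; omega, ?_⟩
        · intro a ha
          rcases List.mem_cons.mp ha with h | h
          · subst h; exact ⟨hj1, hjx⟩
          · exact hA a h
        · show dvalL x y (j :: (A ++ 0 :: B)) = _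
          simp only [dvalL, gvalL, hv, hL, if_pos hjx]
    · push_neg at hjx
      set b := x + y - j with hbdef
      have hb1 : 1 ≤ b := by omega
      have hb2 : b ≤ y - 1 := by omega
      match A, hA, hlen, hv with
      | [], hA, hlen, hv =>
        have hBt : B.length = t.length := by simpa using hlen
        refine ⟨[], b :: B, by simp, ?_, by simp only [List.length_nil, List.length_cons]; omega, ?_⟩
        · intro i hi
          rcases List.mem_cons.mp hi with h | h
          · omega
          · exact hB i h
        · show dvalL x y (0 :: b :: B) = _
          simp only [List.nil_append, dvalL, gvalL, if_neg (by omega : ¬ j ≤ x),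
            List.length_cons, hBt] at hv ⊢
          rw [← hv, ← hbdef]
          ring
      | a :: A₂, hA, hlen, hv =>
        have ha := hA a List.mem_cons_self
        set R := A₂ ++ 0 :: B with hR
        have hRlen : R.length = t.length := by
          simp only [hR, List.length_append, List.length_cons]
          simp only [List.length_cons] at hlen; omega
        have hvR : a * y ^ t.length + x * dvalL x y R = gvalL x y t := by
          have e : A₂.length + (B.length + 1) = t.length := by
            simp only [List.length_cons] at hlen; omega
          simpa [dvalL, hR, hRlen, e] using hv
        by_cases hsy : a + b < y
        · refine ⟨[], (a + b) :: R, by simp, ?_,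
            by simp only [List.length_nil, List.length_cons, hRlen]; omega, ?_⟩
          · intro i hi
            simp only [List.mem_cons, hR, List.mem_append, List.mem_cons] at hi
            rcases hi with h | h | h | h
            · omega
            · exact lt_of_le_of_lt (hA i (List.mem_cons_of_mem _ h)).2 hxy
            · omega
            · exact hB i h
          · show dvalL x y (0 :: (a + b) :: R) = _
            simp only [dvalL, gvalL, if_neg (by omega : ¬ j ≤ x), hRlen, List.length_cons]
            rw [← hvR, ← hbdef]
            ring
        · push_neg at hsy
          rcases Nat.lt_or_ge (a + b) (y + 1) with hs0 | hs1
          · have hab : a + b = y := by omega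
            refine ⟨[x], R, ?_, ?_,
              by simp only [List.length_cons, List.length_nil, hRlen]; omega, ?_⟩
            · intro i hi; simp at hi; omega
            · intro i hi
              simp only [hR, List.mem_append, List.mem_cons] at hi
              rcases hi with h | h | h
              · exact lt_of_le_of_lt (hA i (List.mem_cons_of_mem _ h)).2 hxy
              · omega
              · exact hB i h
            · show dvalL x y (x :: 0 :: R) = _
              simp only [dvalL, gvalL, if_neg (by omega : ¬ j ≤ x), hRlen, List.length_cons]
              rw [← hvR, ← hbdef, ← hab]
              ring
          · refine ⟨x :: (a + b - y) :: A₂, B, ?_, hB,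
              by simp only [List.length_cons]; simp only [List.length_cons] at hlen; omega, ?_⟩
            · intro i hi
              simp only [List.mem_cons] at hi
              rcases hi with h | h | h
              · omega
              · omega
              · exact hA i (List.mem_cons_of_mem _ h)
            · show dvalL x y (x :: (a + b - y) :: R) = _
              simp only [dvalL, gvalL, if_neg (by omega : ¬ j ≤ x), hRlen, List.length_cons]
              rw [← hvR, ← hbdef]
              have hys : y ≤ a + b := hsy
              zify [hys]
              ring

lemma dvalL_ofFn (x y : ℕ) : ∀ (m : ℕ) (f : Fin m → ℕ),
    dvalL x y (List.ofFn f) = ∑ i : Fin m, f i * x ^ (i : ℕ) * y ^ (m - 1 - (i : ℕ)) := by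
  intro m
  induction m with
  | zero => intro f; simp [dvalL]
  | succ m ih =>
    intro f
    rw [List.ofFn_succ, Fin.sum_univ_succ]
    show (f 0) * y ^ (List.ofFn fun i => f i.succ).length + x * dvalL x y _ = _
    rw [ih fun i => f i.succ, List.length_ofFn, Finset.mul_sum]
    congr 1
    · simp
    · refine Finset.sum_congr rfl fun i _ => ?_
      have h1 : ((i.succ : Fin (m+1)) : ℕ) = (i : ℕ) + 1 := rfl
      rw [h1]
      have h2 : m + 1 - 1 - ((i : ℕ) + 1) = m - 1 - (i : ℕ) := by omega
      rw [h2, pow_succ]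
      ring

lemma gvalL_ofFn (x y : ℕ) : ∀ (m : ℕ) (f : Fin m → ℕ),
    gvalL x y (List.ofFn f) = ∑ i : Fin m,
      (if f i ≤ x then f i * x ^ (i : ℕ) * y ^ (m - (i : ℕ))
       else (x + y - f i) * x ^ ((i : ℕ) + 1) * y ^ (m - (i : ℕ) - 1)) := by
  intro m
  induction m with
  | zero => intro f; simp [gvalL]
  | succ m ih =>
    intro f
    rw [List.ofFn_succ, Fin.sum_univ_succ]
    show (if f 0 ≤ x then (f 0) * y ^ ((List.ofFn fun i => f i.succ).length + 1)
        else (x + y - f 0) * x * y ^ (List.ofFn fun i => f i.succ).length)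
        + x * gvalL x y _ = _
    rw [ih fun i => f i.succ, List.length_ofFn, Finset.mul_sum]
    congr 1
    · split <;> simp
    · refine Finset.sum_congr rfl fun i _ => ?_
      have h1 : ((i.succ : Fin (m+1)) : ℕ) = (i : ℕ) + 1 := rfl
      rw [h1]
      have h2 : m + 1 - ((i : ℕ) + 1) = m - (i : ℕ) := by omega
      rw [h2]
      split
      · rw [pow_succ]; ring
      · rw [pow_succ]; ring

lemma gRotor_eq_gvalL (n x y : ℕ) (ρ : Fin n → ℕ) :
    gRotor n x y ρ = gvalL x y (List.ofFn (fun i => ρ i.rev)) := by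
  rw [gvalL_ofFn, gRotor]
  refine Fintype.sum_equiv (Fin.revPerm) _ _ fun k => ?_
  simp only [Fin.revPerm_apply, Fin.rev_rev]
  have hkrev : ((k.rev : Fin n) : ℕ) = n - 1 - (k : ℕ) := by
    rw [Fin.val_rev]; omega
  have hk := k.isLt
  rw [gk, hkrev]
  have e1 : n - ((k : ℕ) + 1) = n - 1 - (k : ℕ) := by omega
  have e2 : n - (n - 1 - (k : ℕ)) = (k : ℕ) + 1 := by omega
  rw [e1, e2]

lemma dvalL_eq_sum (n x y : ℕ) (c : Fin (n + 1) → ℕ) :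
    dvalL x y (List.ofFn (fun i => c i.rev)) =
      ∑ K : Fin (n + 1), c K * x ^ (n - (K : ℕ)) * y ^ (K : ℕ) := by
  rw [dvalL_ofFn]
  refine Fintype.sum_equiv (Fin.revPerm) _ _ fun K => ?_
  simp only [Fin.revPerm_apply, Fin.rev_rev]
  have hkrev : ((K.rev : Fin (n+1)) : ℕ) = n - (K : ℕ) := by
    rw [Fin.val_rev]; omega
  have hK := K.isLt
  rw [hkrev]
  have e1 : n - (n - (K : ℕ)) = (K : ℕ) := by omega
  have e2 : n + 1 - 1 - (K : ℕ) = n - (K : ℕ) := by omega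
  rw [e1, e2]

lemma snoc_eq_of_le {n : ℕ} (c : Fin (n + 1) → ℕ) (i : Fin (n + 2)) (h : (i : ℕ) < n + 1) :
    (Fin.snoc c (0 : ℕ) : Fin (n + 2) → ℕ) i = c ⟨(i : ℕ), h⟩ := by
  simp only [Fin.snoc, Fin.castLT, dif_pos h, cast_eq]

/-- Let `v ≥ 0` be an integer. Then `v = g(ρ)` for some rotor
configuration `ρ` of the path multigraph `P^{x,y}_n` if and only if `m(v) = 0`
and the tuple `(digits(v), 0)` of length `n+2` belongs to `L_d^n`. -/
theorem arcmonic_value_iff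
    (n x y : ℕ) (hn : 1 ≤ n) (hx : 0 < x) (hxy : x < y) (hcop : Nat.Coprime x y)
    (v : ℤ) (hv : 0 ≤ v) (c : Fin (n + 1) → ℕ) (m : ℤ)
    (hdec : IsStableDecomp n x y v c m) :
    (∃ ρ : Fin n → ℕ, (∀ k : Fin n, ρ k < x + y) ∧ (gRotor n x y ρ : ℤ) = v) ↔
      (m = 0 ∧ Fin.snoc c 0 ∈ Ld n x y) := by
  obtain ⟨hcy, hval⟩ := hdec
  have hy : 0 < y := lt_of_le_of_lt (Nat.zero_le x) hxy
  constructor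
  · rintro ⟨ρ, hρ, hgv⟩
    set L : List ℕ := List.ofFn (fun i => ρ i.rev) with hLdef
    have hLval : ∀ j ∈ L, j < x + y := by
      intro j hj
      rw [hLdef, List.mem_ofFn] at hj
      obtain ⟨i, rfl⟩ := hj
      exact hρ _
    obtain ⟨A, B, hA, hB, hlen, hMval⟩ := key_fwd x y hx hxy L hLval
    have hLlen : L.length = n := by simp [hLdef]
    set M : List ℕ := A ++ 0 :: B with hMdef
    have hMlen : M.length = n + 1 := by
      simp only [hMdef, List.length_append, List.length_cons]; omega
    have hAlen : A.length ≤ n := by omega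
    set c' : Fin (n + 1) → ℕ := fun K => M.getD (n - (K : ℕ)) 0 with hc'def
    have hc'eq : ∀ K : Fin (n + 1), c' K = M.getD (n - (K : ℕ)) 0 := fun _ => rfl
    -- the three position facts
    have hgetD : ∀ idx : ℕ, (h : idx < M.length) → M.getD idx 0 = M[idx]'h := by
      intro idx h
      exact List.getD_eq_getElem M 0 h
    have hup : ∀ idx : ℕ, (h : idx < A.length) → M.getD idx 0 = A[idx] := by
      intro idx h
      rw [hgetD idx (by omega)]
      exact List.getElem_append_left h
    have hmid : M.getD A.length 0 = 0 := by
      rw [hgetD A.length (by omega)]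
      rw [List.getElem_append_right (le_refl A.length)]
      simp
    have hdown : ∀ idx : ℕ, A.length < idx → idx ≤ n → M.getD idx 0 < y := by
      intro idx h1 h2
      rw [hgetD idx (by omega)]
      rw [List.getElem_append_right (by omega : A.length ≤ idx)]
      have hmem := List.getElem_mem (l := 0 :: B) (n := idx - A.length)
        (by simp only [List.length_cons]; omega)
      rcases List.mem_cons.mp hmem with h | h
      · rw [h]; exact hy
      · exact hB _ h
    have hc'y : ∀ K : Fin (n + 1), c' K < y := by
      intro K
      rcases lt_trichotomy (n - (K : ℕ)) A.length with h | h | h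
      · rw [hc'eq K, hup _ h]
        exact lt_of_le_of_lt (hA _ (List.getElem_mem _)).2 hxy
      · rw [hc'eq K, h, hmid]; exact hy
      · rw [hc'eq K]; exact hdown _ h (by omega)
    -- value of c'
    have hofFn : List.ofFn (fun i : Fin (n + 1) => c' i.rev) = M := by
      apply List.ext_getElem
      · simp [hMlen]
      · intro i hi hi'
        rw [List.getElem_ofFn]
        have hin : i < n + 1 := by simpa using hi
        show c' (Fin.rev ⟨i, hin⟩) = M[i]
        have hr : ((Fin.rev (⟨i, hin⟩ : Fin (n+1))) : ℕ) = n - i := by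
          rw [Fin.val_rev]
          have hv : ((⟨i, hin⟩ : Fin (n + 1)) : ℕ) = i := rfl
          rw [hv]
          omega
        rw [hc'eq, hr]
        have e : n - (n - i) = i := by omega
        rw [e]
        exact hgetD i (by rw [hMlen]; omega)
    have hc'sum : (∑ K : Fin (n + 1), c' K * x ^ (n - (K : ℕ)) * y ^ (K : ℕ)) = gRotor n x y ρ := by
      rw [← dvalL_eq_sum, hofFn, hMval, gRotor_eq_gvalL]
    -- c' is a stable decomposition of v with m' = 0
    have hc'val : v = (∑ K : Fin (n + 1), (c' K : ℤ) * (x:ℤ) ^ (n - (K : ℕ)) * (y:ℤ) ^ (K : ℕ))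
        + 0 * (y:ℤ) ^ (n + 1) := by
      have : ((∑ K : Fin (n + 1), c' K * x ^ (n - (K : ℕ)) * y ^ (K : ℕ) : ℕ) : ℤ)
          = ∑ K : Fin (n + 1), (c' K : ℤ) * (x:ℤ) ^ (n - (K : ℕ)) * (y:ℤ) ^ (K : ℕ) := by
        push_cast; rfl
      rw [← hgv, ← this, hc'sum]
      ring
    obtain ⟨hceq, hmeq⟩ := stable_unique n x y hxy hcop c c' m 0 hcy hc'y (by
      rw [← hval, ← hc'val])
    refine ⟨hmeq, ?_⟩
    -- membership in Ld with pivot n - A.length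
    refine ⟨Fin.snoc_last _ _, ⟨n - A.length, by omega⟩, ?_, ?_, ?_⟩
    · intro i hi
      simp only at hi
      have hin : (i : ℕ) < n + 1 := by omega
      rw [snoc_eq_of_le c i hin, hceq, hc'eq]
      have hvv : ((⟨(i : ℕ), hin⟩ : Fin (n + 1)) : ℕ) = (i : ℕ) := rfl
      rw [hvv]
      exact hdown _ (by omega) (by omega)
    · rw [Fin.snoc_castSucc, hceq, hc'eq]
      have e : n - ((⟨n - A.length, by omega⟩ : Fin (n + 1)) : ℕ) = A.length := by
        show n - (n - A.length) = A.length
        omega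
      rw [e, hmid]
    · intro i hi1 hi2
      simp only at hi1
      have hin : (i : ℕ) < n + 1 := by omega
      rw [snoc_eq_of_le c i hin, hceq, hc'eq]
      have hvv : ((⟨(i : ℕ), hin⟩ : Fin (n + 1)) : ℕ) = (i : ℕ) := rfl
      rw [hvv]
      have hidx : n - (i : ℕ) < A.length := by omega
      rw [hup _ hidx]
      exact hA _ (List.getElem_mem _)
  · rintro ⟨hm, hlast, p, h1, h2, h3⟩
    have hcp : c p = 0 := by
      rwa [Fin.snoc_castSucc] at h2
    -- digits below the pivot are < y, digits above are in [1, x]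
    have hbelow : ∀ k : Fin n, (k : ℕ) < (p : ℕ) → c k.castSucc < y := by
      intro k hk
      have := h1 (Fin.castSucc (Fin.castSucc k)) (by simpa using hk)
      rwa [Fin.snoc_castSucc] at this
    have habove : ∀ k : Fin n, (p : ℕ) ≤ (k : ℕ) → 1 ≤ c k.succ ∧ c k.succ ≤ x := by
      intro k hk
      have hkk := k.isLt
      have := h3 (Fin.castSucc (k.succ)) (by simp; omega) (by simp)
      rwa [Fin.snoc_castSucc] at this
    set ρ0 : Fin n → ℕ := fun k => if (k : ℕ) < (p : ℕ) then
        (if c k.castSucc = 0 then 0 else x + y - c k.castSucc) else c k.succ with hρ0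
    have hρ0eq : ∀ k : Fin n, ρ0 k = if (k : ℕ) < (p : ℕ) then
        (if c k.castSucc = 0 then 0 else x + y - c k.castSucc) else c k.succ := fun _ => rfl
    refine ⟨ρ0, ?_, ?_⟩
    · intro k
      rw [hρ0eq k]
      by_cases hk : (k : ℕ) < (p : ℕ)
      · rw [if_pos hk]
        by_cases h0 : c k.castSucc = 0
        · rw [if_pos h0]; omega
        · rw [if_neg h0]
          have := hbelow k hk
          omega
      · rw [if_neg hk]
        have := habove k (by omega)
        omega
    · -- the sum
      have hgnat : gRotor n x y ρ0
          = ∑ K : Fin (n + 1), c K * x ^ (n - (K : ℕ)) * y ^ (K : ℕ) := by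
        rw [gRotor, Fin.sum_univ_succAbove
          (fun K : Fin (n + 1) => c K * x ^ (n - (K : ℕ)) * y ^ (K : ℕ)) p, hcp]
        simp only [zero_mul, zero_add]
        refine Finset.sum_congr rfl fun k _ => ?_
        have hkk := k.isLt
        by_cases hk : (k : ℕ) < (p : ℕ)
        · have hcsl : k.castSucc < p := by
            rw [Fin.lt_def]; simpa using hk
          rw [Fin.succAbove_of_castSucc_lt p k hcsl, hρ0eq k, if_pos hk]
          have hcv : ((k.castSucc : Fin (n + 1)) : ℕ) = (k : ℕ) := rfl
          by_cases h0 : c k.castSucc = 0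
          · rw [if_pos h0, gk, if_pos (Nat.zero_le x), h0]
            ring
          · rw [if_neg h0, gk]
            have hcy' := hbelow k hk
            have h1x : ¬ (x + y - c k.castSucc ≤ x) := by omega
            rw [if_neg h1x]
            have e1 : x + y - (x + y - c k.castSucc) = c k.castSucc := by omega
            have e2 : n - ((k : ℕ) + 1) + 1 = n - (k : ℕ) := by omega
            have e3 : (k : ℕ) + 1 - 1 = (k : ℕ) := by omega
            rw [e1, e2, e3, hcv]
        · have hcsl : p ≤ k.castSucc := by
            rw [Fin.le_def]; simpa using (by omega : (p : ℕ) ≤ (k : ℕ))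
          rw [Fin.succAbove_of_le_castSucc p k hcsl, hρ0eq k, if_neg hk]
          have h2 := habove k (by omega)
          rw [gk, if_pos (by omega : c k.succ ≤ x)]
          have hsv : ((k.succ : Fin (n + 1)) : ℕ) = (k : ℕ) + 1 := rfl
          rw [hsv]
      rw [hval, hm]
      have : ((∑ K : Fin (n + 1), c K * x ^ (n - (K : ℕ)) * y ^ (K : ℕ) : ℕ) : ℤ)
          = ∑ K : Fin (n + 1), (c K : ℤ) * (x:ℤ) ^ (n - (K : ℕ)) * (y:ℤ) ^ (K : ℕ) := by
        push_cast; rfl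
      rw [hgnat, this]
      ring
end

section
/- The cardinality of L_d^n equals F = Σ_{k=0}^n x^(n−k)·y^k. -/
def Phi (n x y : ℕ)
    (a : Σ k : Fin (n + 1), (Fin (k : ℕ) → Fin y) × (Fin (n - (k : ℕ)) → Fin x)) :
    Fin (n + 2) → ℕ := fun i =>
  if h : (i : ℕ) < (a.1 : ℕ) then (a.2.1 ⟨i, h⟩ : ℕ)
  else if h2 : (a.1 : ℕ) < (i : ℕ) ∧ (i : ℕ) ≤ n then
    (a.2.2 ⟨(i : ℕ) - (a.1 : ℕ) - 1, by omega⟩ : ℕ) + 1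
  else 0

lemma Phi_inj (n x y : ℕ) : Function.Injective (Phi n x y) := by
  rintro ⟨k, f, g⟩ ⟨k', f', g'⟩ h
  have hval : ∀ i : Fin (n + 2), Phi n x y ⟨k, f, g⟩ i = Phi n x y ⟨k', f', g'⟩ i :=
    fun i => congrFun h i
  have hkb := k.isLt
  have hkb' := k'.isLt
  have hkk : (k : ℕ) = (k' : ℕ) := by
    by_contra hne
    rcases Nat.lt_or_ge (k : ℕ) (k' : ℕ) with hlt | hge
    · have := hval ⟨k', by omega⟩
      simp only [Phi] at this
      split_ifs at this <;> omega
    · have := hval ⟨k, by omega⟩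
      simp only [Phi] at this
      split_ifs at this <;> omega
  have hk : k = k' := Fin.ext hkk
  subst hk
  have hf : f = f' := by
    funext i
    have hib := i.isLt
    have := hval ⟨i, by omega⟩
    simp only [Phi] at this
    split_ifs at this
    all_goals first
      | exact Fin.ext (by simpa [Fin.eta] using this)
      | omega
  have hg : g = g' := by
    funext j
    have hjn : (j : ℕ) < n - (k : ℕ) := j.isLt
    have := hval ⟨(k : ℕ) + 1 + (j : ℕ), by omega⟩
    simp only [Phi] at this
    split_ifs at this with h1 h2
    · omega
    · apply Fin.ext
      have e : (k : ℕ) + 1 + (j : ℕ) - (k : ℕ) - 1 = (j : ℕ) := by omega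
      simp only [e, Fin.eta] at this
      omega
    · omega
  rw [hf, hg]

lemma Phi_range (n x y : ℕ) : Set.range (Phi n x y) = Ld n x y := by
  ext c
  constructor
  · rintro ⟨⟨k, f, g⟩, rfl⟩
    have hkb := k.isLt
    refine ⟨?_, k, ?_, ?_, ?_⟩
    · simp only [Phi, Fin.val_last]
      split_ifs <;> omega
    · intro i hi
      simp only [Phi]
      rw [dif_pos hi]
      exact (f ⟨i, hi⟩).isLt
    · simp only [Phi, Fin.coe_castSucc]
      split_ifs <;> omega
    · intro i hlo hhi
      simp only [Phi]
      split_ifs with ha hb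
      · omega
      · exact ⟨Nat.succ_le_succ (Nat.zero_le _), Nat.succ_le_of_lt (Fin.is_lt _)⟩
      · omega
  · rintro ⟨hlast, k, h1, h2, h3⟩
    have hkb := k.isLt
    refine ⟨⟨k,
      fun i => ⟨c ⟨(i : ℕ), by have := i.isLt; omega⟩,
        h1 ⟨(i : ℕ), by have := i.isLt; omega⟩ i.isLt⟩,
      fun j => ⟨c ⟨(k : ℕ) + 1 + (j : ℕ), by have := j.isLt; omega⟩ - 1, ?_⟩⟩, ?_⟩
    · have hjn : (j : ℕ) < n - (k : ℕ) := j.isLt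
      have := h3 ⟨(k : ℕ) + 1 + (j : ℕ), by omega⟩
        (show (k : ℕ) < (k : ℕ) + 1 + (j : ℕ) by omega)
        (show (k : ℕ) + 1 + (j : ℕ) ≤ n by omega)
      omega
    · funext i
      have hib := i.isLt
      simp only [Phi]
      split_ifs with ha hb
      · show c ⟨(i : ℕ), _⟩ = c i
        exact congrArg c (Fin.eta i _)
      · have h1le := (h3 i hb.1 hb.2).1
        have e : (⟨(k : ℕ) + 1 + ((i : ℕ) - (k : ℕ) - 1), by omega⟩ : Fin (n + 2)) = i :=
          Fin.ext (by show (k : ℕ) + 1 + ((i : ℕ) - (k : ℕ) - 1) = (i : ℕ); omega)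
      
        show c ⟨(k : ℕ) + 1 + ((i : ℕ) - (k : ℕ) - 1), _⟩ - 1 + 1 = c i
        rw [e]
        omega
      · have hi : (i : ℕ) = (k : ℕ) ∨ (i : ℕ) = n + 1 := by omega
        rcases hi with hi | hi
        · have hik : i = k.castSucc := Fin.ext (by simpa using hi)
          rw [hik, h2]
        · have hil : i = Fin.last (n + 1) := Fin.ext (by simpa using hi)
          rw [hil, hlast]

/-- The cardinality of `L_d^n` equals `F = Σ_{k=0}^n x^(n−k)·y^k`. -/
theorem card_Ld
    (n x y : ℕ) (hn : 1 ≤ n) (hx : 0 < x) (hxy : x < y) (hcop : Nat.Coprime x y) :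
    (Ld n x y).ncard = Fval n x y := by
  classical
  rw [← Phi_range n x y, ← Nat.card_coe_set_eq,
    Nat.card_range_of_injective (Phi_inj n x y), Nat.card_eq_fintype_card]
  rw [Fintype.card_sigma]
  simp only [Fintype.card_prod, Fintype.card_fun, Fintype.card_fin]
  rw [Fin.sum_univ_eq_sum_range (fun k => y ^ k * x ^ (n - k)), Fval]
  exact Finset.sum_congr rfl fun k _ => by ring
end

section
/- There exists a bijection φ : L_a^n → L_d^n such that val(φ(c)) = val(c) for every c ∈ L_a^n. Equivalently: for every a ∈ L_a^n there is a unique d ∈ L_d^n with val(d) = val(a), and every d ∈ L_d^n arises in this way from a unique a ∈ L_a^n. -/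
namespace StableBij

/-- value of a digit list: `valL [c₀,…,c_{m-1}] = Σ cᵢ x^(m-1-i) y^i`. -/
def valL (x y : ℕ) : List ℕ → ℕ
  | [] => 0
  | c :: t => c * x ^ t.length + y * valL x y t

def InP (x : ℕ) (l : List ℕ) : Prop := ∀ d ∈ l, d < x
def InQ (x : ℕ) (l : List ℕ) : Prop := ∀ d ∈ l, 1 ≤ d ∧ d ≤ x
def InD (x y : ℕ) (l : List ℕ) : Prop :=
  ∃ p s, l = p ++ 0 :: s ∧ (∀ d ∈ p, d < y) ∧ InQ x s
def InA (x y : ℕ) (l : List ℕ) : Prop :=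
  ∃ p s, l = p ++ 0 :: s ∧ (∀ d ∈ p, 1 ≤ d ∧ d ≤ y) ∧ InP x s

def SL (x y : ℕ) : ℕ → ℕ
  | 0 => 0
  | m+1 => x ^ m + y * SL x y m

def BS (x y m : ℕ) : Set ℕ := {v | ∃ l, l.length = m ∧ InP x l ∧ valL x y l = v}
def GS (x y m : ℕ) : Set ℕ := {v | ∃ l, l.length = m ∧ InD x y l ∧ valL x y l = v}
def AS (x y m : ℕ) : Set ℕ := {v | ∃ l, l.length = m ∧ InA x y l ∧ valL x y l = v}

variable {x y : ℕ}

lemma InD_nil : ¬ InD x y [] := by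
  rintro ⟨p, s, h, -, -⟩
  have := congrArg List.length h; simp at this

lemma InA_nil : ¬ InA x y [] := by
  rintro ⟨p, s, h, -, -⟩
  have := congrArg List.length h; simp at this

lemma InD_cons {c : ℕ} {t : List ℕ} :
    InD x y (c :: t) ↔ (c = 0 ∧ InQ x t) ∨ (c < y ∧ InD x y t) := by
  constructor
  · rintro ⟨p, s, h, hp, hs⟩
    cases p with
    | nil => simp at h; exact Or.inl ⟨h.1, h.2 ▸ hs⟩
    | cons a p' =>
      simp at h
      exact Or.inr ⟨h.1 ▸ hp a (by simp), h.2 ▸ ⟨p', s, rfl, fun d hd => hp d (by simp [hd]), hs⟩⟩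
  · rintro (⟨rfl, hq⟩ | ⟨hc, p, s, rfl, hp, hs⟩)
    · exact ⟨[], t, rfl, by simp, hq⟩
    · refine ⟨c :: p, s, rfl, ?_, hs⟩
      intro d hd
      rcases List.mem_cons.mp hd with rfl | hd' <;> [exact hc; exact hp d hd']

lemma InA_cons {c : ℕ} {t : List ℕ} :
    InA x y (c :: t) ↔ (c = 0 ∧ InP x t) ∨ ((1 ≤ c ∧ c ≤ y) ∧ InA x y t) := by
  constructor
  · rintro ⟨p, s, h, hp, hs⟩
    cases p with
    | nil => simp at h; exact Or.inl ⟨h.1, h.2 ▸ hs⟩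
    | cons a p' =>
      simp at h
      exact Or.inr ⟨h.1 ▸ hp a (by simp), h.2 ▸ ⟨p', s, rfl, fun d hd => hp d (by simp [hd]), hs⟩⟩
  · rintro (⟨rfl, hq⟩ | ⟨hc, p, s, rfl, hp, hs⟩)
    · exact ⟨[], t, rfl, by simp, hq⟩
    · refine ⟨c :: p, s, rfl, ?_, hs⟩
      intro d hd
      rcases List.mem_cons.mp hd with rfl | hd' <;> [exact hc; exact hp d hd']

/-- splitting a value into its first digit (`< y`) and the rest is unique. -/
lemma digit_split (hxy : x < y) (hcop : Nat.Coprime x y) {k c c' t t' : ℕ}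
    (hc : c < y) (hc' : c' < y) (h : c * x ^ k + y * t = c' * x ^ k + y * t') :
    c = c' ∧ t = t' := by
  have hmod : c * x ^ k ≡ c' * x ^ k [MOD y] := by
    have h1 : c * x ^ k + y * t ≡ c' * x ^ k + y * t' [MOD y] := h ▸ Nat.ModEq.refl _
    have h2 : y * t ≡ 0 [MOD y] := (Nat.modEq_zero_iff_dvd).2 ⟨t, rfl⟩
    have h3 : y * t' ≡ 0 [MOD y] := (Nat.modEq_zero_iff_dvd).2 ⟨t', rfl⟩
    calc c * x ^ k ≡ c * x ^ k + y * t [MOD y] := by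
          simpa using (Nat.ModEq.refl (c * x ^ k)).add h2.symm
      _ ≡ c' * x ^ k + y * t' [MOD y] := h1
      _ ≡ c' * x ^ k [MOD y] := by
          simpa using (Nat.ModEq.refl (c' * x ^ k)).add h3
  have hcopk : Nat.Coprime (x ^ k) y := (Nat.Coprime.pow_left k hcop)
  have hcc : c ≡ c' [MOD y] := hmod.cancel_right_of_coprime (by simpa [Nat.Coprime] using hcopk.symm)
  have hceq : c = c' := by
    have := hcc
    unfold Nat.ModEq at this
    rwa [Nat.mod_eq_of_lt hc, Nat.mod_eq_of_lt hc'] at this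
  subst hceq
  have hy : 0 < y := lt_of_le_of_lt (Nat.zero_le x) hxy
  refine ⟨rfl, Nat.eq_of_mul_eq_mul_left hy ?_⟩
  omega

/-- uniqueness of representations with all digits `< y`. -/
lemma val_inj_lt (hxy : x < y) (hcop : Nat.Coprime x y) :
    ∀ l l' : List ℕ, l.length = l'.length → (∀ d ∈ l, d < y) → (∀ d ∈ l', d < y) →
      valL x y l = valL x y l' → l = l' := by
  intro l
  induction l with
  | nil => intro l' hlen _ _ _; cases l' <;> simp_all
  | cons c t ih =>
    intro l' hlen hdl hdl' hval
    cases l' with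
    | nil => simp at hlen
    | cons c' t' =>
      simp only [List.length_cons, Nat.succ_inj] at hlen
      simp only [valL, hlen] at hval
      obtain ⟨hc, ht⟩ := digit_split hxy hcop (hdl c (by simp)) (hdl' c' (by simp)) hval
      have := ih t' hlen (fun d hd => hdl d (by simp [hd])) (fun d hd => hdl' d (by simp [hd])) ht
      simp [hc, this]


lemma mem_BS_zero {v : ℕ} : v ∈ BS x y 0 ↔ v = 0 := by
  constructor
  · rintro ⟨l, hl, -, rfl⟩
    rw [List.length_eq_zero_iff] at hl
    simp [hl, valL]
  · rintro rfl
    exact ⟨[], rfl, by simp [InP], rfl⟩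

lemma not_mem_GS_zero {v : ℕ} : v ∉ GS x y 0 := by
  rintro ⟨l, hl, hD, -⟩
  rw [List.length_eq_zero_iff] at hl
  exact InD_nil (hl ▸ hD)

lemma not_mem_AS_zero {v : ℕ} : v ∉ AS x y 0 := by
  rintro ⟨l, hl, hD, -⟩
  rw [List.length_eq_zero_iff] at hl
  exact InA_nil (hl ▸ hD)

lemma mem_BS_succ {m v : ℕ} :
    v ∈ BS x y (m+1) ↔ ∃ c < x, ∃ b ∈ BS x y m, v = c * x ^ m + y * b := by
  constructor
  · rintro ⟨l, hl, hP, rfl⟩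
    cases l with
    | nil => simp at hl
    | cons c t =>
      simp only [List.length_cons, Nat.succ_inj] at hl
      exact ⟨c, hP c (by simp), valL x y t, ⟨t, hl, fun d hd => hP d (by simp [hd]), rfl⟩,
        by simp [valL, hl]⟩
  · rintro ⟨c, hc, b, ⟨t, hlen, hP, rfl⟩, rfl⟩
    refine ⟨c :: t, by simp [hlen], ?_, by simp [valL, hlen]⟩
    intro d hd
    rcases List.mem_cons.mp hd with rfl | hd' <;> [exact hc; exact hP d hd']

/-- values of `[1,x]`-digit lists of length `m` are exactly `BS m + SL m`. -/
lemma valQ_iff (hx : 0 < x) {m v : ℕ} :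
    (∃ l, l.length = m ∧ InQ x l ∧ valL x y l = v) ↔ ∃ b ∈ BS x y m, v = b + SL x y m := by
  induction m generalizing v with
  | zero =>
    constructor
    · rintro ⟨l, hl, -, rfl⟩
      rw [List.length_eq_zero_iff] at hl
      exact ⟨0, mem_BS_zero.2 rfl, by simp [hl, valL, SL]⟩
    · rintro ⟨b, hb, rfl⟩
      rw [mem_BS_zero] at hb
      exact ⟨[], rfl, by simp [InQ], by simp [hb, valL, SL]⟩
  | succ m ih =>
    constructor
    · rintro ⟨l, hl, hQ, rfl⟩
      cases l with
      | nil => simp at hl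
      | cons c t =>
        simp only [List.length_cons, Nat.succ_inj] at hl
        obtain ⟨b, hb, hvt⟩ := ih.1 ⟨t, hl, fun d hd => hQ d (by simp [hd]), rfl⟩
        obtain ⟨hc1, hc2⟩ := hQ c (by simp)
        obtain ⟨c', rfl⟩ : ∃ c', c = c' + 1 := ⟨c - 1, by omega⟩
        refine ⟨c' * x ^ m + y * b, mem_BS_succ.2 ⟨c', by omega, b, hb, rfl⟩, ?_⟩
        simp only [valL, hl, hvt, SL]
        ring
    · rintro ⟨b, hb, rfl⟩
      obtain ⟨c, hc, b', hb', rfl⟩ := mem_BS_succ.1 hb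
      obtain ⟨l₀, hlen₀, hQ₀, hv₀⟩ := ih.2 ⟨b', hb', rfl⟩
      refine ⟨(c+1) :: l₀, by simp [hlen₀], ?_, ?_⟩
      · intro d hd
        rcases List.mem_cons.mp hd with rfl | hd'
        · omega
        · have := hQ₀ d hd'; omega
      · simp only [valL, hlen₀, hv₀, SL]
        ring

lemma mem_GS_succ (hx : 0 < x) {m v : ℕ} :
    v ∈ GS x y (m+1) ↔ (∃ c < y, ∃ g ∈ GS x y m, v = c * x ^ m + y * g) ∨
      (∃ b ∈ BS x y m, v = y * (b + SL x y m)) := by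
  constructor
  · rintro ⟨l, hl, hD, rfl⟩
    cases l with
    | nil => simp at hl
    | cons c t =>
      simp only [List.length_cons, Nat.succ_inj] at hl
      rcases InD_cons.1 hD with ⟨rfl, hQ⟩ | ⟨hc, hDt⟩
      · obtain ⟨b, hb, hvt⟩ := (valQ_iff hx).1 ⟨t, hl, hQ, rfl⟩
        exact Or.inr ⟨b, hb, by simp [valL, hl, hvt]⟩
      · exact Or.inl ⟨c, hc, valL x y t, ⟨t, hl, hDt, rfl⟩, by simp [valL, hl]⟩
  · rintro (⟨c, hc, g, ⟨t, hlen, hDt, rfl⟩, rfl⟩ | ⟨b, hb, rfl⟩)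
    · exact ⟨c :: t, by simp [hlen], InD_cons.2 (Or.inr ⟨hc, hDt⟩), by simp [valL, hlen]⟩
    · obtain ⟨t, hlen, hQ, hvt⟩ := (valQ_iff hx).2 ⟨b, hb, rfl⟩
      exact ⟨0 :: t, by simp [hlen], InD_cons.2 (Or.inl ⟨rfl, hQ⟩), by simp [valL, hlen, hvt]⟩

lemma mem_AS_succ {m v : ℕ} :
    v ∈ AS x y (m+1) ↔ (∃ c, 1 ≤ c ∧ c ≤ y ∧ ∃ a ∈ AS x y m, v = c * x ^ m + y * a) ∨
      (∃ b ∈ BS x y m, v = y * b) := by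
  constructor
  · rintro ⟨l, hl, hA, rfl⟩
    cases l with
    | nil => simp at hl
    | cons c t =>
      simp only [List.length_cons, Nat.succ_inj] at hl
      rcases InA_cons.1 hA with ⟨rfl, hP⟩ | ⟨⟨hc1, hc2⟩, hAt⟩
      · exact Or.inr ⟨valL x y t, ⟨t, hl, hP, rfl⟩, by simp [valL, hl]⟩
      · exact Or.inl ⟨c, hc1, hc2, valL x y t, ⟨t, hl, hAt, rfl⟩, by simp [valL, hl]⟩
  · rintro (⟨c, hc1, hc2, a, ⟨t, hlen, hAt, rfl⟩, rfl⟩ | ⟨b, ⟨t, hlen, hP, rfl⟩, rfl⟩)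
    · exact ⟨c :: t, by simp [hlen], InA_cons.2 (Or.inr ⟨⟨hc1, hc2⟩, hAt⟩), by simp [valL, hlen]⟩
    · exact ⟨0 :: t, by simp [hlen], InA_cons.2 (Or.inl ⟨rfl, hP⟩), by simp [valL, hlen]⟩


/-- The key identity `G_k ∪ (B_k + S_k) = B_k ∪ (x^k + G_k)`. -/
lemma Hlem (hx : 0 < x) (hxy : x < y) (hcop : Nat.Coprime x y) :
    ∀ k v, (v ∈ GS x y k ∨ ∃ b ∈ BS x y k, v = b + SL x y k) ↔
      (v ∈ BS x y k ∨ ∃ g ∈ GS x y k, v = x ^ k + g) := by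
  intro k
  induction k with
  | zero =>
    intro v
    constructor
    · rintro (h | ⟨b, hb, rfl⟩)
      · exact absurd h not_mem_GS_zero
      · exact Or.inl (by simpa [SL, mem_BS_zero] using mem_BS_zero.1 hb)
    · rintro (h | ⟨g, hg, rfl⟩)
      · exact Or.inr ⟨0, mem_BS_zero.2 rfl, by simpa [SL] using mem_BS_zero.1 h⟩
      · exact absurd hg not_mem_GS_zero
  | succ m ih =>
    -- helper: anything of LHS(m) shape, multiplied by y, lies in GS (m+1)
    have hymul : ∀ w : ℕ, (w ∈ GS x y m ∨ ∃ b ∈ BS x y m, w = b + SL x y m) →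
        y * w ∈ GS x y (m+1) := by
      rintro w (hw | ⟨b, hb, rfl⟩)
      · exact (mem_GS_succ hx).2 (Or.inl ⟨0, by omega, w, hw, by ring⟩)
      · exact (mem_GS_succ hx).2 (Or.inr ⟨b, hb, rfl⟩)
    intro v
    constructor
    · rintro (hG | ⟨b, hb, rfl⟩)
      · rcases (mem_GS_succ hx).1 hG with ⟨c, hc, g, hg, rfl⟩ | ⟨b, hb, rfl⟩
        · by_cases hcx : x ≤ c
          · -- c ≥ x : move x out
            obtain ⟨e, he⟩ : ∃ e, e + x = c := ⟨c - x, by omega⟩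
            refine Or.inr ⟨e * x ^ m + y * g,
              (mem_GS_succ hx).2 (Or.inl ⟨e, by omega, g, hg, rfl⟩), ?_⟩
            subst he; rw [pow_succ]; ring
          · -- c < x : use ih on g
            rcases (ih g).1 (Or.inl hg) with hBg | ⟨g', hg', rfl⟩
            · exact Or.inl (mem_BS_succ.2 ⟨c, by omega, g, hBg, rfl⟩)
            · obtain ⟨e, he⟩ : ∃ e, e + x = c + y := ⟨c + y - x, by omega⟩
              refine Or.inr ⟨e * x ^ m + y * g',
                (mem_GS_succ hx).2 (Or.inl ⟨e, by omega, g', hg', rfl⟩), ?_⟩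
              have hm2 : (e + x) * x ^ m = (c + y) * x ^ m := by rw [he]
              rw [pow_succ, mul_add] at *
              ring_nf at hm2 ⊢
              linarith [hm2]
        · -- v = y * (b + SL m)
          rcases (ih (b + SL x y m)).1 (Or.inr ⟨b, hb, rfl⟩) with hB | ⟨g', hg', hsum⟩
          · exact Or.inl (mem_BS_succ.2 ⟨0, hx, b + SL x y m, hB, by ring⟩)
          · refine Or.inr ⟨(y - x) * x ^ m + y * g',
              (mem_GS_succ hx).2 (Or.inl ⟨y - x, by omega, g', hg', rfl⟩), ?_⟩
            obtain ⟨e, he⟩ : ∃ e, e + x = y ∧ e = y - x := ⟨y - x, by omega, rfl⟩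
            rw [hsum, he.2.symm] at *
            have hm2 : (e + x) * x ^ m = y * x ^ m := by rw [he.1]
            rw [pow_succ, mul_add] at *
            ring_nf at hm2 ⊢
            linarith [hm2]
      · -- v = b + SL (m+1), b ∈ BS (m+1)
        rcases mem_BS_succ.1 hb with ⟨c, hc, b₂, hb₂, rfl⟩
        have hv : c * x ^ m + y * b₂ + SL x y (m+1) = (c+1) * x ^ m + y * (b₂ + SL x y m) := by
          show _ + (x ^ m + y * SL x y m) = _
          ring
        rw [hv]
        rcases (ih (b₂ + SL x y m)).1 (Or.inr ⟨b₂, hb₂, rfl⟩) with hB | ⟨g', hg', hsum⟩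
        · by_cases hcx : c + 1 < x
          · exact Or.inl (mem_BS_succ.2 ⟨c + 1, hcx, _, hB, rfl⟩)
          · -- c + 1 = x
            have hcx' : c + 1 = x := by omega
            refine Or.inr ⟨y * (b₂ + SL x y m), hymul _ ((ih _).2 (Or.inl hB)), ?_⟩
            rw [hcx', pow_succ]
            ring
        · rw [hsum]
          by_cases hcx : c + 1 < x
          · obtain ⟨e, he⟩ : ∃ e, e + x = c + 1 + y := ⟨c + 1 + y - x, by omega⟩
            refine Or.inr ⟨e * x ^ m + y * g',
              (mem_GS_succ hx).2 (Or.inl ⟨e, by omega, g', hg', rfl⟩), ?_⟩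
            have hm2 : (e + x) * x ^ m = (c + 1 + y) * x ^ m := by rw [he]
            rw [pow_succ, mul_add] at *
            ring_nf at hm2 ⊢
            linarith [hm2]
          · have hcx' : c + 1 = x := by omega
            refine Or.inr ⟨y * (x ^ m + g'), hymul _ ((ih _).2 (Or.inr ⟨g', hg', rfl⟩)), ?_⟩
            rw [hcx', pow_succ]
            ring
    · rintro (hB | ⟨g, hg, rfl⟩)
      · rcases mem_BS_succ.1 hB with ⟨c, hc, b, hb, rfl⟩
        rcases (ih b).2 (Or.inl hb) with hGb | ⟨b'', hb'', rfl⟩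
        · exact Or.inl ((mem_GS_succ hx).2 (Or.inl ⟨c, by omega, b, hGb, rfl⟩))
        · by_cases hc1 : 1 ≤ c
          · obtain ⟨e, he⟩ : ∃ e, e + 1 = c := ⟨c - 1, by omega⟩
            refine Or.inr ⟨e * x ^ m + y * b'', mem_BS_succ.2 ⟨e, by omega, b'', hb'', rfl⟩, ?_⟩
            subst he
            show _ = _ + (x ^ m + y * SL x y m)
            ring
          · have hc0 : c = 0 := by omega
            subst hc0
            refine Or.inl ((mem_GS_succ hx).2 (Or.inr ⟨b'', hb'', by ring⟩))
      · -- v = x^(m+1) + g, g ∈ GS (m+1)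
        rcases (mem_GS_succ hx).1 hg with ⟨c, hc, g', hg', rfl⟩ | ⟨b, hb, rfl⟩
        · by_cases hxc : x + c < y
          · refine Or.inl ((mem_GS_succ hx).2 (Or.inl ⟨x + c, hxc, g', hg', ?_⟩))
            rw [pow_succ]; ring
          · -- x + c ≥ y
            obtain ⟨e, he⟩ : ∃ e, e + y = x + c ∧ e < x := ⟨x + c - y, by omega, by omega⟩
            have hveq : x ^ (m+1) + (c * x ^ m + y * g') = e * x ^ m + y * (x ^ m + g') := by
              have hm2 : (e + y) * x ^ m = (x + c) * x ^ m := by rw [he.1]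
              rw [pow_succ, mul_add] at *
              ring_nf at hm2 ⊢
              linarith [hm2]
            rw [hveq]
            rcases (ih (x ^ m + g')).2 (Or.inr ⟨g', hg', rfl⟩) with hGw | ⟨b'', hb'', hw⟩
            · exact Or.inl ((mem_GS_succ hx).2 (Or.inl ⟨e, by omega, _, hGw, rfl⟩))
            · rw [hw]
              by_cases he1 : 1 ≤ e
              · obtain ⟨e', he'⟩ : ∃ e', e' + 1 = e := ⟨e - 1, by omega⟩
                refine Or.inr ⟨e' * x ^ m + y * b'',
                  mem_BS_succ.2 ⟨e', by omega, b'', hb'', rfl⟩, ?_⟩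
                subst he'
                show _ = _ + (x ^ m + y * SL x y m)
                ring
              · have he0 : e = 0 := by omega
                subst he0
                exact Or.inl ((mem_GS_succ hx).2 (Or.inr ⟨b'', hb'', by ring⟩))
        · -- g = y * (b + SL m)
          have hveq : x ^ (m+1) + y * (b + SL x y m) = x * x ^ m + y * (b + SL x y m) := by
            rw [pow_succ]; ring
          rw [hveq]
          rcases (ih (b + SL x y m)).1 (Or.inr ⟨b, hb, rfl⟩) with hBw | ⟨g', hg', hw⟩
          · -- w ∈ BS m
            rcases (ih _).2 (Or.inl hBw) with hGw | ⟨b'', hb'', hw2⟩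
            · exact Or.inl ((mem_GS_succ hx).2 (Or.inl ⟨x, hxy, _, hGw, rfl⟩))
            · rw [hw2]
              obtain ⟨e, he⟩ : ∃ e, e + 1 = x := ⟨x - 1, by omega⟩
              refine Or.inr ⟨e * x ^ m + y * b'', mem_BS_succ.2 ⟨e, by omega, b'', hb'', rfl⟩, ?_⟩
              have hm2 : (e + 1) * x ^ m = x * x ^ m := by rw [he]
              show _ = _ + (x ^ m + y * SL x y m)
              rw [mul_add]
              ring_nf at hm2 ⊢
              linarith [hm2]
          · rw [hw]
            rcases (ih (x ^ m + g')).2 (Or.inr ⟨g', hg', rfl⟩) with hGw | ⟨b'', hb'', hw2⟩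
            · exact Or.inl ((mem_GS_succ hx).2 (Or.inl ⟨x, hxy, _, hGw, rfl⟩))
            · rw [hw2]
              obtain ⟨e, he⟩ : ∃ e, e + 1 = x := ⟨x - 1, by omega⟩
              refine Or.inr ⟨e * x ^ m + y * b'', mem_BS_succ.2 ⟨e, by omega, b'', hb'', rfl⟩, ?_⟩
              have hm2 : (e + 1) * x ^ m = x * x ^ m := by rw [he]
              show _ = _ + (x ^ m + y * SL x y m)
              rw [mul_add]
              ring_nf at hm2 ⊢
              linarith [hm2]


/-- Disjointness: `BS k ∩ (x^k + GS k) = ∅`. -/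
lemma Dis (hx : 0 < x) (hxy : x < y) (hcop : Nat.Coprime x y) :
    ∀ k, ∀ b ∈ BS x y k, ∀ g ∈ GS x y k, b ≠ x ^ k + g := by
  intro k
  induction k with
  | zero => intro b _ g hg; exact absurd hg not_mem_GS_zero
  | succ m ih =>
    rintro b hb g hg heq
    rcases mem_BS_succ.1 hb with ⟨c, hc, b₂, hb₂, rfl⟩
    rcases (mem_GS_succ hx).1 hg with ⟨c', hc', g₂, hg₂, rfl⟩ | ⟨b', hb', rfl⟩
    · by_cases hxc : x + c' < y
      · have heq2 : c * x ^ m + y * b₂ = (x + c') * x ^ m + y * g₂ := by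
          rw [heq, pow_succ]; ring
        obtain ⟨hce, -⟩ := digit_split hxy hcop (by omega) hxc heq2
        omega
      · obtain ⟨e, he⟩ : ∃ e, e + y = x + c' ∧ e < x := ⟨x + c' - y, by omega, by omega⟩
        have heq2 : c * x ^ m + y * b₂ = e * x ^ m + y * (x ^ m + g₂) := by
          rw [heq]
          have hm2 : (e + y) * x ^ m = (x + c') * x ^ m := by rw [he.1]
          rw [pow_succ, mul_add] at *
          ring_nf at hm2 ⊢
          linarith [hm2]
        obtain ⟨-, hte⟩ := digit_split hxy hcop (by omega) (by omega) heq2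
        exact ih b₂ hb₂ g₂ hg₂ hte
    · have heq2 : c * x ^ m + y * b₂ = x * x ^ m + y * (b' + SL x y m) := by
        rw [heq, pow_succ]; ring
      obtain ⟨hce, -⟩ := digit_split hxy hcop (by omega) hxy heq2
      omega

/-- Main set identity: `AS m = GS m`. -/
lemma AS_eq_GS (hx : 0 < x) (hxy : x < y) (hcop : Nat.Coprime x y) :
    ∀ m, AS x y m = GS x y m := by
  intro m
  induction m with
  | zero =>
    ext v; exact ⟨fun h => absurd h not_mem_AS_zero, fun h => absurd h not_mem_GS_zero⟩
  | succ m ih =>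
    ext v
    rw [mem_AS_succ, mem_GS_succ hx]
    constructor
    · rintro (⟨c, hc1, hc2, a, ha, rfl⟩ | ⟨b, hb, rfl⟩)
      · rw [ih] at ha
        by_cases hcy : c < y
        · exact Or.inl ⟨c, hcy, a, ha, rfl⟩
        · have hcy' : c = y := by omega
          rw [hcy']
          have : y * x ^ m + y * a = y * (x ^ m + a) := by ring
          rw [this]
          rcases (Hlem hx hxy hcop m (x ^ m + a)).2 (Or.inr ⟨a, ha, rfl⟩) with hG | ⟨b', hb', hw⟩
          · exact Or.inl ⟨0, by omega, _, hG, by ring⟩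
          · exact Or.inr ⟨b', hb', by rw [hw]⟩
      · rcases (Hlem hx hxy hcop m b).2 (Or.inl hb) with hG | ⟨b', hb', hw⟩
        · exact Or.inl ⟨0, by omega, b, hG, by ring⟩
        · exact Or.inr ⟨b', hb', by rw [hw]⟩
    · rintro (⟨c, hcy, g, hg, rfl⟩ | ⟨b, hb, rfl⟩)
      · by_cases hc1 : 1 ≤ c
        · exact Or.inl ⟨c, hc1, by omega, g, by rw [ih]; exact hg, rfl⟩
        · have hc0 : c = 0 := by omega
          subst hc0
          rcases (Hlem hx hxy hcop m g).1 (Or.inl hg) with hB | ⟨g', hg', rfl⟩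
          · exact Or.inr ⟨g, hB, by ring⟩
          · refine Or.inl ⟨y, by omega, le_refl y, g', by rw [ih]; exact hg', ?_⟩
            ring
      · rcases (Hlem hx hxy hcop m (b + SL x y m)).1 (Or.inr ⟨b, hb, rfl⟩) with hB | ⟨g', hg', hw⟩
        · exact Or.inr ⟨b + SL x y m, hB, rfl⟩
        · rw [hw]
          exact Or.inl ⟨y, by omega, le_refl y, g', by rw [ih]; exact hg', by ring⟩

/-- all digits of a `D`-list are `< y`. -/
lemma InD_digits_lt (hxy : x < y) {l : List ℕ} (h : InD x y l) : ∀ d ∈ l, d < y := by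
  obtain ⟨p, s, rfl, hp, hs⟩ := h
  intro d hd
  rcases List.mem_append.1 hd with hd | hd
  · exact hp d hd
  · rcases List.mem_cons.mp hd with rfl | hd'
    · omega
    · have := hs d hd'; omega

/-- `valL` is injective on `D`-lists of a fixed length. -/
lemma injD (hxy : x < y) (hcop : Nat.Coprime x y) {l l' : List ℕ}
    (h : InD x y l) (h' : InD x y l') (hlen : l.length = l'.length)
    (hval : valL x y l = valL x y l') : l = l' := by
  exact val_inj_lt hxy hcop l l' hlen (InD_digits_lt hxy h) (InD_digits_lt hxy h') hval

/-- `valL` is injective on `A`-lists of a fixed length. -/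
lemma injA (hx : 0 < x) (hxy : x < y) (hcop : Nat.Coprime x y) :
    ∀ l l' : List ℕ, InA x y l → InA x y l' → l.length = l'.length →
      valL x y l = valL x y l' → l = l' := by
  intro l
  induction l with
  | nil =>
    intro l' _ _ hlen _
    cases l' <;> simp_all
  | cons c t ih =>
    intro l' hA hA' hlen hval
    cases l' with
    | nil => simp at hlen
    | cons c' t' =>
      simp only [List.length_cons, Nat.succ_inj] at hlen
      simp only [valL, hlen] at hval
      have hy : 0 < y := by omega
      -- helper for the mixed case
      have mixed : ∀ (u u' : List ℕ), u.length = u'.length → InP x u → InA x y u' →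
          y * valL x y u = y * x ^ u'.length + y * valL x y u' → False := by
        intro u u' hl hP hA2 hv
        have hv' : valL x y u = x ^ u'.length + valL x y u' := by
          have : y * valL x y u = y * (x ^ u'.length + valL x y u') := by rw [hv]; ring
          exact Nat.eq_of_mul_eq_mul_left hy this
        have hbu : valL x y u ∈ BS x y u'.length := ⟨u, by omega, hP, rfl⟩
        have hgu : valL x y u' ∈ GS x y u'.length := by
          rw [← AS_eq_GS hx hxy hcop]
          exact ⟨u', rfl, hA2, rfl⟩
        exact Dis hx hxy hcop u'.length _ hbu _ hgu hv'
      rcases InA_cons.1 hA with ⟨rfl, hP⟩ | ⟨⟨hc1, hc2⟩, hAt⟩ <;>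
        rcases InA_cons.1 hA' with ⟨rfl, hP'⟩ | ⟨⟨hc1', hc2'⟩, hAt'⟩
      · -- both break at head: P tails
        simp only [Nat.zero_mul, Nat.zero_add] at hval
        have ht : t = t' := by
          refine val_inj_lt hxy hcop t t' hlen (fun d hd => ?_) (fun d hd => ?_)
            (Nat.eq_of_mul_eq_mul_left hy hval)
          · have := hP d hd; omega
          · have := hP' d hd; omega
        rw [ht]
      · -- l breaks, l' has head in [1,y]
        exfalso
        by_cases hcy : c' < y
        · have hval2 : c' * x ^ t'.length + y * valL x y t' =
              0 * x ^ t'.length + y * valL x y t := hval.symm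
          obtain ⟨h1, -⟩ := digit_split hxy hcop hcy (show 0 < y by omega) hval2
          omega
        · have hce : c' = y := by omega
          rw [hce] at hval
          refine mixed t t' hlen hP hAt' ?_
          have : y * valL x y t = y * x ^ t'.length + y * valL x y t' := by omega
          exact this
      · -- symmetric
        exfalso
        by_cases hcy : c < y
        · obtain ⟨h1, -⟩ := digit_split hxy hcop hcy (show 0 < y by omega)
            (show c * x ^ t'.length + y * valL x y t = 0 * x ^ t'.length + y * valL x y t' by
              simpa using hval)
          omega
        · have hce : c = y := by omega
          rw [hce] at hval
          refine mixed t' t hlen.symm hP' hAt ?_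
          have : y * valL x y t' = y * x ^ t'.length + y * valL x y t := by omega
          rw [← hlen] at this; exact this
      · -- both heads in [1,y]
        by_cases hcy : c < y <;> by_cases hcy' : c' < y
        · obtain ⟨h1, h2⟩ := digit_split hxy hcop hcy hcy' hval
          rw [h1, ih t' hAt hAt' hlen h2]
        · exfalso
          have hce : c' = y := by omega
          rw [hce] at hval
          have hval2 : c * x ^ t'.length + y * valL x y t =
              0 * x ^ t'.length + y * (x ^ t'.length + valL x y t') := by
            rw [hval]; ring
          obtain ⟨h1, -⟩ := digit_split hxy hcop hcy (by omega) hval2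
          omega
        · exfalso
          have hce : c = y := by omega
          rw [hce] at hval
          have hval2 : c' * x ^ t'.length + y * valL x y t' =
              0 * x ^ t'.length + y * (x ^ t'.length + valL x y t) := by
            rw [← hval]; ring
          obtain ⟨h1, -⟩ := digit_split hxy hcop hcy' (by omega) hval2
          omega
        · have hce : c = y := by omega
          have h2e : c' = y := by omega
          rw [hce, h2e] at hval
          have hvv : valL x y t = valL x y t' := by
            have : y * valL x y t = y * valL x y t' := by omega
            exact Nat.eq_of_mul_eq_mul_left hy this
          rw [hce, h2e, ih t' hAt hAt' hlen hvv]

/-! ### Bridge between `Fin`-tuples and digit lists -/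

def toList (n : ℕ) (c : Fin (n + 2) → ℕ) : List ℕ :=
  List.ofFn (fun i : Fin (n + 1) => c i.castSucc)

lemma length_toList (n : ℕ) (c : Fin (n + 2) → ℕ) : (toList n c).length = n + 1 := by
  simp [toList]

lemma getElem_toList (n : ℕ) (c : Fin (n + 2) → ℕ) (j : ℕ) (h : j < (toList n c).length) :
    (toList n c)[j] = c ⟨j, by simp [toList] at h; omega⟩ := by
  simp only [toList, List.getElem_ofFn]
  rfl

def ofList (n : ℕ) (l : List ℕ) : Fin (n + 2) → ℕ := fun i => l.getD (i : ℕ) 0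

lemma ofList_last (n : ℕ) (l : List ℕ) (hlen : l.length = n + 1) :
    ofList n l (Fin.last (n + 1)) = 0 := by
  apply List.getD_eq_default
  simp [hlen]

lemma toList_ofList (n : ℕ) (l : List ℕ) (hlen : l.length = n + 1) :
    toList n (ofList n l) = l := by
  apply List.ext_getElem (by simp [toList, hlen])
  intro i h1 h2
  rw [getElem_toList]
  show l.getD _ 0 = l[i]
  exact List.getD_eq_getElem l 0 h2

lemma ofList_toList (n : ℕ) (c : Fin (n + 2) → ℕ) (hlast : c (Fin.last (n + 1)) = 0) :
    ofList n (toList n c) = c := by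
  funext i
  by_cases h : (i : ℕ) < n + 1
  · show (toList n c).getD (i : ℕ) 0 = c i
    rw [List.getD_eq_getElem _ 0 (by simp [toList]; omega), getElem_toList]
  · have hi : i = Fin.last (n + 1) := by
      apply Fin.ext
      simp only [Fin.val_last]
      omega
    show (toList n c).getD (i : ℕ) 0 = c i
    rw [List.getD_eq_default _ 0 (by simp [toList, hi]), hi, hlast]

lemma valL_ofFn (x y : ℕ) : ∀ (m : ℕ) (f : Fin m → ℕ),
    valL x y (List.ofFn f) = ∑ i : Fin m, f i * x ^ (m - 1 - (i : ℕ)) * y ^ (i : ℕ) := by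
  intro m
  induction m with
  | zero => intro f; simp [valL]
  | succ m ih =>
    intro f
    rw [List.ofFn_succ]
    show f 0 * x ^ (List.ofFn fun i : Fin m => f i.succ).length + y * valL x y _ = _
    rw [ih, Fin.sum_univ_succ]
    simp only [List.length_ofFn, Fin.val_zero, Fin.val_succ, pow_zero, mul_one,
      Nat.add_sub_cancel, Finset.mul_sum]
    congr 1
    apply Finset.sum_congr rfl
    intro i _
    have he : m - ((i : ℕ) + 1) = m - 1 - (i : ℕ) := by omega
    rw [he, pow_succ]
    ring

lemma tupleVal_eq_valL (n x y : ℕ) (c : Fin (n + 2) → ℕ) :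
    tupleVal n x y c = valL x y (toList n c) := by
  rw [toList, valL_ofFn, tupleVal]
  apply Finset.sum_congr rfl
  intro i _
  congr 2

/-- generic bridge between the `Fin`-indexed pattern and the list pattern. -/
lemma pattern_iff (n : ℕ) (P Q : ℕ → Prop) (c : Fin (n + 2) → ℕ) :
    (∃ k : Fin (n + 1),
      (∀ i : Fin (n + 2), (i : ℕ) < (k : ℕ) → P (c i)) ∧
      c k.castSucc = 0 ∧
      (∀ i : Fin (n + 2), (k : ℕ) < (i : ℕ) → (i : ℕ) ≤ n → Q (c i))) ↔
    (∃ p s, toList n c = p ++ 0 :: s ∧ (∀ d ∈ p, P d) ∧ (∀ d ∈ s, Q d)) := by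
  have hlen : (toList n c).length = n + 1 := length_toList n c
  constructor
  · rintro ⟨k, hpre, hbrk, hsuf⟩
    have hk : (k : ℕ) < (toList n c).length := by omega
    refine ⟨(toList n c).take (k : ℕ), (toList n c).drop ((k : ℕ) + 1), ?_, ?_, ?_⟩
    · conv_lhs => rw [← List.take_append_drop (k : ℕ) (toList n c)]
      congr 1
      rw [List.drop_eq_getElem_cons hk]
      congr 1
      have h1 : (toList n c)[(k : ℕ)] = c ⟨(k : ℕ), by omega⟩ := getElem_toList n c _ hk
      rw [h1]
      have h2 : (⟨(k : ℕ), by omega⟩ : Fin (n + 2)) = k.castSucc := Fin.ext rfl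
      rw [h2]
      exact hbrk
    · intro d hd
      rw [List.mem_iff_getElem] at hd
      obtain ⟨i, hi, rfl⟩ := hd
      have hik : i < (k : ℕ) := by simp at hi; omega
      have h2 : i < (toList n c).length := by omega
      have h1 : (List.take (k : ℕ) (toList n c))[i]'hi = (toList n c)[i]'h2 :=
        List.getElem_take
      rw [h1, getElem_toList n c i h2]
      exact hpre _ hik
    · intro d hd
      rw [List.mem_iff_getElem] at hd
      obtain ⟨i, hi, rfl⟩ := hd
      have hik : (k : ℕ) + 1 + i < (toList n c).length := by simp at hi; omega
      have h1 : (List.drop ((k : ℕ) + 1) (toList n c))[i]'hi =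
          (toList n c)[(k : ℕ) + 1 + i]'hik := List.getElem_drop
      rw [h1, getElem_toList n c _ hik]
      exact hsuf _ (by simp; omega) (by simp; omega)
  · rintro ⟨p, s, heq, hp, hs⟩
    have hsl : n + 1 = p.length + (s.length + 1) := by
      have := congrArg List.length heq
      simpa [hlen] using this
    have hplen : p.length ≤ n := by omega
    have hceq : ∀ (i : Fin (n + 2)), (hi : (i : ℕ) < n + 1) →
        c i = (toList n c)[(i : ℕ)]'(by omega) := by
      intro i hi
      rw [getElem_toList]
    refine ⟨⟨p.length, by omega⟩, ?_, ?_, ?_⟩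
    · intro i hik
      simp only at hik
      have hi : (i : ℕ) < n + 1 := by omega
      rw [hceq i hi]
      have h1 : (toList n c)[(i : ℕ)]'(by omega) = p[(i : ℕ)]'(by omega) := by
        rw [List.getElem_of_eq heq]
        exact List.getElem_append_left (by omega)
      rw [h1]
      exact hp _ (List.getElem_mem _)
    · have hpl : p.length < n + 1 := by omega
      have h0 : c (Fin.castSucc ⟨p.length, by omega⟩) =
          (toList n c)[p.length]'(by omega) := by
        rw [getElem_toList]
        exact congrArg c (Fin.ext rfl)
      rw [h0, List.getElem_of_eq heq, List.getElem_append_right (le_refl p.length)]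
      simp
    · intro i hik hin
      simp only at hik
      have hi : (i : ℕ) < n + 1 := by omega
      rw [hceq i hi]
      have hpi : p.length ≤ (i : ℕ) := by omega
      obtain ⟨j, hj⟩ : ∃ j, (i : ℕ) - p.length = j + 1 := ⟨(i : ℕ) - p.length - 1, by omega⟩
      have hjs : j < s.length := by omega
      have h1 : (toList n c)[(i : ℕ)]'(by omega) = (0 :: s)[(i : ℕ) - p.length]'(by
          simp; omega) := by
        rw [List.getElem_of_eq heq]
        exact List.getElem_append_right hpi
      have h2 : (0 :: s)[(i : ℕ) - p.length]'(by simp; omega) = s[j]'hjs := by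
        simp only [hj]
        rfl
      rw [h1, h2]
      exact hs _ (List.getElem_mem _)

lemma mem_Ld_iff (n x y : ℕ) (c : Fin (n + 2) → ℕ) :
    c ∈ Ld n x y ↔ c (Fin.last (n + 1)) = 0 ∧ InD x y (toList n c) := by
  show (_ ∧ _) ↔ _
  rw [pattern_iff n (· < y) (fun d => 1 ≤ d ∧ d ≤ x) c]
  rfl

lemma mem_La_iff (n x y : ℕ) (c : Fin (n + 2) → ℕ) :
    c ∈ La n x y ↔ c (Fin.last (n + 1)) = 0 ∧ InA x y (toList n c) := by
  show (_ ∧ _) ↔ _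
  rw [pattern_iff n (fun d => 1 ≤ d ∧ d ≤ y) (· < x) c]
  rfl

end StableBij

/-- There exists a bijection `φ : L_a^n → L_d^n` with
`val(φ(c)) = val(c)` for every `c ∈ L_a^n`. -/
theorem exists_val_preserving_bijection
    (n x y : ℕ) (hn : 1 ≤ n) (hx : 0 < x) (hxy : x < y) (hcop : Nat.Coprime x y) :
    ∃ φ : ↥(La n x y) → ↥(Ld n x y), Function.Bijective φ ∧
      ∀ a : ↥(La n x y), tupleVal n x y (φ a).val = tupleVal n x y a.val := by
  classical
  have hmem : ∀ a : ↥(La n x y), ∃ l : List ℕ,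
      l.length = n + 1 ∧ StableBij.InD x y l ∧
        StableBij.valL x y l = StableBij.valL x y (StableBij.toList n a.1) := by
    intro a
    have hA := (StableBij.mem_La_iff n x y a.1).1 a.2
    have hmem2 : StableBij.valL x y (StableBij.toList n a.1) ∈ StableBij.AS x y (n+1) :=
      ⟨_, StableBij.length_toList n a.1, hA.2, rfl⟩
    rw [StableBij.AS_eq_GS hx hxy hcop] at hmem2
    obtain ⟨l, h1, h2, h3⟩ := hmem2
    exact ⟨l, h1, h2, h3⟩
  choose f hf1 hf2 hf3 using hmem
  have hLd : ∀ a, StableBij.ofList n (f a) ∈ Ld n x y := by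
    intro a
    rw [StableBij.mem_Ld_iff]
    refine ⟨StableBij.ofList_last n (f a) (hf1 a), ?_⟩
    rw [StableBij.toList_ofList n (f a) (hf1 a)]
    exact hf2 a
  refine ⟨fun a => ⟨StableBij.ofList n (f a), hLd a⟩, ⟨?_, ?_⟩, ?_⟩
  · -- injective
    intro a a' h
    have hfe : f a = f a' := by
      have h2 := congrArg (fun d => StableBij.toList n d.1) h
      simpa [StableBij.toList_ofList n _ (hf1 a), StableBij.toList_ofList n _ (hf1 a')]
        using h2
    have hval : StableBij.valL x y (StableBij.toList n a.1) =
        StableBij.valL x y (StableBij.toList n a'.1) := by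
      rw [← hf3 a, ← hf3 a', hfe]
    have hA := (StableBij.mem_La_iff n x y a.1).1 a.2
    have hA' := (StableBij.mem_La_iff n x y a'.1).1 a'.2
    have hlists := StableBij.injA hx hxy hcop _ _ hA.2 hA'.2
      (by rw [StableBij.length_toList, StableBij.length_toList]) hval
    apply Subtype.ext
    rw [← StableBij.ofList_toList n a.1 hA.1, ← StableBij.ofList_toList n a'.1 hA'.1, hlists]
  · -- surjective
    rintro ⟨d, hd⟩
    have hD := (StableBij.mem_Ld_iff n x y d).1 hd
    have hval : StableBij.valL x y (StableBij.toList n d) ∈ StableBij.AS x y (n+1) := by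
      rw [StableBij.AS_eq_GS hx hxy hcop]
      exact ⟨_, StableBij.length_toList n d, hD.2, rfl⟩
    obtain ⟨al, hal1, hal2, hal3⟩ := hval
    have haL : StableBij.ofList n al ∈ La n x y := by
      rw [StableBij.mem_La_iff]
      exact ⟨StableBij.ofList_last n al hal1,
        by rw [StableBij.toList_ofList n al hal1]; exact hal2⟩
    refine ⟨⟨StableBij.ofList n al, haL⟩, ?_⟩
    apply Subtype.ext
    show StableBij.ofList n (f ⟨StableBij.ofList n al, haL⟩) = d
    set a : ↥(La n x y) := ⟨StableBij.ofList n al, haL⟩ with ha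
    have hv2 : StableBij.valL x y (f a) = StableBij.valL x y (StableBij.toList n d) := by
      rw [hf3 a]
      show StableBij.valL x y (StableBij.toList n (StableBij.ofList n al)) = _
      rw [StableBij.toList_ofList n al hal1, hal3]
    have hfd : f a = StableBij.toList n d :=
      StableBij.injD hxy hcop (hf2 a) hD.2
        (by rw [hf1 a, StableBij.length_toList]) hv2
    rw [hfd, StableBij.ofList_toList n d hD.1]
  · -- value preserving
    intro a
    show tupleVal n x y (StableBij.ofList n (f a)) = _
    rw [StableBij.tupleVal_eq_valL, StableBij.tupleVal_eq_valL,
      StableBij.toList_ofList n (f a) (hf1 a), hf3 a]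
end

section
/- The value map val is injective on L_a^n: if a, a' ∈ L_a^n and val(a) = val(a'), then a = a'. -/
section helpers
open Finset

open Finset

private lemma coprime_cancel (x y : ℕ) (hcop : Nat.Coprime x y) (N : ℕ) (a : ℤ)
    (h : (y:ℤ) ∣ a * (x:ℤ)^N) : (y:ℤ) ∣ a := by
  have hcop' : IsCoprime (y:ℤ) ((x:ℤ)^N) := by
    have : IsCoprime (y:ℤ) ((x^N : ℕ) : ℤ) :=
      Nat.isCoprime_iff_coprime.mpr (hcop.symm.pow_right N)
    simpa using this
  exact hcop'.dvd_of_dvd_mul_right h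

private lemma peel_sum (x y n : ℕ) (d : ℕ → ℕ) :
    ∑ i ∈ range (n+1), d i * x^(n-i) * y^i
      = d 0 * x^n + y * ∑ i ∈ range n, d (i+1) * x^(n-1-i) * y^i := by
  rw [Finset.sum_range_succ', Finset.mul_sum, add_comm]
  congr 1
  · simp
  · apply Finset.sum_congr rfl
    intro i hi
    have h1 : n - (i+1) = n - 1 - i := by omega
    rw [h1]; ring

private lemma eq_y_of_dvd (y : ℕ) (hy : 0 < y) (d : ℤ) (hd : (y:ℤ) ∣ d)
    (h1 : 0 < d) (h2 : d < 2*y) : d = y := by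
  obtain ⟨t, rfl⟩ := hd
  have hy' : (0:ℤ) < y := by exact_mod_cast hy
  have ht0 : 0 < t := by
    by_contra h
    push_neg at h
    have := mul_nonpos_of_nonneg_of_nonpos hy'.le h
    linarith
  have ht2 : t < 2 := by
    by_contra h
    push_neg at h
    have := mul_le_mul_of_nonneg_left h hy'.le
    linarith
  have : t = 1 := by omega
  rw [this, mul_one]


open Finset

private lemma bad_lemma (x y : ℕ) (hx : 0 < x) (hxy : x < y) (hcop : Nat.Coprime x y) :
    ∀ m (c c' : ℕ → ℕ), (∀ i, i < m → c i ≤ y) → (∀ i, i < m → c' i < x) →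
    x ^ m + ∑ i ∈ range m, c i * x ^ (m - 1 - i) * y ^ i ≠
      ∑ i ∈ range m, c' i * x ^ (m - 1 - i) * y ^ i := by
  intro m
  induction m with
  | zero => intro c c' _ _; simp
  | succ m ih =>
    intro c c' hc hc' heq
    have hm : m + 1 - 1 = m := rfl
    rw [hm] at heq
    rw [peel_sum x y m c, peel_sum x y m c'] at heq
    set Sn := ∑ i ∈ range m, c (i+1) * x^(m-1-i) * y^i with hSn
    set Sn' := ∑ i ∈ range m, c' (i+1) * x^(m-1-i) * y^i with hSn'
    have hz : (x:ℤ)^(m+1) + (c 0 : ℤ) * (x:ℤ)^m + (y:ℤ) * Sn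
        = (c' 0 : ℤ) * (x:ℤ)^m + (y:ℤ) * Sn' := by
      have h := congrArg (Nat.cast (R := ℤ)) heq
      push_cast at h
      linarith
    have hdvd : (y:ℤ) ∣ ((c 0 : ℤ) + x - c' 0) * (x:ℤ)^m := by
      refine ⟨(Sn' : ℤ) - Sn, ?_⟩
      linear_combination hz
    have hdvd2 : (y:ℤ) ∣ ((c 0 : ℤ) + x - c' 0) := coprime_cancel x y hcop m _ hdvd
    have hy : 0 < y := lt_trans hx hxy
    have hc0 : c 0 ≤ y := hc 0 (by omega)
    have hc'0 : c' 0 < x := hc' 0 (by omega)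
    have hd : ((c 0 : ℤ) + x - c' 0) = y := by
      apply eq_y_of_dvd y hy _ hdvd2
      · have : (c' 0 : ℤ) < x := by exact_mod_cast hc'0
        linarith [Int.natCast_nonneg (c 0)]
      · have h1 : (c 0 : ℤ) ≤ y := by exact_mod_cast hc0
        have h2 : (x : ℤ) < y := by exact_mod_cast hxy
        have h3 : (0:ℤ) ≤ c' 0 := Int.natCast_nonneg _
        linarith
    have hnext : (x:ℤ)^m + (Sn:ℤ) = (Sn':ℤ) := by
      have hyz : (0:ℤ) < y := by exact_mod_cast hy
      have : (y:ℤ) * ((x:ℤ)^m + Sn) = (y:ℤ) * Sn' := by linear_combination hz - (x:ℤ)^m * hd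
      exact mul_left_cancel₀ (ne_of_gt hyz) this
    have hnat : x^m + Sn = Sn' := by exact_mod_cast hnext
    exact ih (fun i => c (i+1)) (fun i => c' (i+1))
      (fun i hi => hc (i+1) (by omega)) (fun i hi => hc' (i+1) (by omega)) hnat

set_option maxHeartbeats 1000000 in
private lemma key_lemma (x y : ℕ) (hx : 0 < x) (hxy : x < y) (hcop : Nat.Coprime x y) :
    ∀ n (c c' : ℕ → ℕ),
    (∀ i, i ≤ n → c i ≤ y) → (∀ i, i ≤ n → c' i ≤ y) →
    (∀ j i, j < i → i ≤ n → c j = 0 → c i < x) →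
    (∀ j i, j < i → i ≤ n → c' j = 0 → c' i < x) →
    (∑ i ∈ range (n+1), c i * x^(n-i) * y^i = ∑ i ∈ range (n+1), c' i * x^(n-i) * y^i) →
    ∀ i, i ≤ n → c i = c' i := by
  intro n
  induction n with
  | zero =>
    intro c c' _ _ _ _ heq i hi
    simp [Finset.sum_range_one] at heq
    interval_cases i
    exact heq
  | succ n ih =>
    intro c c' hc hc' hz hz' heq
    rw [peel_sum x y (n+1) c, peel_sum x y (n+1) c'] at heq
    have hnn : n + 1 - 1 = n := rfl
    rw [hnn] at heq
    set Sn := ∑ i ∈ range (n+1), c (i+1) * x^(n-i) * y^i with hSn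
    set Sn' := ∑ i ∈ range (n+1), c' (i+1) * x^(n-i) * y^i with hSn'
    have hy : 0 < y := lt_trans hx hxy
    have hzz : (c 0 : ℤ) * (x:ℤ)^(n+1) + (y:ℤ) * Sn
        = (c' 0 : ℤ) * (x:ℤ)^(n+1) + (y:ℤ) * Sn' := by
      have h := congrArg (Nat.cast (R := ℤ)) heq
      push_cast at h
      linarith
    have hdvd : (y:ℤ) ∣ ((c 0 : ℤ) - c' 0) * (x:ℤ)^(n+1) := by
      refine ⟨(Sn' : ℤ) - Sn, ?_⟩
      linear_combination hzz
    have hdvd2 : (y:ℤ) ∣ ((c 0 : ℤ) - c' 0) := coprime_cancel x y hcop (n+1) _ hdvd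
    -- helper: the cross case is impossible
    have cross : ∀ (d d' : ℕ → ℕ), (∀ i, i ≤ n+1 → d i ≤ y) →
        (∀ j i, j < i → i ≤ n+1 → d' j = 0 → d' i < x) →
        d 0 = y → d' 0 = 0 →
        (d 0 * x^(n+1) + y * (∑ i ∈ range (n+1), d (i+1) * x^(n-i) * y^i)
          = d' 0 * x^(n+1) + y * (∑ i ∈ range (n+1), d' (i+1) * x^(n-i) * y^i)) → False := by
      intro d d' hd hdz h0 h0' he
      rw [h0, h0'] at he
      simp only [zero_mul, zero_add] at he
      have he2 : x^(n+1) + (∑ i ∈ range (n+1), d (i+1) * x^(n-i) * y^i)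
          = ∑ i ∈ range (n+1), d' (i+1) * x^(n-i) * y^i := by
        have : y * (x^(n+1) + ∑ i ∈ range (n+1), d (i+1) * x^(n-i) * y^i)
            = y * (∑ i ∈ range (n+1), d' (i+1) * x^(n-i) * y^i) := by rw [mul_add]; exact he
        exact Nat.eq_of_mul_eq_mul_left hy this
      have hb := bad_lemma x y hx hxy hcop (n+1) (fun i => d (i+1)) (fun i => d' (i+1))
        (fun i hi => hd (i+1) (by omega))
        (fun i hi => hdz 0 (i+1) (by omega) (by omega) h0')
      rw [hnn] at hb
      exact hb he2
    have hc0 : c 0 ≤ y := hc 0 (by omega)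
    have hc'0 : c' 0 ≤ y := hc' 0 (by omega)
    have hcases : c 0 = c' 0 ∨ (c 0 = y ∧ c' 0 = 0) ∨ (c 0 = 0 ∧ c' 0 = y) := by
      obtain ⟨t, ht⟩ := hdvd2
      have h1 : (c 0 : ℤ) ≤ y := by exact_mod_cast hc0
      have h2 : (c' 0 : ℤ) ≤ y := by exact_mod_cast hc'0
      have h3 : (0:ℤ) ≤ c 0 := Int.natCast_nonneg _
      have h4 : (0:ℤ) ≤ c' 0 := Int.natCast_nonneg _
      have hyz : (0:ℤ) < y := by exact_mod_cast hy
      have ht1 : t = 0 ∨ t = 1 ∨ t = -1 := by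
        rcases lt_trichotomy t 0 with h | h | h
        · right; right
          have : t ≤ -1 := by omega
          nlinarith
        · left; exact h
        · right; left
          have : 1 ≤ t := h
          nlinarith
      rcases ht1 with rfl | rfl | rfl
      · left
        have : (c 0 : ℤ) = c' 0 := by linarith [ht]
        exact_mod_cast this
      · right; left
        simp at ht
        constructor
        · have : (c 0 : ℤ) = y := by linarith
          exact_mod_cast this
        · have : (c' 0 : ℤ) = 0 := by linarith
          exact_mod_cast this
      · right; right
        simp at ht
        constructor
        · have : (c 0 : ℤ) = 0 := by linarith
          exact_mod_cast this
        · have : (c' 0 : ℤ) = y := by linarith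
          exact_mod_cast this
    rcases hcases with h00 | ⟨hA, hB⟩ | ⟨hA, hB⟩
    · -- equal first digits
      have hSS : Sn = Sn' := by
        rw [h00] at heq
        have := Nat.add_left_cancel heq
        exact Nat.eq_of_mul_eq_mul_left hy this
      have hrest := ih (fun i => c (i+1)) (fun i => c' (i+1))
        (fun i hi => hc (i+1) (by omega)) (fun i hi => hc' (i+1) (by omega))
        (fun j i hji hi hj0 => hz (j+1) (i+1) (by omega) (by omega) hj0)
        (fun j i hji hi hj0 => hz' (j+1) (i+1) (by omega) (by omega) hj0)
        hSS
      intro i hi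
      cases i with
      | zero => exact h00
      | succ i => exact hrest i (by omega)
    · exact absurd heq (fun h => cross c c' hc hz' hA hB h)
    · exact absurd heq.symm (fun h => cross c' c hc' hz hB hA h)

end helpers

private lemma La_bound (n x y : ℕ) (hxy : x < y) (a : Fin (n+2) → ℕ) (ha : a ∈ La n x y)
    (i : ℕ) (hi : i ≤ n) (h : i < n+2) : a ⟨i, h⟩ ≤ y := by
  obtain ⟨hlast, k, hpre, hzero, hpost⟩ := ha
  rcases lt_trichotomy i (k : ℕ) with hlt | heq | hgt
  · exact (hpre ⟨i, h⟩ (by simpa)).2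
  · have hik : (⟨i, h⟩ : Fin (n+2)) = k.castSucc := by
      apply Fin.ext; simp [Fin.coe_castSucc, heq]
    rw [hik, hzero]; omega
  · have := hpost ⟨i, h⟩ (by simpa) (by simpa)
    omega

private lemma La_zero (n x y : ℕ) (a : Fin (n+2) → ℕ) (ha : a ∈ La n x y)
    (j i : ℕ) (hji : j < i) (hi : i ≤ n) (hj : j < n+2) (h : i < n+2)
    (hj0 : a ⟨j, hj⟩ = 0) : a ⟨i, h⟩ < x := by
  obtain ⟨hlast, k, hpre, hzero, hpost⟩ := ha
  have hjk : ¬ (j < (k : ℕ)) := by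
    intro hlt
    have := (hpre ⟨j, hj⟩ (by simpa)).1
    omega
  exact hpost ⟨i, h⟩ (by simp; omega) (by simpa)

/-- The value map `val` is injective on `L_a^n`. -/
theorem val_injective_on_La
    (n x y : ℕ) (hn : 1 ≤ n) (hx : 0 < x) (hxy : x < y) (hcop : Nat.Coprime x y)
    (a a' : Fin (n + 2) → ℕ) (ha : a ∈ La n x y) (ha' : a' ∈ La n x y)
    (hval : tupleVal n x y a = tupleVal n x y a') : a = a' := by
  classical
  set c : ℕ → ℕ := fun i => if h : i < n + 2 then a ⟨i, h⟩ else 0 with hcdef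
  set c' : ℕ → ℕ := fun i => if h : i < n + 2 then a' ⟨i, h⟩ else 0 with hcdef'
  have hcv : ∀ (i : ℕ) (h : i < n+2), c i = a ⟨i, h⟩ := fun i h => dif_pos h
  have hcv' : ∀ (i : ℕ) (h : i < n+2), c' i = a' ⟨i, h⟩ := fun i h => dif_pos h
  have hconv : ∀ (b : Fin (n+2) → ℕ),
      tupleVal n x y b = ∑ i ∈ Finset.range (n+1),
        (fun i => if h : i < n + 2 then b ⟨i, h⟩ else 0) i * x^(n-i) * y^i := by
    intro b
    rw [tupleVal, ← Fin.sum_univ_eq_sum_range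
      (fun i => (fun i => if h : i < n + 2 then b ⟨i, h⟩ else 0) i * x^(n-i) * y^i) (n+1)]
    apply Finset.sum_congr rfl
    intro k _
    have hk : (k : ℕ) < n + 2 := by omega
    simp only [dif_pos hk]
    have h2 : (⟨(k:ℕ), hk⟩ : Fin (n+2)) = k.castSucc := by apply Fin.ext; simp
    rw [h2]
  have heq : ∑ i ∈ Finset.range (n+1), c i * x^(n-i) * y^i
      = ∑ i ∈ Finset.range (n+1), c' i * x^(n-i) * y^i := by
    rw [hcdef, hcdef', ← hconv a, ← hconv a', hval]
  have hres := key_lemma x y hx hxy hcop n c c'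
    (fun i hi => by rw [hcv i (by omega)]; exact La_bound n x y hxy a ha i hi _)
    (fun i hi => by rw [hcv' i (by omega)]; exact La_bound n x y hxy a' ha' i hi _)
    (fun j i hji hi hj0 => by
      rw [hcv i (by omega)]
      rw [hcv j (by omega)] at hj0
      exact La_zero n x y a ha j i hji hi _ _ hj0)
    (fun j i hji hi hj0 => by
      rw [hcv' i (by omega)]
      rw [hcv' j (by omega)] at hj0
      exact La_zero n x y a' ha' j i hji hi _ _ hj0)
    heq
  funext i
  by_cases hi : (i : ℕ) ≤ n
  · have h1 := hres (i : ℕ) hi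
    rw [hcv _ i.isLt, hcv' _ i.isLt] at h1
    simpa using h1
  · have : i = Fin.last (n+1) := by
      apply Fin.ext
      simp [Fin.val_last]
      omega
    rw [this, ha.1, ha'.1]
end

section
/- For all integers v, w ≥ 0, the overflow coefficient of the stable decomposition is superadditive: m(v + w) ≥ m(v) + m(w). -/
lemma carry_exists (x y : ℕ) (hy : 0 < y) :
    ∀ (N : ℕ) (a : ℕ → ℕ), ∃ (f : ℕ → ℕ) (ε : ℕ),
      (∀ k, f k < y) ∧
      (∑ k ∈ Finset.range N, (a k : ℤ) * (x : ℤ) ^ (N - 1 - k) * (y : ℤ) ^ k)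
        = (∑ k ∈ Finset.range N, (f k : ℤ) * (x : ℤ) ^ (N - 1 - k) * (y : ℤ) ^ k)
          + (ε : ℤ) * (y : ℤ) ^ N := by
  intro N
  induction N with
  | zero => exact fun a => ⟨fun _ => 0, 0, fun _ => hy, by simp⟩
  | succ N ih =>
    intro a
    match N, ih with
    | 0, _ =>
      refine ⟨fun _ => a 0 % y, a 0 / y, fun _ => Nat.mod_lt _ hy, ?_⟩
      have hz : ((a 0 : ℕ) : ℤ) = (y:ℤ) * ((a 0 / y : ℕ) : ℤ) + ((a 0 % y : ℕ) : ℤ) := by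
        exact_mod_cast (Nat.div_add_mod (a 0) y).symm
      simp only [zero_add, Finset.sum_range_one, Nat.add_sub_cancel, Nat.sub_zero, Nat.sub_self, pow_zero, pow_one, mul_one]
      linear_combination hz
    | (M+1), ih =>
      obtain ⟨f', ε, hf', heq⟩ := ih (fun j => if j = 0 then a 1 + (a 0 / y) * x else a (j + 1))
      simp only [Nat.add_sub_cancel] at heq ⊢
      refine ⟨(fun k => if k = 0 then a 0 % y else f' (k - 1)), ε, ?_, ?_⟩
      · intro k
        by_cases h : k = 0
        · simpa [h] using Nat.mod_lt (a 0) hy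
        · simpa [h] using hf' (k - 1)
      · rw [Finset.sum_range_succ' (fun k => (a k : ℤ) * (x:ℤ) ^ (M + 1 - k) * (y:ℤ) ^ k) (M+1),
            Finset.sum_range_succ'
              (fun k => (((if k = 0 then a 0 % y else f' (k - 1) : ℕ)) : ℤ) * (x:ℤ) ^ (M + 1 - k) * (y:ℤ) ^ k) (M+1)]
        simp only [Nat.succ_sub_succ_eq_sub, Nat.sub_zero, pow_zero, mul_one,
          Nat.succ_ne_zero, if_false, if_true, ite_false, ite_true, if_pos rfl,
          Nat.add_sub_cancel]
        -- split the carry-modified sum in heq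
        have hsplit : (∑ k ∈ Finset.range (M+1),
              (((if k = 0 then a 1 + (a 0 / y) * x else a (k + 1) : ℕ)) : ℤ) * (x:ℤ) ^ (M - k) * (y:ℤ) ^ k)
            = (∑ k ∈ Finset.range (M+1), (a (k+1) : ℤ) * (x:ℤ) ^ (M - k) * (y:ℤ) ^ k)
              + ((a 0 / y : ℕ) : ℤ) * (x:ℤ) * (x:ℤ) ^ M := by
          have hterm : ∀ k ∈ Finset.range (M+1),
              (((if k = 0 then a 1 + (a 0 / y) * x else a (k + 1) : ℕ)) : ℤ) * (x:ℤ) ^ (M - k) * (y:ℤ) ^ k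
              = (a (k+1) : ℤ) * (x:ℤ) ^ (M - k) * (y:ℤ) ^ k
                + (if k = 0 then ((a 0 / y : ℕ) : ℤ) * (x:ℤ) * (x:ℤ) ^ M else 0) := by
            intro k _
            by_cases h : k = 0
            · subst h; simp only [if_pos rfl, Nat.sub_zero, pow_zero, mul_one]; push_cast; ring
            · simp [h]
          rw [Finset.sum_congr rfl hterm, Finset.sum_add_distrib,
            Finset.sum_ite_eq' (Finset.range (M+1)) 0
              (fun _ => ((a 0 / y : ℕ) : ℤ) * (x:ℤ) * (x:ℤ) ^ M)]
          simp
        rw [hsplit] at heq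
        have hmodz : ((a 0 : ℤ)) = (y:ℤ) * ((a 0 / y : ℕ) : ℤ) + ((a 0 % y : ℕ) : ℤ) := by
          exact_mod_cast (Nat.div_add_mod (a 0) y).symm
        simp only [pow_succ]
        rw [show (∑ k ∈ Finset.range (M+1), (a (k+1) : ℤ) * (x:ℤ) ^ (M - k) * ((y:ℤ) ^ k * y))
              = (∑ k ∈ Finset.range (M+1), (a (k+1) : ℤ) * (x:ℤ) ^ (M - k) * (y:ℤ) ^ k) * y from by
            rw [Finset.sum_mul]; exact Finset.sum_congr rfl fun k _ => by ring,
          show (∑ k ∈ Finset.range (M+1), (f' k : ℤ) * (x:ℤ) ^ (M - k) * ((y:ℤ) ^ k * y))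
              = (∑ k ∈ Finset.range (M+1), (f' k : ℤ) * (x:ℤ) ^ (M - k) * (y:ℤ) ^ k) * y from by
            rw [Finset.sum_mul]; exact Finset.sum_congr rfl fun k _ => by ring]
        linear_combination (y:ℤ) * heq + ((x:ℤ) * (x:ℤ)^M) * hmodz

lemma digits_unique (y : ℕ) (hy : 0 < y) :
    ∀ (N : ℕ) (w f g : ℕ → ℕ), (∀ k, Nat.Coprime (w k) y) →
      (∀ k, f k < y) → (∀ k, g k < y) →
      ((y : ℤ) ^ N ∣ ∑ k ∈ Finset.range N, ((f k : ℤ) - (g k : ℤ)) * (w k : ℤ) * (y : ℤ) ^ k) →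
      ∀ k < N, f k = g k := by
  intro N
  induction N with
  | zero => intro _ _ _ _ _ _ _ k hk; omega
  | succ N ih =>
    intro w f g hw hf hg hdvd
    have hsplit : (∑ k ∈ Finset.range (N+1), ((f k : ℤ) - (g k : ℤ)) * (w k : ℤ) * (y : ℤ) ^ k)
        = (y:ℤ) * (∑ k ∈ Finset.range N, ((f (k+1) : ℤ) - (g (k+1) : ℤ)) * (w (k+1) : ℤ) * (y : ℤ) ^ k)
          + ((f 0 : ℤ) - (g 0 : ℤ)) * (w 0 : ℤ) := by
      rw [Finset.sum_range_succ' (fun k => ((f k : ℤ) - (g k : ℤ)) * (w k : ℤ) * (y : ℤ) ^ k),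
          Finset.mul_sum]
      simp only [pow_zero, mul_one]
      congr 1
      exact Finset.sum_congr rfl fun k _ => by ring
    have hy1 : (y:ℤ) ∣ (∑ k ∈ Finset.range (N+1), ((f k : ℤ) - (g k : ℤ)) * (w k : ℤ) * (y : ℤ) ^ k) :=
      dvd_trans (dvd_pow_self _ (Nat.succ_ne_zero N)) hdvd
    have h0 : (y:ℤ) ∣ ((f 0 : ℤ) - (g 0 : ℤ)) * (w 0 : ℤ) := by
      rw [hsplit] at hy1
      exact (dvd_add_right (Dvd.intro _ rfl)).mp hy1
    have hco : IsCoprime (y : ℤ) ((w 0 : ℤ)) := by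
      rw [Int.isCoprime_iff_gcd_eq_one]
      simpa [Int.gcd, Nat.coprime_comm] using (hw 0).symm
    have h0' : (y:ℤ) ∣ ((f 0 : ℤ) - (g 0 : ℤ)) := hco.dvd_of_dvd_mul_right h0
    have hfg0 : f 0 = g 0 := by
      have hb : |((f 0 : ℤ) - (g 0 : ℤ))| < (y:ℤ) := by
        have := hf 0; have := hg 0
        rw [abs_lt]; constructor <;> push_cast <;> omega
      have := Int.eq_zero_of_abs_lt_dvd h0' hb
      omega
    have hT : (y:ℤ) ^ N ∣ (∑ k ∈ Finset.range N, ((f (k+1) : ℤ) - (g (k+1) : ℤ)) * (w (k+1) : ℤ) * (y : ℤ) ^ k) := by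
      rw [hsplit] at hdvd
      have hz : ((f 0 : ℤ) - (g 0 : ℤ)) = 0 := by rw [hfg0]; ring
      rw [hz, zero_mul, add_zero, pow_succ'] at hdvd
      exact (mul_dvd_mul_iff_left (by exact_mod_cast hy.ne' : (y:ℤ) ≠ 0)).mp hdvd
    have hrest := ih (fun k => w (k+1)) (fun k => f (k+1)) (fun k => g (k+1))
      (fun k => hw (k+1)) (fun k => hf (k+1)) (fun k => hg (k+1)) hT
    intro k hk
    cases k with
    | zero => exact hfg0
    | succ j => exact hrest j (by omega)

/-- For all integers `v, w ≥ 0`, the overflow coefficient of the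
stable decomposition is superadditive: `m(v + w) ≥ m(v) + m(w)`. -/
theorem stable_m_superadditive
    (n x y : ℕ) (hn : 1 ≤ n) (hx : 0 < x) (hxy : x < y) (hcop : Nat.Coprime x y)
    (v w : ℤ) (hv : 0 ≤ v) (hw : 0 ≤ w)
    (cv cw cvw : Fin (n + 1) → ℕ) (mv mw mvw : ℤ)
    (hdv : IsStableDecomp n x y v cv mv)
    (hdw : IsStableDecomp n x y w cw mw)
    (hdvw : IsStableDecomp n x y (v + w) cvw mvw) :
    mv + mw ≤ mvw := by
  obtain ⟨hbv, hev⟩ := hdv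
  obtain ⟨hbw, hew⟩ := hdw
  obtain ⟨hbvw, hevw⟩ := hdvw
  have hy : 0 < y := lt_trans hx hxy
  have conv : ∀ c : Fin (n + 1) → ℕ,
      (∑ k : Fin (n + 1), (c k : ℤ) * (x : ℤ) ^ (n - (k : ℕ)) * (y : ℤ) ^ (k : ℕ))
        = ∑ j ∈ Finset.range (n + 1),
            (((if h : j < n + 1 then c ⟨j, h⟩ else 0 : ℕ)) : ℤ) * (x : ℤ) ^ (n - j) * (y : ℤ) ^ j := by
    intro c
    rw [← Fin.sum_univ_eq_sum_range
      (fun j => (((if h : j < n + 1 then c ⟨j, h⟩ else 0 : ℕ)) : ℤ) * (x : ℤ) ^ (n - j) * (y : ℤ) ^ j)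
      (n + 1)]
    exact Finset.sum_congr rfl fun k _ => by simp [k.isLt]
  rw [conv cv] at hev
  rw [conv cw] at hew
  rw [conv cvw] at hevw
  obtain ⟨f, ε, hf, hcarry⟩ := carry_exists x y hy (n + 1)
    (fun j => (if h : j < n + 1 then cv ⟨j, h⟩ else 0) + (if h : j < n + 1 then cw ⟨j, h⟩ else 0))
  simp only [Nat.add_sub_cancel] at hcarry
  have hLHS : (∑ j ∈ Finset.range (n + 1),
        (((if h : j < n + 1 then cv ⟨j, h⟩ else 0 : ℕ) + (if h : j < n + 1 then cw ⟨j, h⟩ else 0 : ℕ) : ℕ)) * (x : ℤ) ^ (n - j) * (y : ℤ) ^ j)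
      = (∑ j ∈ Finset.range (n + 1),
          (((if h : j < n + 1 then cv ⟨j, h⟩ else 0 : ℕ)) : ℤ) * (x : ℤ) ^ (n - j) * (y : ℤ) ^ j)
        + (∑ j ∈ Finset.range (n + 1),
          (((if h : j < n + 1 then cw ⟨j, h⟩ else 0 : ℕ)) : ℤ) * (x : ℤ) ^ (n - j) * (y : ℤ) ^ j) := by
    rw [← Finset.sum_add_distrib]
    exact Finset.sum_congr rfl fun k _ => by push_cast; ring
  rw [hLHS] at hcarry
  have key : (∑ j ∈ Finset.range (n + 1), (f j : ℤ) * (x : ℤ) ^ (n - j) * (y : ℤ) ^ j)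
      - (∑ j ∈ Finset.range (n + 1),
          (((if h : j < n + 1 then cvw ⟨j, h⟩ else 0 : ℕ)) : ℤ) * (x : ℤ) ^ (n - j) * (y : ℤ) ^ j)
      = (mvw - mv - mw - (ε : ℤ)) * (y : ℤ) ^ (n + 1) := by
    linear_combination hevw - hev - hew - hcarry
  have hdvd : (y : ℤ) ^ (n + 1) ∣ ∑ k ∈ Finset.range (n + 1),
      ((f k : ℤ) - (((if h : k < n + 1 then cvw ⟨k, h⟩ else 0 : ℕ)) : ℤ))
        * (((x ^ (n - k) : ℕ)) : ℤ) * (y : ℤ) ^ k := by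
    have hsum : (∑ k ∈ Finset.range (n + 1),
        ((f k : ℤ) - (((if h : k < n + 1 then cvw ⟨k, h⟩ else 0 : ℕ)) : ℤ))
          * (((x ^ (n - k) : ℕ)) : ℤ) * (y : ℤ) ^ k)
        = (∑ j ∈ Finset.range (n + 1), (f j : ℤ) * (x : ℤ) ^ (n - j) * (y : ℤ) ^ j)
          - (∑ j ∈ Finset.range (n + 1),
              (((if h : j < n + 1 then cvw ⟨j, h⟩ else 0 : ℕ)) : ℤ) * (x : ℤ) ^ (n - j) * (y : ℤ) ^ j) := by
      rw [← Finset.sum_sub_distrib]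
      exact Finset.sum_congr rfl fun k _ => by push_cast; ring
    rw [hsum, key]
    exact dvd_mul_left _ _
  have huniq := digits_unique y hy (n + 1) (fun k => x ^ (n - k)) f
    (fun k => if h : k < n + 1 then cvw ⟨k, h⟩ else 0)
    (fun k => Nat.Coprime.pow_left _ hcop) hf
    (fun k => by
      by_cases h : k < n + 1
      · simpa [h] using hbvw ⟨k, h⟩
      · simpa [h] using hy)
    hdvd
  have hsums : (∑ j ∈ Finset.range (n + 1), (f j : ℤ) * (x : ℤ) ^ (n - j) * (y : ℤ) ^ j)
      = (∑ j ∈ Finset.range (n + 1),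
          (((if h : j < n + 1 then cvw ⟨j, h⟩ else 0 : ℕ)) : ℤ) * (x : ℤ) ^ (n - j) * (y : ℤ) ^ j) := by
    refine Finset.sum_congr rfl fun k hk => ?_
    rw [huniq k (Finset.mem_range.mp hk)]
  rw [hsums, sub_self] at key
  have hYne : ((y : ℤ)) ^ (n + 1) ≠ 0 := pow_ne_zero _ (by exact_mod_cast hy.ne')
  have hz : mvw - mv - mw - (ε : ℤ) = 0 := by
    rcases mul_eq_zero.mp key.symm with h | h
    · exact h
    · exact absurd h hYne
  have : (0 : ℤ) ≤ (ε : ℤ) := Int.natCast_nonneg ε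
  linarith
end

section
/- For every integer v ≥ 0, the sequence k ↦ m(v + k·F) indexed by k ∈ ℕ is nondecreasing; in particular m(v + F) ≥ m(v). -/
namespace StableAux

/-- extend a digit tuple to a function on `ℕ` (zero beyond `n`). -/
def cext (n : ℕ) (c : Fin (n + 1) → ℕ) (k : ℕ) : ℕ :=
  if h : k < n + 1 then c ⟨k, h⟩ else 0

lemma cext_lt (n y : ℕ) (hy : 0 < y) (c : Fin (n + 1) → ℕ)
    (hc : ∀ k : Fin (n + 1), c k < y) (k : ℕ) : cext n c k < y := by
  unfold cext
  split
  · exact hc _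
  · exact hy

lemma cext_coe (n : ℕ) (c : Fin (n + 1) → ℕ) (k : Fin (n + 1)) :
    cext n c (k : ℕ) = c k := by
  unfold cext
  rw [dif_pos k.isLt]

lemma fin_sum_eq (n x y : ℕ) (c : Fin (n + 1) → ℕ) :
    (∑ k : Fin (n + 1), (c k : ℤ) * (x : ℤ) ^ (n - (k : ℕ)) * (y : ℤ) ^ (k : ℕ))
      = ∑ k ∈ Finset.range (n + 1),
          (cext n c k : ℤ) * (x : ℤ) ^ (n - k) * (y : ℤ) ^ k := by
  rw [← Fin.sum_univ_eq_sum_range (fun k => (cext n c k : ℤ) * (x : ℤ) ^ (n - k) * (y : ℤ) ^ k)]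
  exact Finset.sum_congr rfl fun k _ => by rw [cext_coe]

/-- the carry machine for adding `F` to a digit string. -/
def mach (x y : ℕ) (cf : ℕ → ℕ) : ℕ → ℕ × ℕ
  | 0 => ((cf 0 + 1) % y, (cf 0 + 1) / y)
  | k + 1 =>
      ((cf (k + 1) + 1 + x * (mach x y cf k).2) % y,
       (cf (k + 1) + 1 + x * (mach x y cf k).2) / y)

lemma carry_le_one (x y : ℕ) (cf : ℕ → ℕ) (hxy : x < y) (hcf : ∀ k, cf k < y) :
    ∀ k, (mach x y cf k).2 ≤ 1 := by
  have hy : 0 < y := Nat.lt_of_le_of_lt (Nat.zero_le x) hxy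
  intro k
  induction k with
  | zero =>
      have h0 := hcf 0
      simp only [mach]
      have : (cf 0 + 1) / y < 2 := (Nat.div_lt_iff_lt_mul hy).mpr (by omega)
      omega
  | succ k ih =>
      have h0 := hcf (k + 1)
      have hxe : x * (mach x y cf k).2 ≤ x * 1 := Nat.mul_le_mul le_rfl ih
      rw [Nat.mul_one] at hxe
      simp only [mach]
      have : (cf (k + 1) + 1 + x * (mach x y cf k).2) / y < 2 :=
        (Nat.div_lt_iff_lt_mul hy).mpr (by omega)
      omega

lemma digit_lt (x y : ℕ) (cf : ℕ → ℕ) (hy : 0 < y) (k : ℕ) :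
    (mach x y cf k).1 < y := by
  cases k with
  | zero => simp only [mach]; exact Nat.mod_lt _ hy
  | succ k => simp only [mach]; exact Nat.mod_lt _ hy

lemma mach_sum (x y n : ℕ) (cf : ℕ → ℕ) :
    ∀ j, j ≤ n →
      (∑ k ∈ Finset.range (j + 1), ((cf k : ℤ) + 1) * (x : ℤ) ^ (n - k) * (y : ℤ) ^ k)
        = (∑ k ∈ Finset.range (j + 1),
              ((mach x y cf k).1 : ℤ) * (x : ℤ) ^ (n - k) * (y : ℤ) ^ k)
          + ((mach x y cf j).2 : ℤ) * (x : ℤ) ^ (n - j) * (y : ℤ) ^ (j + 1) := by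
  intro j
  induction j with
  | zero =>
      intro _
      simp only [zero_add, Finset.sum_range_one, mach]
      have hd : (((cf 0 + 1) % y : ℕ) : ℤ) + (y : ℤ) * (((cf 0 + 1) / y : ℕ) : ℤ)
          = ((cf 0 : ℤ) + 1) := by
        exact_mod_cast Nat.mod_add_div (cf 0 + 1) y
      linear_combination (-(x : ℤ) ^ (n - 0)) * hd
  | succ j ih =>
      intro hj
      have hj' : j ≤ n := by omega
      conv_lhs => rw [Finset.sum_range_succ]
      conv_rhs => rw [Finset.sum_range_succ]
      rw [ih hj']
      have hsub : n - j = (n - (j + 1)) + 1 := by omega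
      set e := (mach x y cf j).2 with he
      have hd : (((cf (j + 1) + 1 + x * e) % y : ℕ) : ℤ)
            + (y : ℤ) * (((cf (j + 1) + 1 + x * e) / y : ℕ) : ℤ)
          = ((cf (j + 1) : ℤ) + 1 + (x : ℤ) * (e : ℤ)) := by
        exact_mod_cast Nat.mod_add_div (cf (j + 1) + 1 + x * e) y
      simp only [mach, ← he]
      rw [hsub, pow_succ, pow_succ]
      linear_combination (-((x : ℤ) ^ (n - (j + 1)) * (y : ℤ) ^ j * (y : ℤ))) * hd

lemma step_decomp (n x y : ℕ) (hxy : x < y)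
    (w : ℤ) (c : Fin (n + 1) → ℕ) (m : ℤ)
    (h : IsStableDecomp n x y w c m) :
    ∃ (d : Fin (n + 1) → ℕ) (m' : ℤ),
      IsStableDecomp n x y (w + (Fval n x y : ℤ)) d m' ∧ m ≤ m' := by
  have hy : 0 < y := Nat.lt_of_le_of_lt (Nat.zero_le x) hxy
  set cf := cext n c with hcfdef
  have hcf : ∀ k, cf k < y := cext_lt n y hy c h.1
  refine ⟨fun k => (mach x y cf k).1, m + ((mach x y cf n).2 : ℤ), ⟨?_, ?_⟩, ?_⟩
  · intro k; exact digit_lt x y cf hy _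
  · have hm := mach_sum x y n cf n le_rfl
    have hsplit : ∑ k ∈ Finset.range (n + 1), ((cf k : ℤ) + 1) * (x : ℤ) ^ (n - k) * (y : ℤ) ^ k
        = (∑ k ∈ Finset.range (n + 1), (cf k : ℤ) * (x : ℤ) ^ (n - k) * (y : ℤ) ^ k)
          + ∑ k ∈ Finset.range (n + 1), (x : ℤ) ^ (n - k) * (y : ℤ) ^ k := by
      rw [← Finset.sum_add_distrib]
      exact Finset.sum_congr rfl fun k _ => by ring
    have hF : ((Fval n x y : ℕ) : ℤ)
        = ∑ k ∈ Finset.range (n + 1), (x : ℤ) ^ (n - k) * (y : ℤ) ^ k := by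
      unfold Fval
      push_cast
      rfl
    have hsum2 : (∑ k : Fin (n + 1),
          (((mach x y cf k).1 : ℕ) : ℤ) * (x : ℤ) ^ (n - (k : ℕ)) * (y : ℤ) ^ (k : ℕ))
        = ∑ k ∈ Finset.range (n + 1),
            ((mach x y cf k).1 : ℤ) * (x : ℤ) ^ (n - k) * (y : ℤ) ^ k := by
      rw [← Fin.sum_univ_eq_sum_range
        (fun k => ((mach x y cf k).1 : ℤ) * (x : ℤ) ^ (n - k) * (y : ℤ) ^ k)]
    rw [h.2, hsum2, fin_sum_eq n x y c, ← hcfdef, hF]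
    rw [Nat.sub_self] at hm
    rw [pow_zero] at hm
    linarith [hm, hsplit]
  · have : (0 : ℤ) ≤ ((mach x y cf n).2 : ℤ) := Int.natCast_nonneg _
    linarith

lemma decomp_unique (n x y : ℕ) (hxy : x < y) (hcop : Nat.Coprime x y)
    (w : ℤ) (c c' : Fin (n + 1) → ℕ) (m m' : ℤ)
    (h : IsStableDecomp n x y w c m) (h' : IsStableDecomp n x y w c' m') :
    m = m' := by
  have hy : 0 < y := Nat.lt_of_le_of_lt (Nat.zero_le x) hxy
  set cf := cext n c with hcfdef
  set cf' := cext n c' with hcf'def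
  have hcf : ∀ k, cf k < y := cext_lt n y hy c h.1
  have hcf' : ∀ k, cf' k < y := cext_lt n y hy c' h'.1
  have E : ∑ k ∈ Finset.range (n + 1),
        ((cf k : ℤ) - (cf' k : ℤ)) * (x : ℤ) ^ (n - k) * (y : ℤ) ^ k
      = (m' - m) * (y : ℤ) ^ (n + 1) := by
    have h2 := h.2
    have h2' := h'.2
    rw [fin_sum_eq n x y c, ← hcfdef] at h2
    rw [fin_sum_eq n x y c', ← hcf'def] at h2'
    have := h2.symm.trans h2'
    have hsub : ∑ k ∈ Finset.range (n + 1),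
          ((cf k : ℤ) - (cf' k : ℤ)) * (x : ℤ) ^ (n - k) * (y : ℤ) ^ k
        = (∑ k ∈ Finset.range (n + 1), (cf k : ℤ) * (x : ℤ) ^ (n - k) * (y : ℤ) ^ k)
          - ∑ k ∈ Finset.range (n + 1), (cf' k : ℤ) * (x : ℤ) ^ (n - k) * (y : ℤ) ^ k := by
      rw [← Finset.sum_sub_distrib]
      exact Finset.sum_congr rfl fun k _ => by ring
    rw [hsub]
    linarith [this]
  have hco : IsCoprime ((y : ℤ)) ((x : ℤ)) :=
    Nat.isCoprime_iff_coprime.mpr hcop.symm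
  have claim : ∀ j, j ≤ n + 1 → ∀ i, i < j → cf i = cf' i := by
    intro j
    induction j with
    | zero => intro _ i hi; omega
    | succ j ih =>
        intro hj i hi
        have hj' : j ≤ n := by omega
        rcases Nat.lt_succ_iff_lt_or_eq.mp hi with hlt | rfl
        · exact ih (by omega) i hlt
        · -- show cf i = cf' i  (here i = j in the old naming; bound var is `i`)
          have hprev : ∀ t, t < i → cf t = cf' t := ih (by omega)
          have hzero : ∑ k ∈ Finset.range i,
              ((cf k : ℤ) - (cf' k : ℤ)) * (x : ℤ) ^ (n - k) * (y : ℤ) ^ k = 0 := by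
            apply Finset.sum_eq_zero
            intro k hk
            rw [Finset.mem_range] at hk
            rw [hprev k hk]
            ring
          have hsplit : (∑ k ∈ Finset.range i,
                ((cf k : ℤ) - (cf' k : ℤ)) * (x : ℤ) ^ (n - k) * (y : ℤ) ^ k)
              + ∑ k ∈ Finset.Ico i (n + 1),
                  ((cf k : ℤ) - (cf' k : ℤ)) * (x : ℤ) ^ (n - k) * (y : ℤ) ^ k
              = ∑ k ∈ Finset.range (n + 1),
                  ((cf k : ℤ) - (cf' k : ℤ)) * (x : ℤ) ^ (n - k) * (y : ℤ) ^ k := by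
            rw [Finset.range_eq_Ico, Finset.range_eq_Ico]
            exact Finset.sum_Ico_consecutive (fun k => ((cf k : ℤ) - (cf' k : ℤ)) * (x : ℤ) ^ (n - k) * (y : ℤ) ^ k) (Nat.zero_le i) (by omega)
          have hbot : ∑ k ∈ Finset.Ico i (n + 1),
                ((cf k : ℤ) - (cf' k : ℤ)) * (x : ℤ) ^ (n - k) * (y : ℤ) ^ k
              = ((cf i : ℤ) - (cf' i : ℤ)) * (x : ℤ) ^ (n - i) * (y : ℤ) ^ i
                + ∑ k ∈ Finset.Ico (i + 1) (n + 1),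
                    ((cf k : ℤ) - (cf' k : ℤ)) * (x : ℤ) ^ (n - k) * (y : ℤ) ^ k :=
            Finset.sum_eq_sum_Ico_succ_bot (by omega) _
          have hdvdT : ((y : ℤ)) ^ (i + 1) ∣
              ∑ k ∈ Finset.Ico (i + 1) (n + 1),
                ((cf k : ℤ) - (cf' k : ℤ)) * (x : ℤ) ^ (n - k) * (y : ℤ) ^ k := by
            apply Finset.dvd_sum
            intro k hk
            rw [Finset.mem_Ico] at hk
            exact Dvd.dvd.mul_left (pow_dvd_pow _ hk.1) _
          have hdvdR : ((y : ℤ)) ^ (i + 1) ∣ (m' - m) * (y : ℤ) ^ (n + 1) :=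
            Dvd.dvd.mul_left (pow_dvd_pow _ (by omega)) _
          have hdvdMain : ((y : ℤ)) ^ (i + 1) ∣
              ((cf i : ℤ) - (cf' i : ℤ)) * (x : ℤ) ^ (n - i) * (y : ℤ) ^ i := by
            have heq : ((cf i : ℤ) - (cf' i : ℤ)) * (x : ℤ) ^ (n - i) * (y : ℤ) ^ i
                = (m' - m) * (y : ℤ) ^ (n + 1)
                  - ∑ k ∈ Finset.Ico (i + 1) (n + 1),
                      ((cf k : ℤ) - (cf' k : ℤ)) * (x : ℤ) ^ (n - k) * (y : ℤ) ^ k := by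
              have := hsplit
              rw [hzero, zero_add, hbot] at this
              linarith [this, E]
            rw [heq]
            exact dvd_sub hdvdR hdvdT
          have hdvd : (y : ℤ) ∣ ((cf i : ℤ) - (cf' i : ℤ)) * (x : ℤ) ^ (n - i) := by
            have hyj : ((y : ℤ)) ^ i ≠ 0 := pow_ne_zero _ (by exact_mod_cast hy.ne')
            have h1 : ((y : ℤ)) ^ i * (y : ℤ) ∣
                ((y : ℤ)) ^ i * (((cf i : ℤ) - (cf' i : ℤ)) * (x : ℤ) ^ (n - i)) := by
              rw [← pow_succ]
              have : ((y : ℤ)) ^ i * (((cf i : ℤ) - (cf' i : ℤ)) * (x : ℤ) ^ (n - i))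
                  = ((cf i : ℤ) - (cf' i : ℤ)) * (x : ℤ) ^ (n - i) * (y : ℤ) ^ i := by ring
              rw [this]
              exact hdvdMain
            exact (mul_dvd_mul_iff_left hyj).mp h1
          have hyd : (y : ℤ) ∣ ((cf i : ℤ) - (cf' i : ℤ)) :=
            (hco.pow_right).dvd_of_dvd_mul_right hdvd
          have hb1 : (cf i : ℤ) < y := by exact_mod_cast hcf i
          have hb2 : (cf' i : ℤ) < y := by exact_mod_cast hcf' i
          have hb3 : (0 : ℤ) ≤ (cf i : ℤ) := Int.natCast_nonneg _
          have hb4 : (0 : ℤ) ≤ (cf' i : ℤ) := Int.natCast_nonneg _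
          obtain ⟨t, ht⟩ := hyd
          have hy' : (0 : ℤ) < y := by exact_mod_cast hy
          have ht1 : t < 1 := by nlinarith
          have ht2 : -1 < t := by nlinarith
          have ht0 : t = 0 := by omega
          rw [ht0, mul_zero] at ht
          have : (cf i : ℤ) = (cf' i : ℤ) := by linarith
          exact_mod_cast this
  have hall : ∑ k ∈ Finset.range (n + 1),
      ((cf k : ℤ) - (cf' k : ℤ)) * (x : ℤ) ^ (n - k) * (y : ℤ) ^ k = 0 := by
    apply Finset.sum_eq_zero
    intro k hk
    rw [Finset.mem_range] at hk
    rw [claim (n + 1) le_rfl k hk]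
    ring
  rw [hall] at E
  have hyne : ((y : ℤ)) ^ (n + 1) ≠ 0 := pow_ne_zero _ (by exact_mod_cast hy.ne')
  have := mul_eq_zero.mp E.symm
  rcases this with h0 | h0
  · linarith [sub_eq_zero.mp h0]
  · exact absurd h0 hyne

end StableAux


/-- For every integer `v ≥ 0`, the sequence `k ↦ m(v + k·F)`
indexed by `k ∈ ℕ` is nondecreasing; in particular `m(v + F) ≥ m(v)`. -/
theorem stable_m_monotone
    (n x y : ℕ) (hn : 1 ≤ n) (hx : 0 < x) (hxy : x < y) (hcop : Nat.Coprime x y)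
    (v : ℤ) (hv : 0 ≤ v) :
    ∀ (k l : ℕ), k ≤ l →
      ∀ (ck cl : Fin (n + 1) → ℕ) (mk ml : ℤ),
        IsStableDecomp n x y (v + (k : ℤ) * (Fval n x y : ℤ)) ck mk →
        IsStableDecomp n x y (v + (l : ℤ) * (Fval n x y : ℤ)) cl ml →
        mk ≤ ml := by
  intro k l hkl ck cl mk ml hk hl
  have key : ∀ t : ℕ, ∃ (d : Fin (n + 1) → ℕ) (m' : ℤ),
      IsStableDecomp n x y
        (v + (k : ℤ) * (Fval n x y : ℤ) + (t : ℤ) * (Fval n x y : ℤ)) d m' ∧ mk ≤ m' := by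
    intro t
    induction t with
    | zero =>
        refine ⟨ck, mk, ?_, le_rfl⟩
        have h0 : v + (k : ℤ) * (Fval n x y : ℤ) + ((0 : ℕ) : ℤ) * (Fval n x y : ℤ)
            = v + (k : ℤ) * (Fval n x y : ℤ) := by push_cast; ring
        rw [h0]; exact hk
    | succ t ih =>
        obtain ⟨d, m', hd, hm⟩ := ih
        obtain ⟨d2, m2, hd2, hm2⟩ := StableAux.step_decomp n x y hxy _ d m' hd
        refine ⟨d2, m2, ?_, le_trans hm hm2⟩
        have h1 : v + (k : ℤ) * (Fval n x y : ℤ) + ((t + 1 : ℕ) : ℤ) * (Fval n x y : ℤ)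
            = v + (k : ℤ) * (Fval n x y : ℤ) + (t : ℤ) * (Fval n x y : ℤ)
              + (Fval n x y : ℤ) := by push_cast; ring
        rw [h1]; exact hd2
  obtain ⟨d, m', hd, hm⟩ := key (l - k)
  have harith : v + (k : ℤ) * (Fval n x y : ℤ) + (((l - k : ℕ)) : ℤ) * (Fval n x y : ℤ)
      = v + (l : ℤ) * (Fval n x y : ℤ) := by
    rw [Nat.cast_sub hkl]; ring
  rw [harith] at hd
  have := StableAux.decomp_unique n x y hxy hcop _ d cl m' ml hd hl
  omega
end

section
/- Let v be an integer. (i) If m(v) < 0, then v − F ∉ G. (ii) If m(v) ≥ 0, then v + F ∉ G. -/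
section Statement8Aux

lemma key_zero (x y : ℕ) (hcop : Nat.Coprime x y) (hy : 1 < y) :
    ∀ (n : ℕ) (δ : ℕ → ℤ), (∀ i, |δ i| < y) →
      ((y:ℤ)^(n+1) ∣ ∑ i ∈ Finset.range (n+1), δ i * (x:ℤ)^(n-i) * (y:ℤ)^i) →
      ∑ i ∈ Finset.range (n+1), δ i * (x:ℤ)^(n-i) * (y:ℤ)^i = 0 := by
  have hcopZ : IsCoprime (y : ℤ) (x : ℤ) := by
    rw [Int.isCoprime_iff_gcd_eq_one, Int.gcd_natCast_natCast]
    exact (Nat.coprime_comm.mp hcop)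
  intro n
  induction n with
  | zero =>
    intro δ hδ hdvd
    simp only [Finset.sum_range_one, pow_zero, pow_one, mul_one, Nat.zero_sub] at hdvd ⊢
    have : δ 0 = 0 := Int.eq_zero_of_abs_lt_dvd (by simpa using hdvd) (hδ 0)
    simp [this]
  | succ n ih =>
    intro δ hδ hdvd
    have hy0 : (y:ℤ) ∣ ∑ i ∈ Finset.range (n+2), δ i * (x:ℤ)^(n+1-i) * (y:ℤ)^i :=
      dvd_trans (dvd_pow_self _ (Nat.succ_ne_zero _)) hdvd
    have hd0 : (y:ℤ) ∣ δ 0 * (x:ℤ)^(n+1) := by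
      have : ∑ i ∈ Finset.range (n+2), δ i * (x:ℤ)^(n+1-i) * (y:ℤ)^i
          = δ 0 * (x:ℤ)^(n+1) + ∑ i ∈ Finset.range (n+1), δ (i+1) * (x:ℤ)^(n-i) * (y:ℤ)^(i+1) := by
        rw [Finset.sum_range_succ']; simp [Nat.succ_sub_succ]; ring
      rw [this] at hy0
      have h2 : (y:ℤ) ∣ ∑ i ∈ Finset.range (n+1), δ (i+1) * (x:ℤ)^(n-i) * (y:ℤ)^(i+1) :=
        Finset.dvd_sum (fun i _ => by
          exact Dvd.dvd.mul_left (dvd_pow_self _ (Nat.succ_ne_zero i)) _)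
      exact (dvd_add_right h2).mp (by rwa [add_comm] at hy0)
    have hδ0 : δ 0 = 0 := by
      have : (y:ℤ) ∣ δ 0 := (hcopZ.pow_right).dvd_of_dvd_mul_right hd0
      exact Int.eq_zero_of_abs_lt_dvd this (hδ 0)
    have hsplit : ∑ i ∈ Finset.range (n+2), δ i * (x:ℤ)^(n+1-i) * (y:ℤ)^i
        = (y:ℤ) * ∑ i ∈ Finset.range (n+1), δ (i+1) * (x:ℤ)^(n-i) * (y:ℤ)^i := by
      rw [Finset.sum_range_succ', hδ0, Finset.mul_sum]
      simp [Nat.succ_sub_succ]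
      ring_nf
      apply Finset.sum_congr rfl
      intro i _
      ring
    rw [hsplit] at hdvd ⊢
    have hyne : (y:ℤ) ≠ 0 := by positivity
    have hdvd' : (y:ℤ)^(n+1) ∣ ∑ i ∈ Finset.range (n+1), δ (i+1) * (x:ℤ)^(n-i) * (y:ℤ)^i := by
      have := hdvd
      rw [pow_succ'] at this
      exact (mul_dvd_mul_iff_left hyne).mp this
    rw [ih (fun i => δ (i+1)) (fun i => hδ (i+1)) hdvd', mul_zero]

lemma fin_sum_eq_range (n x y : ℕ) (c : Fin (n+1) → ℕ) :
    (∑ k : Fin (n + 1), (c k : ℤ) * (x : ℤ) ^ (n - (k : ℕ)) * (y : ℤ) ^ (k : ℕ))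
      = ∑ i ∈ Finset.range (n+1),
          ((if h : i < n+1 then (c ⟨i, h⟩ : ℤ) else 0) * (x:ℤ)^(n-i) * (y:ℤ)^i) := by
  rw [← Fin.sum_univ_eq_sum_range (fun i =>
      (if h : i < n+1 then (c ⟨i, h⟩ : ℤ) else 0) * (x:ℤ)^(n-i) * (y:ℤ)^i)]
  apply Finset.sum_congr rfl
  intro k _
  simp [k.isLt]

lemma stable_m_unique (n x y : ℕ) (hxy : 1 < y) (hcop : Nat.Coprime x y)
    (v : ℤ) (c c' : Fin (n+1) → ℕ) (m m' : ℤ)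
    (h : IsStableDecomp n x y v c m) (h' : IsStableDecomp n x y v c' m') : m = m' := by
  obtain ⟨hc, hv⟩ := h
  obtain ⟨hc', hv'⟩ := h'
  set δ : ℕ → ℤ := fun i => (if h : i < n+1 then (c ⟨i, h⟩ : ℤ) else 0)
      - (if h : i < n+1 then (c' ⟨i, h⟩ : ℤ) else 0) with hδdef
  have hδ : ∀ i, |δ i| < y := by
    intro i
    simp only [hδdef]
    split
    · next hi =>
      have h1 := hc ⟨i, hi⟩
      have h2 := hc' ⟨i, hi⟩
      rw [abs_sub_lt_iff]
      constructor <;> push_cast <;> omega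
    · rw [sub_zero, abs_zero]; exact_mod_cast Nat.lt_of_lt_of_le Nat.one_pos hxy.le
  have hsum : ∑ i ∈ Finset.range (n+1), δ i * (x:ℤ)^(n-i) * (y:ℤ)^i
      = (m' - m) * (y:ℤ)^(n+1) := by
    have e1 := fin_sum_eq_range n x y c
    have e2 := fin_sum_eq_range n x y c'
    have : (∑ k : Fin (n + 1), (c k : ℤ) * (x:ℤ) ^ (n - (k:ℕ)) * (y:ℤ) ^ (k:ℕ))
        - (∑ k : Fin (n + 1), (c' k : ℤ) * (x:ℤ) ^ (n - (k:ℕ)) * (y:ℤ) ^ (k:ℕ))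
        = (m' - m) * (y:ℤ)^(n+1) := by
      have := hv.symm.trans hv'
      linarith
    rw [e1, e2, ← Finset.sum_sub_distrib] at this
    rw [← this]
    apply Finset.sum_congr rfl
    intro i _
    simp only [hδdef]
    ring
  have hdvd : (y:ℤ)^(n+1) ∣ ∑ i ∈ Finset.range (n+1), δ i * (x:ℤ)^(n-i) * (y:ℤ)^i := by
    rw [hsum]; exact Dvd.intro_left _ rfl
  have := key_zero x y hcop hxy n δ hδ hdvd
  rw [this] at hsum
  have hyne : (0:ℤ) < (y:ℤ)^(n+1) := by positivity
  have : m' - m = 0 := by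
    rcases mul_eq_zero.mp hsum.symm with h | h
    · exact h
    · exact absurd h (by positivity)
  linarith

/-- Carry sequence for adding 1 to every digit (with carry worth `x`). -/
def carrySeq (x y : ℕ) (d : ℕ → ℕ) : ℕ → ℕ
  | 0 => 0
  | i + 1 => if y ≤ d i + 1 + x * carrySeq x y d i then 1 else 0

lemma carrySeq_le_one (x y : ℕ) (d : ℕ → ℕ) : ∀ i, carrySeq x y d i ≤ 1
  | 0 => by simp [carrySeq]
  | i + 1 => by unfold carrySeq; split <;> omega

lemma add_decomp (n x y : ℕ) (hx : 0 < x) (hxy : x < y) (d : ℕ → ℕ)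
    (hd : ∀ i, i ≤ n → d i < y) :
    ∃ (e : ℕ → ℕ) (m : ℕ),
      (∀ i, i ≤ n → e i < y) ∧
      (∑ i ∈ Finset.range (n+1), (d i + 1) * x^(n-i) * y^i)
        = (∑ i ∈ Finset.range (n+1), e i * x^(n-i) * y^i) + m * y^(n+1) := by
  set cr := carrySeq x y d with hcr
  set e : ℕ → ℕ := fun i => d i + 1 + x * cr i - y * cr (i+1) with he
  have hdig : ∀ i, e i + y * cr (i+1) = d i + 1 + x * cr i := by
    intro i
    have : cr (i+1) = if y ≤ d i + 1 + x * cr i then 1 else 0 := rfl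
    simp only [he]
    split at this <;> rw [this] <;> omega
  have hebound : ∀ i, i ≤ n → e i < y := by
    intro i hi
    have h1 := hdig i
    have h2 := carrySeq_le_one x y d (i+1)
    have h3 := carrySeq_le_one x y d i
    have h4 := hd i hi
    rw [← hcr] at h2 h3
    have : cr (i+1) = if y ≤ d i + 1 + x * cr i then 1 else 0 := rfl
    rcases Nat.le_one_iff_eq_zero_or_eq_one.mp h3 with h3' | h3' <;>
      rw [h3'] at h1 this <;> split at this <;> rw [this] at h1 <;> omega
  have hinv : ∀ j, j ≤ n + 1 →
      (∑ i ∈ Finset.range j, (d i + 1) * x^(n-i) * y^i)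
        = (∑ i ∈ Finset.range j, e i * x^(n-i) * y^i) + cr j * x^(n+1-j) * y^j := by
    intro j
    induction j with
    | zero => simp [hcr, carrySeq]
    | succ j ih =>
      intro hj
      have hj' : j ≤ n := by omega
      rw [Finset.sum_range_succ, Finset.sum_range_succ, ih (by omega)]
      have hxp : x^(n+1-j) = x * x^(n-j) := by
        rw [show n+1-j = (n-j)+1 by omega, pow_succ]; ring
      have hyp : y^(j+1) = y * y^j := by rw [pow_succ]; ring
      have key : cr j * x^(n+1-j) * y^j + (d j + 1) * x^(n-j) * y^j
          = e j * x^(n-j) * y^j + cr (j+1) * x^(n+1-(j+1)) * y^(j+1) := by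
        rw [hxp, hyp, show n+1-(j+1) = n-j by omega]
        have h := hdig j
        calc cr j * (x * x^(n-j)) * y^j + (d j + 1) * x^(n-j) * y^j
            = (d j + 1 + x * cr j) * (x^(n-j) * y^j) := by ring
          _ = (e j + y * cr (j+1)) * (x^(n-j) * y^j) := by rw [h]
          _ = e j * x^(n-j) * y^j + cr (j+1) * x^(n-j) * (y * y^j) := by ring
      omega
  refine ⟨e, cr (n+1), hebound, ?_⟩
  have := hinv (n+1) le_rfl
  rw [this, Nat.sub_self, pow_zero]
  ring

/-- Borrow sequence for subtracting 1 from every digit (borrow worth `x`). -/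
def borSeq (x y : ℕ) (d : ℕ → ℕ) : ℕ → ℕ
  | 0 => 0
  | i + 1 => if d i < 1 + x * borSeq x y d i then 1 else 0

lemma borSeq_le_one (x y : ℕ) (d : ℕ → ℕ) : ∀ i, borSeq x y d i ≤ 1
  | 0 => by simp [borSeq]
  | i + 1 => by unfold borSeq; split <;> omega

lemma sub_decomp (n x y k : ℕ) (hx : 0 < x) (hxy : x < y) (hk : k ≤ n) (d : ℕ → ℕ)
    (hd : ∀ i, i ≤ n → d i < y) (hdk : d k = 0)
    (hda : ∀ i, k < i → i ≤ n → d i ≤ x) :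
    ∃ (e : ℕ → ℕ),
      (∀ i, i ≤ n → e i < y) ∧
      (∑ i ∈ Finset.range (n+1), d i * x^(n-i) * y^i) + y^(n+1)
        = ∑ i ∈ Finset.range (n+1), (e i + 1) * x^(n-i) * y^i := by
  set b := borSeq x y d with hb
  set e : ℕ → ℕ := fun i => d i + y * b (i+1) - (1 + x * b i) with he
  have hstep : ∀ i, b (i+1) = if d i < 1 + x * b i then 1 else 0 := fun i => rfl
  have hdig : ∀ i, e i + 1 + x * b i = d i + y * b (i+1) := by
    intro i
    have h3 := borSeq_le_one x y d i
    rw [← hb] at h3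
    have hs := hstep i
    simp only [he]
    rcases Nat.le_one_iff_eq_zero_or_eq_one.mp h3 with h3' | h3' <;>
      rw [h3'] at hs ⊢ <;> split at hs <;> rw [hs] <;> omega
  have hebound : ∀ i, i ≤ n → e i < y := by
    intro i hi
    have h1 := hdig i
    have h3 := borSeq_le_one x y d i
    rw [← hb] at h3
    have hs := hstep i
    have h4 := hd i hi
    rcases Nat.le_one_iff_eq_zero_or_eq_one.mp h3 with h3' | h3' <;>
      rw [h3'] at h1 hs <;> split at hs <;> rw [hs] at h1 <;> omega
  have hbone : ∀ j, k < j → j ≤ n + 1 → b j = 1 := by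
    intro j
    induction j with
    | zero => omega
    | succ j ih =>
      intro hkj hjn
      rcases Nat.lt_succ_iff_lt_or_eq.mp hkj with h | h
      · have hbj := ih h (by omega)
        rw [hstep j, hbj]
        have := hda j h (by omega)
        split <;> omega
      · rw [hstep j, ← h, hdk]
        split <;> omega
  have hinv : ∀ j, j ≤ n + 1 →
      (∑ i ∈ Finset.range j, d i * x^(n-i) * y^i) + b j * x^(n+1-j) * y^j
        = ∑ i ∈ Finset.range j, (e i + 1) * x^(n-i) * y^i := by
    intro j
    induction j with
    | zero => simp [hb, borSeq]
    | succ j ih =>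
      intro hj
      have hj' : j ≤ n := by omega
      rw [Finset.sum_range_succ, Finset.sum_range_succ, ← ih (by omega)]
      have hxp : x^(n+1-j) = x * x^(n-j) := by
        rw [show n+1-j = (n-j)+1 by omega, pow_succ]; ring
      have key : d j * x^(n-j) * y^j + b (j+1) * x^(n+1-(j+1)) * y^(j+1)
          = (e j + 1) * x^(n-j) * y^j + b j * x^(n+1-j) * y^j := by
        rw [hxp, show n+1-(j+1) = n-j by omega, pow_succ]
        have h := hdig j
        calc d j * x^(n-j) * y^j + b (j+1) * x^(n-j) * (y^j * y)
            = (d j + y * b (j+1)) * (x^(n-j) * y^j) := by ring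
          _ = (e j + 1 + x * b j) * (x^(n-j) * y^j) := by rw [h]
          _ = (e j + 1) * x^(n-j) * y^j + b j * (x * x^(n-j)) * y^j := by ring
      omega
  refine ⟨e, hebound, ?_⟩
  have h1 := hinv (n+1) le_rfl
  have h2 := hbone (n+1) (by omega) le_rfl
  rw [h2, Nat.sub_self, pow_zero] at h1
  calc (∑ i ∈ Finset.range (n+1), d i * x^(n-i) * y^i) + y^(n+1)
      = (∑ i ∈ Finset.range (n+1), d i * x^(n-i) * y^i) + 1 * 1 * y^(n+1) := by ring
    _ = _ := h1

/-- Cast a natural range-sum decomposition to the `Fin` sum of `IsStableDecomp`. -/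
lemma cast_sum_eq (n x y : ℕ) (e : ℕ → ℕ) :
    (∑ k : Fin (n+1), ((e (k : ℕ) : ℤ)) * (x:ℤ)^(n-(k:ℕ)) * (y:ℤ)^(k:ℕ))
      = ((∑ i ∈ Finset.range (n+1), e i * x^(n-i) * y^i : ℕ) : ℤ) := by
  push_cast
  exact Fin.sum_univ_eq_sum_range (fun i => ((e i : ℤ)) * (x:ℤ)^(n-i) * (y:ℤ)^i) (n+1)

/-- `tupleVal` as a range sum over the extended digit function. -/
lemma tupleVal_eq_range (n x y : ℕ) (dd : Fin (n+2) → ℕ) :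
    tupleVal n x y dd
      = ∑ i ∈ Finset.range (n+1),
          (fun i => if h : i < n+1 then dd (Fin.castSucc ⟨i, h⟩) else 0) i
            * x^(n-i) * y^i := by
  rw [tupleVal, ← Fin.sum_univ_eq_sum_range]
  apply Finset.sum_congr rfl
  intro k _
  simp [k.isLt]

end Statement8Aux

/-- Let `v` be an integer. (i) If `m(v) < 0`, then `v − F ∉ G`.
(ii) If `m(v) ≥ 0`, then `v + F ∉ G`. -/
theorem not_mem_G_of_stable_m
    (n x y : ℕ) (hn : 1 ≤ n) (hx : 0 < x) (hxy : x < y) (hcop : Nat.Coprime x y)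
    (v : ℤ) (c : Fin (n + 1) → ℕ) (m : ℤ) (hdec : IsStableDecomp n x y v c m) :
    (m < 0 → v - (Fval n x y : ℤ) ∉ Gset n x y) ∧
    (0 ≤ m → v + (Fval n x y : ℤ) ∉ Gset n x y) := by
  have hy1 : 1 < y := lt_of_le_of_lt hx hxy
  have hFcast : ((Fval n x y : ℕ) : ℤ)
      = ((∑ i ∈ Finset.range (n+1), x^(n-i) * y^i : ℕ) : ℤ) := by rfl
  constructor
  · -- part (i)
    rintro hm ⟨dd, ⟨hlast, k, hlt, hk0, hgt⟩, hval⟩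
    set d : ℕ → ℕ := fun i => if h : i < n+1 then dd (Fin.castSucc ⟨i, h⟩) else 0 with hdmk
    have hdb : ∀ i, i ≤ n → d i < y := by
      intro i hi
      simp only [hdmk]
      rw [dif_pos (by omega : i < n+1)]
      rcases lt_trichotomy i (k : ℕ) with h | h | h
      · exact hlt _ (by simpa using h)
      · have : Fin.castSucc (⟨i, by omega⟩ : Fin (n+1)) = Fin.castSucc k :=
          Fin.ext (by simpa using h)
        rw [this]; omega
      · have := hgt (Fin.castSucc (⟨i, by omega⟩ : Fin (n+1))) (by simpa using h)
          (by simpa using hi)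
        omega
    obtain ⟨e, m', heb, heq⟩ := add_decomp n x y hx hxy d hdb
    -- tupleVal dd + Fval = Σ e + m' y^{n+1} in ℕ
    have hNat : tupleVal n x y dd + Fval n x y
        = (∑ i ∈ Finset.range (n+1), e i * x^(n-i) * y^i) + m' * y^(n+1) := by
      rw [tupleVal_eq_range, Fval, ← heq, ← Finset.sum_add_distrib]
      apply Finset.sum_congr rfl
      intro i _
      ring
    -- v = Σ e + m' y^{n+1} in ℤ
    have hvz : v = ((∑ i ∈ Finset.range (n+1), e i * x^(n-i) * y^i : ℕ) : ℤ)
        + (m' : ℤ) * (y:ℤ)^(n+1) := by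
      have : v = (tupleVal n x y dd : ℤ) + (Fval n x y : ℤ) := by
        rw [hval]; ring
      rw [this, ← Nat.cast_add, hNat]
      push_cast
      ring
    have hsd : IsStableDecomp n x y v (fun i : Fin (n+1) => e (i : ℕ)) (m' : ℤ) := by
      refine ⟨fun i => heb _ (by omega), ?_⟩
      rw [cast_sum_eq]
      exact_mod_cast hvz
    have := stable_m_unique n x y hy1 hcop v c _ m (m' : ℤ) hdec hsd
    omega
  · -- part (ii)
    rintro hm ⟨dd, ⟨hlast, k, hlt, hk0, hgt⟩, hval⟩
    set d : ℕ → ℕ := fun i => if h : i < n+1 then dd (Fin.castSucc ⟨i, h⟩) else 0 with hdmk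
    have hdb : ∀ i, i ≤ n → d i < y := by
      intro i hi
      simp only [hdmk]
      rw [dif_pos (by omega : i < n+1)]
      rcases lt_trichotomy i (k : ℕ) with h | h | h
      · exact hlt _ (by simpa using h)
      · have : Fin.castSucc (⟨i, by omega⟩ : Fin (n+1)) = Fin.castSucc k :=
          Fin.ext (by simpa using h)
        rw [this]; omega
      · have := hgt (Fin.castSucc (⟨i, by omega⟩ : Fin (n+1))) (by simpa using h)
          (by simpa using hi)
        omega
    have hdk : d (k : ℕ) = 0 := by
      simp only [hdmk]
      rw [dif_pos (by omega : (k:ℕ) < n+1)]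
      have : Fin.castSucc (⟨(k:ℕ), by omega⟩ : Fin (n+1)) = Fin.castSucc k :=
        Fin.ext (by simp)
      rw [this]; exact hk0
    have hda : ∀ i, (k : ℕ) < i → i ≤ n → d i ≤ x := by
      intro i h hi
      simp only [hdmk]
      rw [dif_pos (by omega : i < n+1)]
      exact (hgt (Fin.castSucc (⟨i, by omega⟩ : Fin (n+1))) (by simpa using h)
        (by simpa using hi)).2
    obtain ⟨e, heb, heq⟩ := sub_decomp n x y (k : ℕ) hx hxy (by omega) d hdb hdk hda
    have hNat : tupleVal n x y dd + y^(n+1)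
        = (∑ i ∈ Finset.range (n+1), e i * x^(n-i) * y^i) + Fval n x y := by
      rw [tupleVal_eq_range, Fval, heq, ← Finset.sum_add_distrib]
      apply Finset.sum_congr rfl
      intro i _
      ring
    have hvz : v = ((∑ i ∈ Finset.range (n+1), e i * x^(n-i) * y^i : ℕ) : ℤ)
        + (-1 : ℤ) * (y:ℤ)^(n+1) := by
      have h1 : v + (Fval n x y : ℤ) = (tupleVal n x y dd : ℤ) := hval.symm
      have h2 : (tupleVal n x y dd : ℤ) + (y:ℤ)^(n+1)
          = ((∑ i ∈ Finset.range (n+1), e i * x^(n-i) * y^i : ℕ) : ℤ)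
            + (Fval n x y : ℤ) := by exact_mod_cast congrArg (Nat.cast : ℕ → ℤ) hNat
      linarith
    have hsd : IsStableDecomp n x y v (fun i : Fin (n+1) => e (i : ℕ)) (-1 : ℤ) := by
      refine ⟨fun i => heb _ (by omega), ?_⟩
      rw [cast_sum_eq]
      exact hvz
    have := stable_m_unique n x y hy1 hcop v c _ m (-1 : ℤ) hdec hsd
    omega
end

section
/- For every v ∈ {0,…,F−1} there is exactly one natural number k such that v + k·F ∈ G; moreover, this k is the smallest natural number with m(v + k·F) ≥ 0. -/
open Finset

namespace S9

/-! ### Auxiliary development -/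

def PatN (n x : ℕ) (c : ℕ → ℕ) : Prop :=
  ∃ k, k ≤ n ∧ c k = 0 ∧ ∀ i, k < i → i ≤ n → 1 ≤ c i ∧ c i ≤ x

def SD (n x y : ℕ) (w : ℤ) (c : ℕ → ℕ) (m : ℤ) : Prop :=
  (∀ k, k ≤ n → c k < y) ∧
    w = (∑ k ∈ Finset.range (n+1), (c k : ℤ) * (x:ℤ)^(n-k) * (y:ℤ)^k) + m * (y:ℤ)^(n+1)

lemma patN_congr {n x : ℕ} {c c' : ℕ → ℕ} (h : ∀ k, k ≤ n → c k = c' k) :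
    PatN n x c → PatN n x c' := by
  rintro ⟨k, hk, h0, ht⟩
  exact ⟨k, hk, (h k hk) ▸ h0, fun i h1 h2 => (h i h2) ▸ ht i h1 h2⟩

/-! ### carries -/

def carry (x y : ℕ) (c : ℕ → ℕ) : ℕ → ℕ
  | 0 => 0
  | k+1 => if y ≤ c k + 1 + x * carry x y c k then 1 else 0

def newDig (x y : ℕ) (c : ℕ → ℕ) (k : ℕ) : ℕ :=
  c k + 1 + x * carry x y c k - y * carry x y c (k+1)

lemma carry_le_one (x y : ℕ) (c : ℕ → ℕ) (k : ℕ) : carry x y c k ≤ 1 := by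
  cases k with
  | zero => simp [carry]
  | succ k => rw [carry]; split <;> simp

lemma carry_succ_eq_one (x y : ℕ) (c : ℕ → ℕ) (k : ℕ) :
    carry x y c (k+1) = 1 ↔ y ≤ c k + 1 + x * carry x y c k := by
  rw [carry]; split <;> simp_all

lemma carry_succ_eq_zero (x y : ℕ) (c : ℕ → ℕ) (k : ℕ) :
    carry x y c (k+1) = 0 ↔ c k + 1 + x * carry x y c k < y := by
  rw [carry]; split <;> simp_all

lemma newDig_sub_ok (x y : ℕ) (c : ℕ → ℕ) (k : ℕ) :
    y * carry x y c (k+1) ≤ c k + 1 + x * carry x y c k := by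
  rcases Nat.le_one_iff_eq_zero_or_eq_one.1 (carry_le_one x y c (k+1)) with h | h
  · simp [h]
  · rw [h, mul_one]; exact (carry_succ_eq_one x y c k).1 h

lemma newDig_cast (x y : ℕ) (c : ℕ → ℕ) (k : ℕ) :
    (newDig x y c k : ℤ) =
      (c k : ℤ) + 1 + (x:ℤ) * carry x y c k - (y:ℤ) * carry x y c (k+1) := by
  have h := newDig_sub_ok x y c k
  unfold newDig
  push_cast [h]
  ring

lemma newDig_lt (x y : ℕ) (hxy : x < y) (c : ℕ → ℕ) (k : ℕ) (hck : c k < y) :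
    newDig x y c k < y := by
  have hle := carry_le_one x y c k
  rcases Nat.le_one_iff_eq_zero_or_eq_one.1 (carry_le_one x y c (k+1)) with h | h
  · have := (carry_succ_eq_zero x y c k).1 h
    unfold newDig; omega
  · have h2 := (carry_succ_eq_one x y c k).1 h
    have h3 : x * carry x y c k ≤ x * 1 := Nat.mul_le_mul_left x hle
    unfold newDig; rw [h]; omega

lemma newDig_le_x (x y : ℕ) (c : ℕ → ℕ) (k : ℕ) (hck : c k < y)
    (h1 : carry x y c (k+1) = 1) : newDig x y c k ≤ x * carry x y c k := by
  have := (carry_succ_eq_one x y c k).1 h1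
  have hle := carry_le_one x y c k
  unfold newDig; rw [h1]
  rcases Nat.le_one_iff_eq_zero_or_eq_one.1 hle with h | h <;> rw [h] <;> omega

/-- key algebraic identity. -/
lemma sum_newDig (n x y : ℕ) (c : ℕ → ℕ) :
    (∑ k ∈ range (n+1), (newDig x y c k : ℤ) * (x:ℤ)^(n-k) * (y:ℤ)^k)
      = (∑ k ∈ range (n+1), (c k : ℤ) * (x:ℤ)^(n-k) * (y:ℤ)^k)
        + (Fval n x y : ℤ) - (carry x y c (n+1) : ℤ) * (y:ℤ)^(n+1) := by
  have hF : (Fval n x y : ℤ) = ∑ k ∈ range (n+1), (x:ℤ)^(n-k) * (y:ℤ)^k := by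
    unfold Fval; push_cast; rfl
  have h1 : (∑ k ∈ range (n+1), (newDig x y c k : ℤ) * (x:ℤ)^(n-k) * (y:ℤ)^k)
      = (∑ k ∈ range (n+1), ((c k : ℤ) + 1) * (x:ℤ)^(n-k) * (y:ℤ)^k)
        + ((∑ k ∈ range (n+1), ((x:ℤ) * (carry x y c k)) * (x:ℤ)^(n-k) * (y:ℤ)^k)
          - (∑ k ∈ range (n+1), ((y:ℤ) * (carry x y c (k+1))) * (x:ℤ)^(n-k) * (y:ℤ)^k)) := by
    rw [← Finset.sum_sub_distrib, ← Finset.sum_add_distrib]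
    refine Finset.sum_congr rfl fun k _ => ?_
    rw [newDig_cast]; ring
  have h2 : (∑ k ∈ range (n+1), ((x:ℤ) * (carry x y c k)) * (x:ℤ)^(n-k) * (y:ℤ)^k)
      = ∑ i ∈ range n, ((x:ℤ) * (carry x y c (i+1))) * (x:ℤ)^(n-(i+1)) * (y:ℤ)^(i+1) := by
    rw [Finset.sum_range_succ']
    simp [carry]
  have h3 : (∑ k ∈ range (n+1), ((y:ℤ) * (carry x y c (k+1))) * (x:ℤ)^(n-k) * (y:ℤ)^k)
      = (∑ i ∈ range n, ((y:ℤ) * (carry x y c (i+1))) * (x:ℤ)^(n-i) * (y:ℤ)^i)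
        + ((y:ℤ) * (carry x y c (n+1))) * (x:ℤ)^(n-n) * (y:ℤ)^n := by
    rw [Finset.sum_range_succ]
  have h4 : ∀ i ∈ range n,
      ((x:ℤ) * (carry x y c (i+1))) * (x:ℤ)^(n-(i+1)) * (y:ℤ)^(i+1)
        = ((y:ℤ) * (carry x y c (i+1))) * (x:ℤ)^(n-i) * (y:ℤ)^i := by
    intro i hi
    rw [Finset.mem_range] at hi
    have : n - i = (n - (i+1)) + 1 := by omega
    rw [this, pow_succ, pow_succ]
    ring
  rw [h1, h2, h3, Finset.sum_congr rfl h4, hF, Nat.sub_self, pow_zero]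
  have h5 : (∑ k ∈ range (n+1), ((c k : ℤ) + 1) * (x:ℤ)^(n-k) * (y:ℤ)^k)
      = (∑ k ∈ range (n+1), (c k : ℤ) * (x:ℤ)^(n-k) * (y:ℤ)^k)
        + ∑ k ∈ range (n+1), (x:ℤ)^(n-k) * (y:ℤ)^k := by
    rw [← Finset.sum_add_distrib]; exact Finset.sum_congr rfl fun k _ => by ring
  rw [h5, pow_succ]
  ring


lemma pat_of_carry (n x y : ℕ) (c : ℕ → ℕ)
    (hc : ∀ k, k ≤ n → c k < y) (hcar : carry x y c (n+1) = 1) :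
    PatN n x (newDig x y c) := by
  classical
  have hQn : ∀ j, n ≤ j → j ≤ n → carry x y c (j+1) = 1 := by
    intro j h1 h2
    have : j = n := le_antisymm h2 h1
    rw [this]; exact hcar
  have hex : ∃ k, ∀ j, k ≤ j → j ≤ n → carry x y c (j+1) = 1 := ⟨n, hQn⟩
  set k0 := Nat.find hex with hk0
  have hQ : ∀ j, k0 ≤ j → j ≤ n → carry x y c (j+1) = 1 := Nat.find_spec hex
  have hk0n : k0 ≤ n := Nat.find_min' hex hQn
  have hBp : carry x y c k0 = 0 := by
    match hk00 : k0 with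
    | 0 => rfl
    | j+1 =>
      have hmin := Nat.find_min hex (m := j) (by omega)
      push_neg at hmin
      obtain ⟨j', hj1, hj2, hj3⟩ := hmin
      have hj'j : j' = j := by
        by_contra hne
        exact hj3 (hQ j' (by omega) hj2)
      subst hj'j
      have := carry_le_one x y c (j'+1)
      omega
  have he0 : newDig x y c k0 = 0 := by
    have h1 : carry x y c (k0+1) = 1 := hQ k0 le_rfl hk0n
    have h2 := (carry_succ_eq_one x y c k0).1 h1
    have h3 := hc k0 hk0n
    unfold newDig; rw [hBp, h1] at *; omega
  have htail : ∀ i, k0 < i → i ≤ n → newDig x y c i ≤ x := by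
    intro i h1 h2
    have hBi : carry x y c (i+1) = 1 := hQ i (le_of_lt h1) h2
    have hBim : carry x y c i = 1 := by
      match hi : i with
      | 0 => omega
      | j+1 => exact hQ j (by omega) (by omega)
    have h3 := newDig_le_x x y c i (hc i h2) hBi
    rw [hBim] at h3; omega
  set P := fun i => newDig x y c i = 0 ∧ k0 ≤ i with hP
  set k1 := Nat.findGreatest P n with hk1def
  have hP0 : P k0 := ⟨he0, le_rfl⟩
  have hk1 : P k1 := Nat.findGreatest_spec hk0n hP0
  have hk1n : k1 ≤ n := Nat.findGreatest_le n
  refine ⟨k1, hk1n, hk1.1, ?_⟩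
  intro i h1 h2
  have hxle : newDig x y c i ≤ x := htail i (lt_of_le_of_lt hk1.2 h1) h2
  have hne : newDig x y c i ≠ 0 := by
    intro h0
    have := Nat.le_findGreatest h2 (show P i from ⟨h0, le_trans hk1.2 (le_of_lt h1)⟩)
    omega
  omega

lemma not_pat_of_no_carry (n x y : ℕ) (c : ℕ → ℕ) (hc : ∀ k, k ≤ n → c k < y)
    (hcar : carry x y c (n+1) = 0) : ¬ PatN n x (newDig x y c) := by
  classical
  rintro ⟨k, hkn, h0, ht⟩
  have hBk : carry x y c (k+1) = 1 := by
    by_contra h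
    have h' : carry x y c (k+1) = 0 := by have := carry_le_one x y c (k+1); omega
    unfold newDig at h0; rw [h'] at h0; omega
  have hkltn : k < n := by
    rcases eq_or_lt_of_le hkn with h | h
    · exfalso; rw [h] at hBk; rw [hcar] at hBk; omega
    · exact h
  have hex : ∃ i, k < i ∧ i ≤ n ∧ carry x y c (i+1) = 0 := ⟨n, hkltn, le_rfl, hcar⟩
  set p := Nat.find hex with hpdef
  obtain ⟨hp1, hp2, hp3⟩ := Nat.find_spec hex
  have hprev : carry x y c p = 1 := by
    rcases eq_or_lt_of_le (show k + 1 ≤ p from hp1) with h | h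
    · rw [← h]; exact hBk
    · have hmin := Nat.find_min hex (m := p - 1) (by omega)
      push_neg at hmin
      have h1 := hmin (by omega) (by omega)
      have h2 : p - 1 + 1 = p := by omega
      rw [h2] at h1
      have := carry_le_one x y c p
      omega
  have hle := ht p hp1 hp2
  unfold newDig at hle
  rw [hp3, hprev] at hle
  omega

lemma SD_step (n x y : ℕ) (hxy : x < y) {w : ℤ} {c : ℕ → ℕ} {m : ℤ}
    (h : SD n x y w c m) :
    SD n x y (w + (Fval n x y : ℤ)) (newDig x y c) (m + carry x y c (n+1)) := by
  obtain ⟨hb, he⟩ := h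
  refine ⟨fun k hk => newDig_lt x y hxy c k (hb k hk), ?_⟩
  rw [sum_newDig n x y c, he]
  ring


lemma uniq_core (x y : ℕ) (hy : 0 < y) (hcop : Nat.Coprime x y) :
    ∀ (N : ℕ) (d : ℕ → ℤ) (e : ℤ), (∀ k, k ≤ N → |d k| < y) →
      (∑ k ∈ range (N+1), d k * (x:ℤ)^(N-k) * (y:ℤ)^k) + e * (y:ℤ)^(N+1) = 0 →
      (∀ k, k ≤ N → d k = 0) ∧ e = 0 := by
  have hy' : (y:ℤ) ≠ 0 := by exact_mod_cast hy.ne'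
  intro N
  induction N with
  | zero =>
    intro d e hb he
    simp only [Finset.sum_range_succ, Finset.sum_range_zero, zero_add, Nat.sub_self,
      pow_zero, pow_one, mul_one] at he
    have hdvd : (y:ℤ) ∣ d 0 := ⟨-e, by linarith⟩
    have hd0 : d 0 = 0 := Int.eq_zero_of_abs_lt_dvd hdvd (hb 0 (Nat.zero_le _))
    have he0 : e = 0 := by
      rcases mul_eq_zero.1 (show e * (y:ℤ) = 0 by linarith) with h | h
      · exact h
      · exact absurd h hy'
    exact ⟨fun k hk => by rw [Nat.le_zero.1 hk]; exact hd0, he0⟩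
  | succ N ih =>
    intro d e hb he
    rw [Finset.sum_range_succ'] at he
    have hred : ∀ i ∈ range (N+1),
        d (i+1) * (x:ℤ)^(N+1-(i+1)) * (y:ℤ)^(i+1)
          = (d (i+1) * (x:ℤ)^(N-i) * (y:ℤ)^i) * y := by
      intro i _
      rw [Nat.succ_sub_succ, pow_succ]
      ring
    rw [Finset.sum_congr rfl hred, ← Finset.sum_mul] at he
    set S := ∑ i ∈ range (N+1), d (i+1) * (x:ℤ)^(N-i) * (y:ℤ)^i with hS
    have hdvd : (y:ℤ) ∣ d 0 * (x:ℤ)^(N+1) := by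
      refine ⟨-(S + e * (y:ℤ)^(N+1)), ?_⟩
      have hp : (y:ℤ)^(N+2) = (y:ℤ)^(N+1) * y := pow_succ _ _
      simp only [Nat.sub_zero, pow_zero, mul_one] at he
      rw [hp] at he
      linarith
    have hcop' : IsCoprime (y:ℤ) ((x:ℤ)^(N+1)) :=
      (Nat.isCoprime_iff_coprime.2 hcop.symm).pow_right
    have hd0 : d 0 = 0 :=
      Int.eq_zero_of_abs_lt_dvd (hcop'.dvd_of_dvd_mul_right hdvd) (hb 0 (Nat.zero_le _))
    have hin : S + e * (y:ℤ)^(N+1) = 0 := by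
      have h1 : (S + e * (y:ℤ)^(N+1)) * y = 0 := by
        have hp : (y:ℤ)^(N+2) = (y:ℤ)^(N+1) * y := pow_succ _ _
        simp only [Nat.sub_zero, pow_zero, mul_one] at he
        rw [hp] at he
        rw [hd0] at he
        linarith
      rcases mul_eq_zero.1 h1 with h | h
      · exact h
      · exact absurd h hy'
    obtain ⟨h1, h2⟩ := ih (fun i => d (i+1)) e (fun k hk => hb (k+1) (by omega)) hin
    refine ⟨fun k hk => ?_, h2⟩
    match k with
    | 0 => exact hd0
    | j+1 => exact h1 j (by omega)

lemma exists_SD_aux (x y : ℕ) (hy : 0 < y) (hcop : Nat.Coprime x y) :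
    ∀ (N : ℕ) (w : ℤ), ∃ (c : ℕ → ℕ) (m : ℤ), (∀ k, k ≤ N → c k < y) ∧
      w = (∑ k ∈ range (N+1), (c k : ℤ) * (x:ℤ)^(N-k) * (y:ℤ)^k) + m * (y:ℤ)^(N+1) := by
  have hy' : (0:ℤ) < y := by exact_mod_cast hy
  obtain ⟨u, v, huv⟩ := Nat.isCoprime_iff_coprime.2 hcop
  intro N
  induction N with
  | zero =>
    intro w
    refine ⟨fun _ => (w % y).toNat, w / y, ?_, ?_⟩
    · intro k _
      have h1 := Int.emod_nonneg w hy'.ne'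
      have h2 := Int.emod_lt_of_pos w hy'
      show (w % (y:ℤ)).toNat < y
      omega
    · simp only [Finset.sum_range_succ, Finset.sum_range_zero, zero_add, Nat.sub_self,
        pow_zero, pow_one, mul_one]
      have h1 := Int.emod_nonneg w hy'.ne'
      rw [Int.toNat_of_nonneg h1]
      have := Int.emod_add_mul_ediv w y
      linarith
  | succ N ih =>
    intro w
    set r : ℤ := (w * u^(N+1)) % y with hrdef
    have hr0 : 0 ≤ r := Int.emod_nonneg _ hy'.ne'
    have hry : r < y := Int.emod_lt_of_pos _ hy'
    set c0 : ℕ := r.toNat with hc0def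
    have hc0 : (c0:ℤ) = r := Int.toNat_of_nonneg hr0
    have hdvd : (y:ℤ) ∣ (w - (c0:ℤ) * (x:ℤ)^(N+1)) := by
      have h1 : (y:ℤ) ∣ (1 - (u*(x:ℤ))^(N+1)) := by
        have hdd : (y:ℤ) ∣ (1 - u*(x:ℤ)) := ⟨v, by linarith⟩
        have := sub_dvd_pow_sub_pow (1:ℤ) (u*(x:ℤ)) (N+1)
        rw [one_pow] at this
        exact dvd_trans hdd this
      have h2 : (y:ℤ) ∣ (w * u^(N+1) - r) := by
        refine ⟨(w * u^(N+1)) / y, ?_⟩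
        have := Int.mul_ediv_add_emod (w * u^(N+1)) (y:ℤ)
        linarith
      have heq : w - (c0:ℤ) * (x:ℤ)^(N+1)
          = w * (1 - (u*(x:ℤ))^(N+1)) + (w * u^(N+1) - r) * (x:ℤ)^(N+1) := by
        rw [hc0, mul_pow]
        ring
      rw [heq]
      exact dvd_add (h1.mul_left w) (h2.mul_right _)
    set w' : ℤ := (w - (c0:ℤ) * (x:ℤ)^(N+1)) / y with hw'def
    have hw' : w = (c0:ℤ) * (x:ℤ)^(N+1) + (y:ℤ) * w' := by
      rw [hw'def, Int.mul_ediv_cancel' hdvd]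
      ring
    obtain ⟨c', m, hb', he'⟩ := ih w'
    refine ⟨fun k => if k = 0 then c0 else c' (k-1), m, ?_, ?_⟩
    · intro k hk
      match k with
      | 0 =>
        have h : c0 < y := by omega
        simpa using h
      | j+1 =>
        have h := hb' j (by omega)
        simpa using h
    · rw [Finset.sum_range_succ']
      have hred : ∀ i ∈ range (N+1),
          ((if i+1 = 0 then c0 else c' (i+1-1) : ℕ) : ℤ) * (x:ℤ)^(N+1-(i+1)) * (y:ℤ)^(i+1)
            = ((c' i : ℤ) * (x:ℤ)^(N-i) * (y:ℤ)^i) * y := by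
        intro i _
        simp only [Nat.succ_ne_zero, if_false, Nat.add_sub_cancel]
        rw [Nat.succ_sub_succ, pow_succ]
        ring
      rw [Finset.sum_congr rfl hred, ← Finset.sum_mul]
      have hSS : (∑ i ∈ range (N+1), (c' i : ℤ) * (x:ℤ)^(N-i) * (y:ℤ)^i)
          = w' - m * (y:ℤ)^(N+1) := by linarith [he']
      rw [hSS]
      simp only [Nat.sub_zero, pow_zero, mul_one, if_pos rfl]
      rw [hw']
      have hp : (y:ℤ)^(N+2) = (y:ℤ)^(N+1) * y := pow_succ _ _
      rw [hp]
      simp only [ite_true]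
      ring

lemma exists_SD (n x y : ℕ) (hy : 0 < y) (hcop : Nat.Coprime x y) (w : ℤ) :
    ∃ (c : ℕ → ℕ) (m : ℤ), SD n x y w c m := by
  obtain ⟨c, m, h1, h2⟩ := exists_SD_aux x y hy hcop n w
  exact ⟨c, m, h1, h2⟩

lemma SD_unique (n x y : ℕ) (hy : 0 < y) (hcop : Nat.Coprime x y) {w : ℤ}
    {c c' : ℕ → ℕ} {m m' : ℤ} (h : SD n x y w c m) (h' : SD n x y w c' m') :
    (∀ k, k ≤ n → c k = c' k) ∧ m = m' := by
  obtain ⟨hb, he⟩ := h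
  obtain ⟨hb', he'⟩ := h'
  have hsum : (∑ k ∈ range (n+1), ((c k : ℤ) - (c' k : ℤ)) * (x:ℤ)^(n-k) * (y:ℤ)^k)
      + (m - m') * (y:ℤ)^(n+1) = 0 := by
    have : ∀ k ∈ range (n+1), ((c k : ℤ) - (c' k : ℤ)) * (x:ℤ)^(n-k) * (y:ℤ)^k
        = (c k : ℤ) * (x:ℤ)^(n-k) * (y:ℤ)^k - (c' k : ℤ) * (x:ℤ)^(n-k) * (y:ℤ)^k := by
      intro k _; ring
    rw [Finset.sum_congr rfl this, Finset.sum_sub_distrib]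
    linarith
  obtain ⟨h1, h2⟩ := uniq_core x y hy hcop n (fun k => (c k : ℤ) - (c' k : ℤ)) (m - m')
    (fun k hk => by
      have := hb k hk; have := hb' k hk
      rw [abs_lt]; constructor <;> [skip; skip] <;> push_cast <;> omega) hsum
  constructor
  · intro k hk
    have := h1 k hk
    omega
  · linarith [h2]


lemma Fval_pos (n x y : ℕ) (hx : 0 < x) (hy : 0 < y) : 0 < Fval n x y :=
  Finset.sum_pos (fun k _ => by positivity) Finset.nonempty_range_add_one

lemma Fval_succ (n x y : ℕ) : Fval (n+1) x y = x * Fval n x y + y^(n+1) := by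
  unfold Fval
  rw [Finset.sum_range_succ, Finset.mul_sum]
  congr 1
  · refine Finset.sum_congr rfl fun k hk => ?_
    rw [Finset.mem_range] at hk
    have h : n + 1 - k = (n - k) + 1 := by omega
    rw [h, pow_succ]
    ring
  · simp

lemma Fval_add_pow_le (n x y : ℕ) (hxy : x < y) : Fval n x y + x^(n+1) ≤ y^(n+1) := by
  induction n with
  | zero =>
    simp only [Fval, Finset.sum_range_succ, Finset.sum_range_zero, Nat.sub_self,
      pow_zero, pow_one, zero_add, mul_one, one_mul]
    omega
  | succ n ih =>
    rw [Fval_succ]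
    have h1 : x * (Fval n x y + x^(n+1)) ≤ x * y^(n+1) := Nat.mul_le_mul_left x ih
    have h1' : x * Fval n x y + x * x^(n+1) ≤ x * y^(n+1) := by
      rw [← Nat.mul_add]; exact h1
    have h2 : (x+1) * y^(n+1) ≤ y * y^(n+1) := Nat.mul_le_mul_right _ (by omega)
    have h2' : (x+1) * y^(n+1) = x * y^(n+1) + y^(n+1) := by ring
    have h3 : y^(n+1+1) = y * y^(n+1) := by ring
    have h0 : x^(n+1+1) = x * x^(n+1) := by ring
    linarith [h1', h2, h2', h3, h0]

/-- `Σ_{j<i} x^(n-j) y^j < x^(n-i+1) y^i` for `i ≤ n`. -/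
lemma wt_sum_lt (n x y : ℕ) (hx : 0 < x) (hxy : x < y) :
    ∀ i, i ≤ n → (∑ j ∈ Finset.range i, x^(n-j) * y^j) < x^(n-i+1) * y^i := by
  intro i
  induction i with
  | zero =>
    intro _
    simp only [Finset.range_zero, Finset.sum_empty, pow_zero, mul_one]
    positivity
  | succ i ih =>
    intro hi
    rw [Finset.sum_range_succ]
    have h1 := ih (by omega)
    have hcomb : x^(n-i+1)*y^i + x^(n-i)*y^i ≤ x^(n-(i+1)+1)*y^(i+1) := by
      have h2 : n - i = (n - (i+1)) + 1 := by omega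
      have h3 : x^(n-i+1)*y^i + x^(n-i)*y^i = x^(n-i) * y^i * (x + 1) := by
        rw [pow_succ]; ring
      have h4 : x^(n-(i+1)+1)*y^(i+1) = x^(n-i) * y^i * y := by
        rw [← h2, pow_succ]; ring
      rw [h3, h4]
      exact Nat.mul_le_mul_left _ (by omega)
    calc (∑ j ∈ Finset.range i, x^(n-j) * y^j) + x^(n-i)*y^i
        < x^(n-i+1)*y^i + x^(n-i)*y^i := by omega
      _ ≤ x^(n-(i+1)+1)*y^(i+1) := hcomb

/-- base case: a number `< F` with `m = 0` has the pattern. -/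
lemma pat_of_lt_F (n x y : ℕ) (hx : 0 < x) (hxy : x < y) (c : ℕ → ℕ)
    (hc : ∀ k, k ≤ n → c k < y)
    (hlt : (∑ k ∈ Finset.range (n+1), c k * x^(n-k) * y^k) < Fval n x y) :
    PatN n x c := by
  classical
  by_contra hnp
  unfold PatN at hnp
  push_neg at hnp
  by_cases hzero : ∃ k, k ≤ n ∧ c k = 0
  · obtain ⟨kz, hkz, hckz⟩ := hzero
    set ks := Nat.findGreatest (fun k => c k = 0) n with hksdef
    have hks0 : c ks = 0 := Nat.findGreatest_spec (P := fun k => c k = 0) hkz hckz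
    have hksn : ks ≤ n := Nat.findGreatest_le n
    obtain ⟨i0, hi1, hi2, hi3⟩ := hnp ks hksn hks0
    have hi3' : x + 1 ≤ c i0 := by
      by_cases h : c i0 = 0
      · exfalso
        have := Nat.le_findGreatest (P := fun k => c k = 0) hi2 h
        omega
      · have := hi3 (by omega)
        omega
    -- for j in (ks, n], c j ≥ 1
    have hpos : ∀ j, ks < j → j ≤ n → 1 ≤ c j := by
      intro j h1 h2
      by_contra h
      have := Nat.le_findGreatest (P := fun k => c k = 0) h2 (show c j = 0 by omega)
      omega
    -- now derive F ≤ Σ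
    have key : Fval n x y ≤ ∑ k ∈ Finset.range (n+1), c k * x^(n-k) * y^k := by
      have hsplit : Finset.range (n+1) = Finset.range (ks+1) ∪ Finset.Ico (ks+1) (n+1) := by
        rw [Finset.range_eq_Ico, Finset.range_eq_Ico]
        exact (Finset.Ico_union_Ico_eq_Ico (by omega : 0 ≤ ks+1) (by omega : ks+1 ≤ n+1)).symm
      have hdisj : Disjoint (Finset.range (ks+1)) (Finset.Ico (ks+1) (n+1)) := by
        simp [Finset.disjoint_left, Finset.mem_range, Finset.mem_Ico]
        intro a ha; omega
      have hF : Fval n x y = (∑ k ∈ Finset.range (ks+1), x^(n-k) * y^k)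
          + ∑ k ∈ Finset.Ico (ks+1) (n+1), x^(n-k) * y^k := by
        unfold Fval
        rw [hsplit, Finset.sum_union hdisj]
      have hS : (∑ k ∈ Finset.Ico (ks+1) (n+1), c k * x^(n-k) * y^k)
          ≤ ∑ k ∈ Finset.range (n+1), c k * x^(n-k) * y^k := by
        apply Finset.sum_le_sum_of_subset
        intro a ha
        simp only [Finset.mem_Ico] at ha
        simp only [Finset.mem_range]
        omega
      have hmem : i0 ∈ Finset.Ico (ks+1) (n+1) := by
        simp only [Finset.mem_Ico]; omega
      have hS2 : (∑ k ∈ Finset.Ico (ks+1) (n+1), x^(n-k) * y^k) + x * (x^(n-i0) * y^i0)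
          ≤ ∑ k ∈ Finset.Ico (ks+1) (n+1), c k * x^(n-k) * y^k := by
        rw [← Finset.sum_erase_add _ _ hmem, ← Finset.sum_erase_add _ _ hmem]
        have t1 : (∑ k ∈ (Finset.Ico (ks+1) (n+1)).erase i0, x^(n-k) * y^k)
            ≤ ∑ k ∈ (Finset.Ico (ks+1) (n+1)).erase i0, c k * x^(n-k) * y^k := by
          apply Finset.sum_le_sum
          intro k hk
          simp only [Finset.mem_erase, Finset.mem_Ico] at hk
          have h1 := hpos k (by omega) (by omega)
          have h2 : 1 * (x^(n-k)*y^k) ≤ c k * (x^(n-k)*y^k) := Nat.mul_le_mul_right _ h1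
          simpa [one_mul, mul_assoc] using h2
        have t2 : x^(n-i0) * y^i0 + x * (x^(n-i0) * y^i0) ≤ c i0 * (x^(n-i0) * y^i0) := by
          have h1 : (1 + x) * (x^(n-i0) * y^i0) ≤ c i0 * (x^(n-i0) * y^i0) :=
            Nat.mul_le_mul_right _ (by omega)
          have h2 : (1 + x) * (x^(n-i0) * y^i0)
              = x^(n-i0) * y^i0 + x * (x^(n-i0) * y^i0) := by ring
          linarith [h1, h2]
        have t3 : c i0 * x^(n-i0) * y^i0 = c i0 * (x^(n-i0) * y^i0) := by ring
        omega
      have hS3 : (∑ k ∈ Finset.range (ks+1), x^(n-k) * y^k) ≤ x * (x^(n-i0) * y^i0) := by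
        have h1 : (∑ k ∈ Finset.range (ks+1), x^(n-k) * y^k)
            ≤ ∑ k ∈ Finset.range i0, x^(n-k) * y^k := by
          apply Finset.sum_le_sum_of_subset
          intro a ha
          simp only [Finset.mem_range] at *
          omega
        have h2 := wt_sum_lt n x y hx hxy i0 (by omega)
        have h3 : x^(n-i0+1) * y^i0 = x * (x^(n-i0) * y^i0) := by rw [pow_succ]; ring
        omega
      omega
    omega
  · -- no zero digit at all: all ≥ 1, so Σ ≥ F
    push_neg at hzero
    have key : Fval n x y ≤ ∑ k ∈ Finset.range (n+1), c k * x^(n-k) * y^k := by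
      unfold Fval
      apply Finset.sum_le_sum
      intro k hk
      simp only [Finset.mem_range] at hk
      have h1 : 1 ≤ c k := by
        have := hzero k (by omega)
        omega
      have h2 : 1 * (x^(n-k)*y^k) ≤ c k * (x^(n-k)*y^k) := Nat.mul_le_mul_right _ h1
      simpa [one_mul, mul_assoc] using h2
    omega


lemma m_nonpos (n x y : ℕ) (hx : 0 < x) (hxy : x < y) {w : ℤ} {c : ℕ → ℕ} {m : ℤ}
    (h : SD n x y w c m) (hw : w < (Fval n x y : ℤ)) : m ≤ 0 := by
  obtain ⟨hb, he⟩ := h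
  have hsum : (0:ℤ) ≤ ∑ k ∈ range (n+1), (c k : ℤ) * (x:ℤ)^(n-k) * (y:ℤ)^k := by
    apply Finset.sum_nonneg
    intro k _
    positivity
  have hFy : (Fval n x y : ℤ) ≤ (y:ℤ)^(n+1) := by
    have := Fval_add_pow_le n x y hxy
    have h2 : Fval n x y ≤ y^(n+1) := by omega
    exact_mod_cast h2
  by_contra hcon
  push_neg at hcon
  have h1 : (1:ℤ) ≤ m := hcon
  have hyp : (0:ℤ) ≤ (y:ℤ)^(n+1) := by positivity
  have h2 : (y:ℤ)^(n+1) ≤ m * (y:ℤ)^(n+1) := le_mul_of_one_le_left hyp h1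
  linarith

lemma m_nonneg_of_big (n x y : ℕ) (hy : 0 < y) {w : ℤ} {c : ℕ → ℕ} {m : ℤ}
    (h : SD n x y w c m) (hw : ((y:ℤ) - 1) * (Fval n x y : ℤ) ≤ w) : 0 ≤ m := by
  obtain ⟨hb, he⟩ := h
  have hsum : (∑ k ∈ range (n+1), (c k : ℤ) * (x:ℤ)^(n-k) * (y:ℤ)^k)
      ≤ ((y:ℤ) - 1) * (Fval n x y : ℤ) := by
    have hF : (Fval n x y : ℤ) = ∑ k ∈ range (n+1), (x:ℤ)^(n-k) * (y:ℤ)^k := by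
      unfold Fval; push_cast; rfl
    rw [hF, Finset.mul_sum]
    apply Finset.sum_le_sum
    intro k hk
    rw [Finset.mem_range] at hk
    have h1 : (c k : ℤ) ≤ (y:ℤ) - 1 := by
      have := hb k (by omega)
      have : (c k : ℤ) < (y:ℤ) := by exact_mod_cast this
      linarith
    have h2 : (0:ℤ) ≤ (x:ℤ)^(n-k) * (y:ℤ)^k := by positivity
    calc (c k : ℤ) * (x:ℤ)^(n-k) * (y:ℤ)^k = (c k : ℤ) * ((x:ℤ)^(n-k) * (y:ℤ)^k) := by ring
      _ ≤ ((y:ℤ) - 1) * ((x:ℤ)^(n-k) * (y:ℤ)^k) := mul_le_mul_of_nonneg_right h1 h2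
  by_contra hcon
  push_neg at hcon
  have h1 : m ≤ -1 := by omega
  have hyp : (0:ℤ) < (y:ℤ)^(n+1) := by
    have : (0:ℤ) < (y:ℤ) := by exact_mod_cast hy
    positivity
  have h2 : m * (y:ℤ)^(n+1) ≤ -1 * (y:ℤ)^(n+1) := mul_le_mul_of_nonneg_right h1 (le_of_lt hyp)
  linarith

/-! ### bridges -/

lemma SD_of_isStable (n x y : ℕ) {w : ℤ} {c : Fin (n+1) → ℕ} {m : ℤ}
    (h : IsStableDecomp n x y w c m) :
    SD n x y w (fun i => if h : i < n+1 then c ⟨i, h⟩ else 0) m := by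
  obtain ⟨hb, he⟩ := h
  constructor
  · intro k hk
    beta_reduce
    rw [dif_pos (by omega : k < n+1)]
    exact hb _
  · rw [he]
    congr 1
    rw [← Fin.sum_univ_eq_sum_range
      (fun i => ((if h : i < n+1 then c ⟨i, h⟩ else 0 : ℕ) : ℤ) * (x:ℤ)^(n-i) * (y:ℤ)^i) (n+1)]
    apply Finset.sum_congr rfl
    intro k _
    rw [dif_pos k.isLt]

lemma isStable_of_SD (n x y : ℕ) {w : ℤ} {c : ℕ → ℕ} {m : ℤ} (h : SD n x y w c m) :
    IsStableDecomp n x y w (fun k : Fin (n+1) => c k) m := by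
  obtain ⟨hb, he⟩ := h
  refine ⟨fun k => hb k (by omega), ?_⟩
  rw [he]
  congr 1
  exact (Fin.sum_univ_eq_sum_range
    (fun i => ((c i : ℤ)) * (x:ℤ)^(n-i) * (y:ℤ)^i) (n+1)).symm

lemma G_to_SD (n x y : ℕ) (hx : 0 < x) (hxy : x < y) {w : ℤ} (hG : w ∈ Gset n x y) :
    ∃ cb : ℕ → ℕ, SD n x y w cb 0 ∧ PatN n x cb := by
  obtain ⟨t, ⟨hlast, k', hpre, hzero, htail⟩, hval⟩ := hG
  refine ⟨fun i => if h : i < n+1 then t (⟨i, by omega⟩ : Fin (n+2)) else 0, ⟨?_, ?_⟩, ?_⟩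
  · intro k hk
    beta_reduce
    rw [dif_pos (by omega : k < n+1)]
    rcases lt_trichotomy k (k' : ℕ) with h | h | h
    · exact hpre ⟨k, by omega⟩ h
    · have heq : (⟨k, by omega⟩ : Fin (n+2)) = k'.castSucc := by
        apply Fin.ext
        simpa using h
      rw [heq, hzero]
      omega
    · have := htail ⟨k, by omega⟩ h hk
      omega
  · rw [← hval]
    unfold tupleVal
    push_cast
    rw [← Fin.sum_univ_eq_sum_range
      (fun i => ((if h : i < n+1 then t (⟨i, by omega⟩ : Fin (n+2)) else 0 : ℕ) : ℤ)
        * (x:ℤ)^(n-i) * (y:ℤ)^i) (n+1)]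
    rw [zero_mul, add_zero]
    apply Finset.sum_congr rfl
    intro k _
    rw [dif_pos k.isLt]
    have heq : (⟨(k:ℕ), by omega⟩ : Fin (n+2)) = k.castSucc := by
      apply Fin.ext; simp
    rw [heq]
  · refine ⟨(k' : ℕ), by omega, ?_, ?_⟩
    · beta_reduce
      rw [dif_pos (by omega : (k' : ℕ) < n+1)]
      have heq : (⟨(k' : ℕ), by omega⟩ : Fin (n+2)) = k'.castSucc := by
        apply Fin.ext
        simp
      rw [heq, hzero]
    · intro i h1 h2
      beta_reduce
      rw [dif_pos (by omega : i < n+1)]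
      exact htail ⟨i, by omega⟩ h1 h2

lemma SD_to_G (n x y : ℕ) {w : ℤ} {cb : ℕ → ℕ} (hSD : SD n x y w cb 0)
    (hpat : PatN n x cb) : w ∈ Gset n x y := by
  obtain ⟨hb, he⟩ := hSD
  obtain ⟨kp, hkp, hkp0, hkpt⟩ := hpat
  refine ⟨fun i : Fin (n+2) => if h : (i:ℕ) < n+1 then cb (i:ℕ) else 0,
    ⟨?_, ⟨⟨kp, by omega⟩, ?_, ?_, ?_⟩⟩, ?_⟩
  · beta_reduce
    rw [dif_neg]
    simp
  · intro i hi
    simp only at hi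
    beta_reduce
    rw [dif_pos (by omega : (i:ℕ) < n+1)]
    exact hb _ (by omega)
  · have hcs : ((Fin.castSucc (⟨kp, by omega⟩ : Fin (n+1))) : ℕ) = kp := rfl
    beta_reduce
    rw [dif_pos]
    · rw [hcs]; exact hkp0
    · rw [hcs]; omega
  · intro i h1 h2
    simp only at h1 h2
    beta_reduce
    rw [dif_pos (by omega : (i:ℕ) < n+1)]
    exact hkpt (i:ℕ) h1 h2
  · unfold tupleVal
    push_cast
    rw [he, zero_mul, add_zero]
    rw [← Fin.sum_univ_eq_sum_range
      (fun i => ((cb i : ℤ)) * (x:ℤ)^(n-i) * (y:ℤ)^i) (n+1)]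
    apply Finset.sum_congr rfl
    intro k _
    have hlt : ((k.castSucc : Fin (n+2)) : ℕ) < n+1 := by
      rw [Fin.coe_castSucc]; exact k.isLt
    rw [dif_pos hlt]
    simp

end S9

/-- For every `v ∈ {0,…,F−1}` there is exactly one natural number
`k` such that `v + k·F ∈ G`; moreover this `k` is the smallest natural number
with `m(v + k·F) ≥ 0`. -/
theorem exists_unique_shift_mem_G
    (n x y : ℕ) (hn : 1 ≤ n) (hx : 0 < x) (hxy : x < y) (hcop : Nat.Coprime x y)
    (v : ℕ) (hv : v < Fval n x y) :
    (∃! k : ℕ, (v : ℤ) + (k : ℤ) * (Fval n x y : ℤ) ∈ Gset n x y) ∧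
    (∀ k : ℕ, (v : ℤ) + (k : ℤ) * (Fval n x y : ℤ) ∈ Gset n x y →
      IsLeast {j : ℕ | ∃ (c : Fin (n + 1) → ℕ) (m : ℤ),
        IsStableDecomp n x y ((v : ℤ) + (j : ℤ) * (Fval n x y : ℤ)) c m ∧ 0 ≤ m} k) := by
  classical
  have hy : 0 < y := lt_trans hx hxy
  set W : ℕ → ℤ := fun j => (v:ℤ) + (j:ℤ) * (Fval n x y : ℤ) with hWdef
  have hex : ∀ j : ℕ, ∃ p : (ℕ → ℕ) × ℤ, S9.SD n x y (W j) p.1 p.2 := by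
    intro j
    obtain ⟨c, m, h⟩ := S9.exists_SD n x y hy hcop (W j)
    exact ⟨(c, m), h⟩
  choose P hP using hex
  set C : ℕ → ℕ → ℕ := fun j => (P j).1 with hCdef
  set M : ℕ → ℤ := fun j => (P j).2 with hMdef
  have hSD : ∀ j, S9.SD n x y (W j) (C j) (M j) := hP
  have hstep : ∀ j, S9.SD n x y (W (j+1))
      (S9.newDig x y (C j)) (M j + S9.carry x y (C j) (n+1)) := by
    intro j
    have h := S9.SD_step n x y hxy (hSD j)
    have heq : W (j+1) = W j + (Fval n x y : ℤ) := by
      simp only [hWdef]; push_cast; ring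
    rwa [← heq] at h
  have huniq : ∀ j, (∀ k, k ≤ n → C (j+1) k = S9.newDig x y (C j) k) ∧
      M (j+1) = M j + S9.carry x y (C j) (n+1) :=
    fun j => S9.SD_unique n x y hy hcop (hSD (j+1)) (hstep j)
  have hmono1 : ∀ j, M j ≤ M (j+1) ∧ M (j+1) ≤ M j + 1 := by
    intro j
    have h2 := (huniq j).2
    have h3 := S9.carry_le_one x y (C j) (n+1)
    have h4 : (0:ℤ) ≤ (S9.carry x y (C j) (n+1) : ℤ) := Int.natCast_nonneg _
    have h5 : (S9.carry x y (C j) (n+1) : ℤ) ≤ 1 := by exact_mod_cast h3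
    constructor <;> linarith [h2]
  have hmono : ∀ a b : ℕ, a ≤ b → M a ≤ M b := by
    intro a b h
    induction b, h using Nat.le_induction with
    | base => exact le_rfl
    | succ b hb ih => exact le_trans ih (hmono1 b).1
  have hpatiff : ∀ j, S9.PatN n x (C (j+1)) ↔ S9.carry x y (C j) (n+1) = 1 := by
    intro j
    have hcong := (huniq j).1
    constructor
    · intro hp
      by_contra hne
      have h0 : S9.carry x y (C j) (n+1) = 0 := by
        have := S9.carry_le_one x y (C j) (n+1); omega
      exact S9.not_pat_of_no_carry n x y (C j) (hSD j).1 h0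
        (S9.patN_congr (fun k hk => hcong k hk) hp)
    · intro h1
      have h := S9.pat_of_carry n x y (C j) (hSD j).1 h1
      exact S9.patN_congr (fun k hk => (hcong k hk).symm) h
  have hW0 : W 0 = (v:ℤ) := by simp [hWdef]
  have hM0 : M 0 ≤ 0 := by
    apply S9.m_nonpos n x y hx hxy (hSD 0)
    rw [hW0]
    exact_mod_cast hv
  have hbig : ∃ j, 0 ≤ M j := by
    refine ⟨y, S9.m_nonneg_of_big n x y hy (hSD y) ?_⟩
    have hFnn : (0:ℤ) ≤ (Fval n x y : ℤ) := Int.natCast_nonneg _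
    have hvnn : (0:ℤ) ≤ (v:ℤ) := Int.natCast_nonneg _
    simp only [hWdef]
    nlinarith [hFnn, hvnn]
  have hj0spec := Nat.find_spec hbig
  set j0 := Nat.find hbig with hj0def
  have hj0min : ∀ j, j < j0 → M j < 0 := fun j hj => lt_of_not_ge (Nat.find_min hbig hj)
  have hMj0 : M j0 = 0 := by
    rcases Nat.eq_zero_or_pos j0 with h0 | h0
    · rw [h0] at hj0spec ⊢
      omega
    · have h1 : M (j0 - 1) < 0 := hj0min _ (by omega)
      have h2 := (hmono1 (j0-1)).2
      rw [show j0 - 1 + 1 = j0 by omega] at h2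
      omega
  have hpatj0 : S9.PatN n x (C j0) := by
    rcases Nat.eq_zero_or_pos j0 with h0 | h0
    · -- base case
      have hSD0 : S9.SD n x y (W 0) (C 0) 0 := by
        have := hSD 0
        rwa [show M 0 = 0 by rw [← h0]; exact hMj0] at this
      obtain ⟨hb0, he0⟩ := hSD0
      have hnat : (v:ℤ) = ((∑ k ∈ Finset.range (n+1), C 0 k * x^(n-k) * y^k : ℕ) : ℤ) := by
        rw [← hW0, he0]
        push_cast
        ring
      have hvnat : v = ∑ k ∈ Finset.range (n+1), C 0 k * x^(n-k) * y^k := by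
        exact_mod_cast hnat
      rw [h0]
      exact S9.pat_of_lt_F n x y hx hxy (C 0) hb0 (by omega)
    · have hj1 : j0 - 1 + 1 = j0 := by omega
      have h2 := (huniq (j0-1)).2
      rw [hj1] at h2
      have h1 : M (j0-1) < 0 := hj0min _ (by omega)
      have h3 := S9.carry_le_one x y (C (j0-1)) (n+1)
      have hcar : S9.carry x y (C (j0-1)) (n+1) = 1 := by omega
      have h := S9.pat_of_carry n x y (C (j0-1)) (hSD (j0-1)).1 hcar
      have hcong := (huniq (j0-1)).1
      rw [hj1] at hcong
      exact S9.patN_congr (fun k hk => (hcong k hk).symm) h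
  have hSDj0 : S9.SD n x y (W j0) (C j0) 0 := by
    have := hSD j0
    rwa [hMj0] at this
  have hGj0 : W j0 ∈ Gset n x y := S9.SD_to_G n x y hSDj0 hpatj0
  have huniqG : ∀ k, W k ∈ Gset n x y → k = j0 := by
    intro k hk
    obtain ⟨cb, hSDb, hpb⟩ := S9.G_to_SD n x y hx hxy hk
    obtain ⟨hcongb, hMb⟩ := S9.SD_unique n x y hy hcop (hSD k) hSDb
    have hpatk : S9.PatN n x (C k) := S9.patN_congr (fun i hi => (hcongb i hi).symm) hpb
    have hge : j0 ≤ k := Nat.find_min' hbig (by rw [hMb])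
    rcases eq_or_lt_of_le hge with h | h
    · exact h.symm
    · exfalso
      have hk1 : k - 1 + 1 = k := by omega
      have hpat' : S9.PatN n x (C (k-1+1)) := by rw [hk1]; exact hpatk
      have hcar := (hpatiff (k-1)).1 hpat'
      have h2 := (huniq (k-1)).2
      rw [hk1, hcar] at h2
      have h4 : M j0 ≤ M (k-1) := hmono j0 (k-1) (by omega)
      rw [hMb] at h2
      rw [hMj0] at h4
      push_cast at h2
      omega
  constructor
  · exact ⟨j0, hGj0, fun k hk => huniqG k hk⟩
  · intro k hk
    have hkj0 : k = j0 := huniqG k hk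
    subst hkj0
    constructor
    · refine ⟨fun i : Fin (n+1) => C j0 i, 0, ?_, le_refl 0⟩
      exact S9.isStable_of_SD n x y hSDj0
    · intro j hj
      obtain ⟨cf, mf, hdec, hmf⟩ := hj
      have hSDf := S9.SD_of_isStable n x y hdec
      have hMf := (S9.SD_unique n x y hy hcop (hSD j) hSDf).2
      exact Nat.find_min' hbig (by rw [hMf]; exact hmf)
end
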